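/- arXiv:1612.08318 — 10 statements merged into one kernel-verified Lean document; each statement's English description precedes it below -/
import Mathlib

section
/- Let s ≥ 1, let β_j = a_j + i·b_j (j = 1, …, s) be complex numbers with a_j, b_j ∈ ℝ, and let u₁, …, u_s be real numbers. Then the real binary quadratic S(x,z) = Σ_{j=1}^s 2u_j²(x − β_j z)(x − conj(β_j) z) has discriminant Δ(S) = −16 · ( Σ_{1 ≤ i < j ≤ s} u_i² u_j² [ (a_i − a_j)² + b_i² + b_j² ] + Σ_{j=1}^s u_j⁴ b_j² ). -/
open Complex

lemma sum_split' {s : ℕ} (f : Fin s → Fin s → ℝ) :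
    ∑ i, ∑ j, f i j = (∑ i, f i i) + ∑ i, ∑ j ∈ Finset.Ioi i, (f i j + f j i) := by
  have hrow : ∀ i : Fin s, ∑ j, f i j
      = f i i + (∑ j ∈ Finset.Ioi i, f i j + ∑ j ∈ Finset.Iio i, f i j) := by
    intro i
    have huniv : (Finset.univ : Finset (Fin s)) = {i} ∪ (Finset.Ioi i ∪ Finset.Iio i) := by
      ext j
      simp only [Finset.mem_univ, Finset.mem_union, Finset.mem_singleton, Finset.mem_Ioi,
        Finset.mem_Iio, true_iff]
      rcases lt_trichotomy j i with h | h | h <;> tauto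
    rw [huniv, Finset.sum_union, Finset.sum_union, Finset.sum_singleton]
    · rw [Finset.disjoint_left]; intro x hx hy
      simp only [Finset.mem_Ioi, Finset.mem_Iio] at hx hy; exact absurd (hx.trans hy) (lt_irrefl i)
    · rw [Finset.disjoint_left]; intro x hx hy
      simp only [Finset.mem_singleton] at hx
      simp only [Finset.mem_union, Finset.mem_Ioi, Finset.mem_Iio] at hy
      subst hx; exact absurd hy (by simp)
  have hswap : ∑ i, ∑ j ∈ Finset.Iio i, f i j = ∑ j : Fin s, ∑ i ∈ Finset.Ioi j, f i j :=
    Finset.sum_comm' (by intro x y; simp [and_comm])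
  calc ∑ i, ∑ j, f i j
      = ∑ i, (f i i + (∑ j ∈ Finset.Ioi i, f i j + ∑ j ∈ Finset.Iio i, f i j)) :=
        Finset.sum_congr rfl fun i _ => hrow i
    _ = (∑ i, f i i) + ((∑ i, ∑ j ∈ Finset.Ioi i, f i j) + ∑ i, ∑ j ∈ Finset.Iio i, f i j) := by
        rw [Finset.sum_add_distrib, Finset.sum_add_distrib]
    _ = (∑ i, f i i) + ∑ i, ∑ j ∈ Finset.Ioi i, (f i j + f j i) := by
        rw [hswap, ← Finset.sum_add_distrib]
        congr 1
        exact Finset.sum_congr rfl fun i _ => (Finset.sum_add_distrib).symm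

lemma key_alg' {s : ℕ} (p a b : Fin s → ℝ) :
    (∑ j, p j * a j) ^ 2 - (∑ j, p j) * (∑ j, p j * (a j ^ 2 + b j ^ 2))
      = -((∑ i, ∑ j ∈ Finset.Ioi i, p i * p j * ((a i - a j) ^ 2 + (b i ^ 2 + b j ^ 2)))
          + ∑ j, p j ^ 2 * b j ^ 2) := by
  have h1 : (∑ j, p j * a j) ^ 2 - (∑ j, p j) * (∑ j, p j * (a j ^ 2 + b j ^ 2))
      = ∑ i, ∑ j, (p i * p j * (a i * a j - a j ^ 2 - b j ^ 2)) := by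
    rw [sq, Finset.sum_mul_sum, Finset.sum_mul_sum, ← Finset.sum_sub_distrib]
    exact Finset.sum_congr rfl fun i _ => by
      rw [← Finset.sum_sub_distrib]; exact Finset.sum_congr rfl fun j _ => by ring
  rw [h1, sum_split']
  have hd : ∑ i : Fin s, p i * p i * (a i * a i - a i ^ 2 - b i ^ 2)
      = ∑ i : Fin s, -(p i ^ 2 * b i ^ 2) :=
    Finset.sum_congr rfl fun i _ => by ring
  rw [hd, Finset.sum_neg_distrib]
  have ho : ∀ i : Fin s, ∑ j ∈ Finset.Ioi i,
      ((p i * p j * (a i * a j - a j ^ 2 - b j ^ 2))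
        + (p j * p i * (a j * a i - a i ^ 2 - b i ^ 2)))
      = ∑ j ∈ Finset.Ioi i, -(p i * p j * ((a i - a j) ^ 2 + (b i ^ 2 + b j ^ 2))) := by
    intro i; exact Finset.sum_congr rfl fun j _ => by ring
  rw [Finset.sum_congr rfl fun i _ => ho i]
  simp [Finset.sum_neg_distrib]

/-- For `s ≥ 1`, complex numbers `β_j = a_j + i b_j` and real numbers
`u₁, …, u_s`, the real binary quadratic
`S(x,z) = Σ_j 2 u_j² (x - β_j z)(x - conj β_j z)`, written as `A x² + B x z + C z²`, has
discriminant `B² - 4AC = -16 ( Σ_{i<j} u_i² u_j² [(a_i - a_j)² + b_i² + b_j²] + Σ_j u_j⁴ b_j² )`. -/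
theorem stmt1 (s : ℕ) (hs : 1 ≤ s) (a b u : Fin s → ℝ) (A B C : ℝ)
    (hS : ∀ x z : ℝ,
      ∑ j : Fin s, 2 * (u j : ℂ) ^ 2 * ((x : ℂ) - ((a j : ℂ) + (b j : ℂ) * Complex.I) * (z : ℂ))
          * ((x : ℂ) - (starRingEnd ℂ) ((a j : ℂ) + (b j : ℂ) * Complex.I) * (z : ℂ))
        = (A : ℂ) * (x : ℂ) ^ 2 + (B : ℂ) * (x : ℂ) * (z : ℂ) + (C : ℂ) * (z : ℂ) ^ 2) :
    B ^ 2 - 4 * A * C =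
      -16 * ((∑ i : Fin s, ∑ j ∈ Finset.Ioi i,
          u i ^ 2 * u j ^ 2 * ((a i - a j) ^ 2 + (b i ^ 2 + b j ^ 2)))
        + ∑ j : Fin s, u j ^ 4 * b j ^ 2) := by
  have key : ∀ x z : ℝ, ∀ j : Fin s,
      2 * (u j : ℂ) ^ 2 * ((x : ℂ) - ((a j : ℂ) + (b j : ℂ) * Complex.I) * (z : ℂ))
          * ((x : ℂ) - (starRingEnd ℂ) ((a j : ℂ) + (b j : ℂ) * Complex.I) * (z : ℂ))
        = ((2 * u j ^ 2 * (x ^ 2 - 2 * a j * x * z + (a j ^ 2 + b j ^ 2) * z ^ 2) : ℝ) : ℂ) := by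
    intro x z j
    simp only [map_add, map_mul, Complex.conj_ofReal, Complex.conj_I]
    push_cast
    ring_nf
    rw [Complex.I_sq]
    ring
  have hR : ∀ x z : ℝ, ∑ j, 2 * u j ^ 2 * (x ^ 2 - 2 * a j * x * z + (a j ^ 2 + b j ^ 2) * z ^ 2)
      = A * x ^ 2 + B * x * z + C * z ^ 2 := by
    intro x z
    have h := hS x z
    rw [Finset.sum_congr rfl (fun j _ => key x z j), ← Complex.ofReal_sum] at h
    exact_mod_cast h
  have hC := hR 0 1
  have hB := hR 1 1
  have hA := hR 1 0
  simp at hC hB hA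
  have eA : A = 2 * ∑ j, u j ^ 2 := by
    rw [← hA, Finset.mul_sum]
  have eC : C = 2 * ∑ j, u j ^ 2 * (a j ^ 2 + b j ^ 2) := by
    rw [← hC, Finset.mul_sum]
    exact Finset.sum_congr rfl fun j _ => by ring
  have eB : B = -(4 * ∑ j, u j ^ 2 * a j) := by
    have h4 : B = (A + B + C) - A - C := by ring
    rw [h4, ← hB, ← hA, ← hC, Finset.mul_sum, ← Finset.sum_neg_distrib,
      ← Finset.sum_sub_distrib, ← Finset.sum_sub_distrib]
    exact Finset.sum_congr rfl fun j _ => by ring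
  have hk := key_alg' (fun j => u j ^ 2) a b
  have e4 : ∑ j : Fin s, ((fun j => u j ^ 2) j) ^ 2 * b j ^ 2 = ∑ j : Fin s, u j ^ 4 * b j ^ 2 :=
    Finset.sum_congr rfl fun j _ => by ring
  simp only at e4
  rw [eA, eB, eC]
  linear_combination (16 : ℝ) * hk - 16 * e4
end

section
/- Let r, s ≥ 1, let α₁, …, α_r and t₁, …, t_r, u₁, …, u_s be real numbers, and let β_j = a_j + i·b_j (j = 1, …, s) be complex numbers with a_j, b_j ∈ ℝ. Set T(x,z) = Σ_{i=1}^r t_i²(x − α_i z)² and S(x,z) = Σ_{j=1}^s 2u_j²(x − β_j z)(x − conj(β_j) z), and let Q = T + S. Then the discriminant of Q satisfies Δ(Q) = Δ(T) + Δ(S) − 8 · Σ_{i=1}^r Σ_{j=1}^s t_i² u_j² ( (α_i − a_j)² + b_j² ). -/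
open Complex

lemma stmt2_key (u a b x z : ℝ) :
    2 * (u : ℂ) ^ 2 * ((x : ℂ) - ((a : ℂ) + (b : ℂ) * Complex.I) * (z : ℂ))
      * ((x : ℂ) - (starRingEnd ℂ) ((a : ℂ) + (b : ℂ) * Complex.I) * (z : ℂ))
    = ((2 * u ^ 2 * ((x - a * z) ^ 2 + b ^ 2 * z ^ 2) : ℝ) : ℂ) := by
  simp only [map_add, Complex.conj_ofReal, map_mul, Complex.conj_I]
  push_cast
  linear_combination (-2 * (u : ℂ) ^ 2 * (b : ℂ) ^ 2 * (z : ℂ) ^ 2) * Complex.I_sq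

/-- With `T(x,z) = Σ_i t_i²(x - α_i z)²` and
`S(x,z) = Σ_j 2u_j²(x - β_j z)(x - conj β_j z)` (where `β_j = a_j + i b_j`), and `Q = T + S`,
the discriminants satisfy
`Δ(Q) = Δ(T) + Δ(S) - 8 Σ_i Σ_j t_i² u_j² ((α_i - a_j)² + b_j²)`. -/
theorem stmt2 (r s : ℕ) (hr : 1 ≤ r) (hs : 1 ≤ s)
    (α t : Fin r → ℝ) (a b u : Fin s → ℝ)
    (AT BT CT AS BS CS AQ BQ CQ : ℝ)
    (hT : ∀ x z : ℝ,
      ∑ i : Fin r, t i ^ 2 * (x - α i * z) ^ 2 = AT * x ^ 2 + BT * x * z + CT * z ^ 2)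
    (hS : ∀ x z : ℝ,
      ∑ j : Fin s, 2 * (u j : ℂ) ^ 2 * ((x : ℂ) - ((a j : ℂ) + (b j : ℂ) * Complex.I) * (z : ℂ))
          * ((x : ℂ) - (starRingEnd ℂ) ((a j : ℂ) + (b j : ℂ) * Complex.I) * (z : ℂ))
        = (AS : ℂ) * (x : ℂ) ^ 2 + (BS : ℂ) * (x : ℂ) * (z : ℂ) + (CS : ℂ) * (z : ℂ) ^ 2)
    (hQ : ∀ x z : ℝ,
      (∑ i : Fin r, (t i : ℂ) ^ 2 * ((x : ℂ) - (α i : ℂ) * (z : ℂ)) ^ 2)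
        + ∑ j : Fin s, 2 * (u j : ℂ) ^ 2
            * ((x : ℂ) - ((a j : ℂ) + (b j : ℂ) * Complex.I) * (z : ℂ))
            * ((x : ℂ) - (starRingEnd ℂ) ((a j : ℂ) + (b j : ℂ) * Complex.I) * (z : ℂ))
        = (AQ : ℂ) * (x : ℂ) ^ 2 + (BQ : ℂ) * (x : ℂ) * (z : ℂ) + (CQ : ℂ) * (z : ℂ) ^ 2) :
    BQ ^ 2 - 4 * AQ * CQ =
      (BT ^ 2 - 4 * AT * CT) + (BS ^ 2 - 4 * AS * CS)
        - 8 * ∑ i : Fin r, ∑ j : Fin s, t i ^ 2 * u j ^ 2 * ((α i - a j) ^ 2 + b j ^ 2) := by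
  -- real versions of hS and hQ
  have hS' : ∀ x z : ℝ,
      ∑ j : Fin s, 2 * u j ^ 2 * ((x - a j * z) ^ 2 + b j ^ 2 * z ^ 2)
        = AS * x ^ 2 + BS * x * z + CS * z ^ 2 := by
    intro x z
    have h := hS x z
    rw [Finset.sum_congr rfl fun j _ => stmt2_key (u j) (a j) (b j) x z] at h
    exact_mod_cast h
  have hQ' : ∀ x z : ℝ,
      (∑ i : Fin r, t i ^ 2 * (x - α i * z) ^ 2)
        + ∑ j : Fin s, 2 * u j ^ 2 * ((x - a j * z) ^ 2 + b j ^ 2 * z ^ 2)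
        = AQ * x ^ 2 + BQ * x * z + CQ * z ^ 2 := by
    intro x z
    have h := hQ x z
    rw [Finset.sum_congr rfl fun j _ => stmt2_key (u j) (a j) (b j) x z] at h
    exact_mod_cast h
  -- atoms
  set P1 : ℝ := ∑ i : Fin r, t i ^ 2 with hP1
  set P2 : ℝ := ∑ i : Fin r, t i ^ 2 * α i with hP2
  set P3 : ℝ := ∑ i : Fin r, t i ^ 2 * α i ^ 2 with hP3
  set QA : ℝ := ∑ j : Fin s, u j ^ 2 with hQA
  set QB : ℝ := ∑ j : Fin s, u j ^ 2 * a j with hQB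
  set QC : ℝ := ∑ j : Fin s, u j ^ 2 * (a j ^ 2 + b j ^ 2) with hQC
  -- splitting lemmas
  have splitT : (∑ i : Fin r, t i ^ 2 * (1 - α i * 1) ^ 2) = P1 - 2 * P2 + P3 := by
    rw [hP1, hP2, hP3, Finset.mul_sum, ← Finset.sum_sub_distrib, ← Finset.sum_add_distrib]
    exact Finset.sum_congr rfl fun i _ => by ring
  have splitS1 : (∑ j : Fin s, 2 * u j ^ 2 * ((1 - a j * 0) ^ 2 + b j ^ 2 * 0 ^ 2))
      = 2 * QA := by
    rw [hQA, Finset.mul_sum]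
    exact Finset.sum_congr rfl fun j _ => by ring
  have splitS2 : (∑ j : Fin s, 2 * u j ^ 2 * ((0 - a j * 1) ^ 2 + b j ^ 2 * 1 ^ 2))
      = 2 * QC := by
    rw [hQC, Finset.mul_sum]
    exact Finset.sum_congr rfl fun j _ => by ring
  have splitS3 : (∑ j : Fin s, 2 * u j ^ 2 * ((1 - a j * 1) ^ 2 + b j ^ 2 * 1 ^ 2))
      = 2 * QA - 4 * QB + 2 * QC := by
    rw [hQA, hQB, hQC, Finset.mul_sum, Finset.mul_sum, Finset.mul_sum,
      ← Finset.sum_sub_distrib, ← Finset.sum_add_distrib]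
    exact Finset.sum_congr rfl fun j _ => by ring
  -- evaluate
  have eT1 := hT 1 0
  have eT2 := hT 0 1
  have eT3 := hT 1 1
  have eS1 := hS' 1 0
  have eS2 := hS' 0 1
  have eS3 := hS' 1 1
  have eQ1 := hQ' 1 0
  have eQ2 := hQ' 0 1
  have eQ3 := hQ' 1 1
  have nT1 : (∑ i : Fin r, t i ^ 2 * (1 - α i * 0) ^ 2) = P1 := by
    rw [hP1]; exact Finset.sum_congr rfl fun i _ => by ring
  have nT2 : (∑ i : Fin r, t i ^ 2 * (0 - α i * 1) ^ 2) = P3 := by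
    rw [hP3]; exact Finset.sum_congr rfl fun i _ => by ring
  rw [nT1] at eT1 eQ1
  rw [nT2] at eT2 eQ2
  rw [splitT] at eT3 eQ3
  rw [splitS1] at eS1 eQ1
  rw [splitS2] at eS2 eQ2
  rw [splitS3] at eS3 eQ3
  -- coefficient values
  have hAT : AT = P1 := by linarith [eT1]
  have hCT : CT = P3 := by linarith [eT2]
  have hBT : BT = -2 * P2 := by linarith [eT3, hAT, hCT]
  have hAS : AS = 2 * QA := by linarith [eS1]
  have hCS : CS = 2 * QC := by linarith [eS2]
  have hBS : BS = -4 * QB := by linarith [eS3, hAS, hCS]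
  have hAQ : AQ = P1 + 2 * QA := by linarith [eQ1]
  have hCQ : CQ = P3 + 2 * QC := by linarith [eQ2]
  have hBQ : BQ = -2 * P2 - 4 * QB := by linarith [eQ3, hAQ, hCQ]
  -- expand the double sum
  have hDS : (∑ i : Fin r, ∑ j : Fin s, t i ^ 2 * u j ^ 2 * ((α i - a j) ^ 2 + b j ^ 2))
      = P3 * QA - 2 * P2 * QB + P1 * QC := by
    have inner : ∀ i : Fin r,
        (∑ j : Fin s, t i ^ 2 * u j ^ 2 * ((α i - a j) ^ 2 + b j ^ 2))
          = t i ^ 2 * α i ^ 2 * QA - 2 * (t i ^ 2 * α i) * QB + t i ^ 2 * QC := by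
      intro i
      rw [hQA, hQB, hQC, Finset.mul_sum, Finset.mul_sum, Finset.mul_sum,
        ← Finset.sum_sub_distrib, ← Finset.sum_add_distrib]
      exact Finset.sum_congr rfl fun j _ => by ring
    rw [Finset.sum_congr rfl fun i _ => inner i, Finset.sum_add_distrib,
      Finset.sum_sub_distrib, ← Finset.sum_mul, ← Finset.sum_mul, ← Finset.sum_mul,
      ← Finset.mul_sum, hP1, hP2, hP3]
  rw [hDS, hAT, hBT, hCT, hAS, hBS, hCS, hAQ, hBQ, hCQ]
  ring
end

section
/- Let n = r + 2s ≥ 2, let α₁, …, α_r be pairwise distinct real numbers, let β_j = a_j + i·b_j (j = 1, …, s) be complex numbers with b_j ≠ 0, and let t₁, …, t_r, u₁, …, u_s be nonzero real numbers. Then the real binary quadratic Q(x,z) = Σ_{i=1}^r t_i²(x − α_i z)² + Σ_{j=1}^s 2u_j²(x − β_j z)(x − conj(β_j) z) is positive definite: Q(x,z) > 0 for every (x,z) ∈ ℝ² with (x,z) ≠ (0,0). -/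
open Complex

/-- For `n = r + 2s ≥ 2`, pairwise distinct real `α_i`, complex
`β_j = a_j + i b_j` with `b_j ≠ 0`, and nonzero real `t_i`, `u_j`, the real binary quadratic
`Q(x,z) = Σ_i t_i²(x - α_i z)² + Σ_j 2u_j²(x - β_j z)(x - conj β_j z)` is positive definite. -/
theorem stmt3 (r s : ℕ) (hn : 2 ≤ r + 2 * s)
    (α t : Fin r → ℝ) (a b u : Fin s → ℝ)
    (hα : Function.Injective α)
    (hb : ∀ j, b j ≠ 0) (ht : ∀ i, t i ≠ 0) (hu : ∀ j, u j ≠ 0)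
    (Q : ℝ → ℝ → ℝ)
    (hQ : ∀ x z : ℝ, (Q x z : ℂ) =
      (∑ i : Fin r, (t i : ℂ) ^ 2 * ((x : ℂ) - (α i : ℂ) * (z : ℂ)) ^ 2)
        + ∑ j : Fin s, 2 * (u j : ℂ) ^ 2
            * ((x : ℂ) - ((a j : ℂ) + (b j : ℂ) * Complex.I) * (z : ℂ))
            * ((x : ℂ) - (starRingEnd ℂ) ((a j : ℂ) + (b j : ℂ) * Complex.I) * (z : ℂ))) :
    ∀ x z : ℝ, (x, z) ≠ (0, 0) → 0 < Q x z := by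
  have key : ∀ x z : ℝ, Q x z =
      (∑ i : Fin r, (t i)^2 * (x - α i * z)^2)
        + ∑ j : Fin s, 2 * (u j)^2 * ((x - a j * z)^2 + (b j * z)^2) := by
    intro x z
    apply Complex.ofReal_injective
    rw [hQ x z]
    simp only [map_add, map_mul, Complex.conj_ofReal, Complex.conj_I]
    push_cast
    congr 1
    refine Finset.sum_congr rfl fun j _ => ?_
    linear_combination (-2)*(u j:ℂ)^2*(b j:ℂ)^2*(z:ℂ)^2 * Complex.I_sq
  intro x z hxz
  rw [key]
  have h1 : ∀ i ∈ Finset.univ, (0:ℝ) ≤ (t i)^2 * (x - α i * z)^2 := fun i _ => by positivity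
  have h2 : ∀ j ∈ Finset.univ, (0:ℝ) ≤ 2 * (u j)^2 * ((x - a j * z)^2 + (b j * z)^2) :=
    fun j _ => by positivity
  rcases eq_or_ne z 0 with hz | hz
  · subst hz
    have hx : x ≠ 0 := by simpa using hxz
    rcases Nat.eq_zero_or_pos r with hr | hr
    swap
    · have : 0 < ∑ i : Fin r, (t i)^2 * (x - α i * 0)^2 := by
        apply Finset.sum_pos' h1
        refine ⟨⟨0, hr⟩, Finset.mem_univ _, ?_⟩
        have h0 := ht ⟨0, hr⟩
        have he : x - α ⟨0, hr⟩ * 0 = x := by ring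
        rw [he]
        positivity
      have := Finset.sum_nonneg h2
      linarith
    · have hs : 0 < s := by omega
      have : 0 < ∑ j : Fin s, 2 * (u j)^2 * ((x - a j * 0)^2 + (b j * 0)^2) := by
        apply Finset.sum_pos' h2
        refine ⟨⟨0, hs⟩, Finset.mem_univ _, ?_⟩
        have h0 := hu ⟨0, hs⟩
        have he : (x - a ⟨0, hs⟩ * 0)^2 + (b ⟨0, hs⟩ * 0)^2 = x^2 := by ring
        rw [he]
        positivity
      have := Finset.sum_nonneg h1
      linarith
  · rcases Nat.eq_zero_or_pos s with hs | hs
    swap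
    · have : 0 < ∑ j : Fin s, 2 * (u j)^2 * ((x - a j * z)^2 + (b j * z)^2) := by
        apply Finset.sum_pos' h2
        refine ⟨⟨0, hs⟩, Finset.mem_univ _, ?_⟩
        have h := hu ⟨0, hs⟩
        have hb' := hb ⟨0, hs⟩
        have : 0 < (b ⟨0, hs⟩ * z)^2 := by positivity
        have hu2 : (0:ℝ) < u ⟨0, hs⟩ ^ 2 := by positivity
        nlinarith [mul_pos hu2 this, mul_nonneg hu2.le (sq_nonneg (x - a ⟨0, hs⟩ * z))]
      have := Finset.sum_nonneg h1
      linarith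
    · have hr : 2 ≤ r := by omega
      -- there are two distinct indices; at most one i with x = α i * z
      have : ∃ i : Fin r, x - α i * z ≠ 0 := by
        by_contra hcon
        push_neg at hcon
        have e0 := hcon ⟨0, by omega⟩
        have e1 := hcon ⟨1, by omega⟩
        have : α ⟨0, by omega⟩ = α ⟨1, by omega⟩ := by
          field_simp at e0 e1
          exact mul_right_cancel₀ hz (by rw [← sub_eq_zero]; linarith)
        have := hα this
        simp [Fin.ext_iff] at this
      obtain ⟨i, hi⟩ := this
      have : 0 < ∑ i : Fin r, (t i)^2 * (x - α i * z)^2 := by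
        apply Finset.sum_pos' h1
        exact ⟨i, Finset.mem_univ _, by have := ht i; positivity⟩
      have := Finset.sum_nonneg h2
      linarith
end

section
/- Let f(x,z) ∈ ℝ[x,z] be a binary form of degree n ≥ 3 with nonzero leading coefficient a₀ (the coefficient of xⁿ) and n distinct roots, having r distinct real roots α₁, …, α_r and s conjugate pairs of non-real roots β_j = a_j + i·b_j, conj(β_j) with b_j ≠ 0, where r + 2s = n. For (t,u) ∈ ℝ_{>0}^r × ℝ_{>0}^s let Q_{t,u}(x,z) = Σ_{i=1}^r t_i²(x − α_i z)² + Σ_{j=1}^s 2u_j²(x − β_j z)(x − conj(β_j) z), let 𝔇(t,u) be the discriminant of Q_{t,u}, and define θ₀(t,u) = a₀² · |𝔇(t,u)|^{n/2} / ( ∏_{i=1}^r t_i² · ∏_{j=1}^s u_j⁴ ). Then θ₀, restricted to the set { (t,u) ∈ ℝ_{>0}^r × ℝ_{>0}^s : ∏_{i=1}^r t_i² · ∏_{j=1}^s u_j⁴ = 1 }, attains a global minimum, and it does so at exactly one point of this set. -/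
open Complex

/-- The quantity `θ₀(t,u) = a₀² |𝔇(t,u)|^{n/2} / (∏ t_i² ∏ u_j⁴)`, where `𝔇(t,u) = B² - 4AC`
is the discriminant of the positive definite quadratic
`Q_{t,u}(x,z) = Σ_i t_i²(x - α_i z)² + Σ_j 2u_j²(x - β_j z)(x - conj β_j z)
             = A x² + B x z + C z²` (with `β_j = a_j + i b_j`). -/
noncomputable def theta0 (n r s : ℕ) (a₀ : ℝ) (α : Fin r → ℝ) (a b : Fin s → ℝ)
    (p : (Fin r → ℝ) × (Fin s → ℝ)) : ℝ :=
  let A : ℝ := (∑ i, p.1 i ^ 2) + ∑ j, 2 * p.2 j ^ 2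
  let B : ℝ := (-2) * (∑ i, p.1 i ^ 2 * α i) - 4 * ∑ j, p.2 j ^ 2 * a j
  let C : ℝ := (∑ i, p.1 i ^ 2 * α i ^ 2) + ∑ j, 2 * p.2 j ^ 2 * (a j ^ 2 + b j ^ 2)
  a₀ ^ 2 * |B ^ 2 - 4 * A * C| ^ ((n : ℝ) / 2) / ((∏ i, p.1 i ^ 2) * ∏ j, p.2 j ^ 4)

namespace Stmt4Aux

variable {r s : ℕ}

noncomputable def cv (p : (Fin r → ℝ) × (Fin s → ℝ)) : Fin r ⊕ Fin s → ℝ :=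
  Sum.elim (fun i => p.1 i ^ 2) (fun j => 2 * p.2 j ^ 2)

noncomputable def dl (b : Fin s → ℝ) : Fin r ⊕ Fin s → ℝ :=
  Sum.elim (fun _ => (0:ℝ)) (fun j => b j ^ 2)

noncomputable def ee (α : Fin r → ℝ) (a b : Fin s → ℝ) (k l : Fin r ⊕ Fin s) : ℝ :=
  (Sum.elim α a k - Sum.elim α a l) ^ 2 / 2 + (dl b k + dl b l) / 2

noncomputable def Gf (α : Fin r → ℝ) (a b : Fin s → ℝ) (p : (Fin r → ℝ) × (Fin s → ℝ)) : ℝ :=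
  ∑ k, ∑ l, cv p k * cv p l * ee α a b k l

def Cond (p : (Fin r → ℝ) × (Fin s → ℝ)) : Prop :=
  (∀ i, 0 < p.1 i) ∧ (∀ j, 0 < p.2 j) ∧ (∏ i, p.1 i ^ 2) * ∏ j, p.2 j ^ 4 = 1

lemma cv_nonneg (p : (Fin r → ℝ) × (Fin s → ℝ)) (k : Fin r ⊕ Fin s) : 0 ≤ cv p k := by
  cases k <;> simp [cv] <;> positivity

lemma cv_pos (p : (Fin r → ℝ) × (Fin s → ℝ)) (h1 : ∀ i, 0 < p.1 i) (h2 : ∀ j, 0 < p.2 j)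
    (k : Fin r ⊕ Fin s) : 0 < cv p k := by
  cases k with
  | inl i => simpa [cv] using pow_pos (h1 i) 2
  | inr j =>
    have := h2 j
    simp only [cv, Sum.elim_inr]; positivity

lemma dl_nonneg (b : Fin s → ℝ) (k : Fin r ⊕ Fin s) : 0 ≤ dl b k := by
  cases k <;> simp [dl] <;> positivity

lemma ee_nonneg (α : Fin r → ℝ) (a b : Fin s → ℝ) (k l : Fin r ⊕ Fin s) :
    0 ≤ ee α a b k l := by
  have := dl_nonneg (r := r) b k
  have := dl_nonneg (r := r) b l
  have := sq_nonneg (Sum.elim α a k - Sum.elim α a l)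
  unfold ee; positivity

lemma Gf_identity (α : Fin r → ℝ) (a b : Fin s → ℝ) (p : (Fin r → ℝ) × (Fin s → ℝ)) :
    Gf α a b p = (∑ k, cv p k) * (∑ k, cv p k * ((Sum.elim α a k) ^ 2 + dl b k))
      - (∑ k, cv p k * Sum.elim α a k) ^ 2 := by
  set c : Fin r ⊕ Fin s → ℝ := cv p with hc
  set h : Fin r ⊕ Fin s → ℝ := fun k => cv p k * ((Sum.elim α a k) ^ 2 + dl b k) with hh
  set m : Fin r ⊕ Fin s → ℝ := fun k => cv p k * Sum.elim α a k with hm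
  have expand : ∀ k l : Fin r ⊕ Fin s,
      cv p k * cv p l * ee α a b k l = (c k * h l + c l * h k) / 2 - m k * m l := by
    intro k l; simp only [hc, hh, hm]; unfold ee; ring
  calc Gf α a b p = ∑ k, ∑ l, ((c k * h l + c l * h k) / 2 - m k * m l) := by
        unfold Gf; exact Finset.sum_congr rfl fun k _ =>
          Finset.sum_congr rfl fun l _ => expand k l
    _ = ((∑ k, ∑ l, c k * h l) + (∑ k, ∑ l, c l * h k)) / 2 - ∑ k, ∑ l, m k * m l := by
        simp only [Finset.sum_sub_distrib, Finset.sum_add_distrib, ← Finset.sum_div]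
    _ = (∑ k, c k) * (∑ k, h k) - (∑ k, m k) ^ 2 := by
        have e1 : (∑ k, ∑ l, c k * h l) = (∑ k, c k) * (∑ k, h k) := by
          rw [Finset.sum_mul_sum]
        have e2 : (∑ k : Fin r ⊕ Fin s, ∑ l : Fin r ⊕ Fin s, c l * h k)
            = (∑ k, c k) * (∑ k, h k) := by
          rw [Finset.sum_comm, Finset.sum_mul_sum]
        have e3 : (∑ k : Fin r ⊕ Fin s, ∑ l : Fin r ⊕ Fin s, m k * m l)
            = (∑ k, m k) ^ 2 := by
          rw [sq, Finset.sum_mul_sum]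
        rw [e1, e2, e3]; ring

lemma Gf_nonneg (α : Fin r → ℝ) (a b : Fin s → ℝ) (p : (Fin r → ℝ) × (Fin s → ℝ)) :
    0 ≤ Gf α a b p := by
  refine Finset.sum_nonneg fun k _ => Finset.sum_nonneg fun l _ => ?_
  exact mul_nonneg (mul_nonneg (cv_nonneg p k) (cv_nonneg p l)) (ee_nonneg α a b k l)

lemma term_le_Gf (α : Fin r → ℝ) (a b : Fin s → ℝ) (p : (Fin r → ℝ) × (Fin s → ℝ))
    (k l : Fin r ⊕ Fin s) : cv p k * cv p l * ee α a b k l ≤ Gf α a b p := by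
  have hnn : ∀ k' l' : Fin r ⊕ Fin s, 0 ≤ cv p k' * cv p l' * ee α a b k' l' := fun k' l' =>
    mul_nonneg (mul_nonneg (cv_nonneg p k') (cv_nonneg p l')) (ee_nonneg α a b k' l')
  calc cv p k * cv p l * ee α a b k l
      ≤ ∑ l', cv p k * cv p l' * ee α a b k l' :=
        Finset.single_le_sum (fun l' _ => hnn k l') (Finset.mem_univ l)
    _ ≤ Gf α a b p :=
        Finset.single_le_sum (fun k' _ => Finset.sum_nonneg fun l' _ => hnn k' l')
          (Finset.mem_univ k)

lemma sum_cv (p : (Fin r → ℝ) × (Fin s → ℝ)) :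
    ∑ k, cv p k = (∑ i, p.1 i ^ 2) + ∑ j, 2 * p.2 j ^ 2 := by
  rw [Fintype.sum_sum_type]; simp [cv]

lemma sum_cv_mu (α : Fin r → ℝ) (a b : Fin s → ℝ) (p : (Fin r → ℝ) × (Fin s → ℝ)) :
    ∑ k, cv p k * Sum.elim α a k = (∑ i, p.1 i ^ 2 * α i) + 2 * ∑ j, p.2 j ^ 2 * a j := by
  rw [Fintype.sum_sum_type]
  simp only [cv, Sum.elim_inl, Sum.elim_inr]
  congr 1
  rw [Finset.mul_sum]
  exact Finset.sum_congr rfl fun j _ => by ring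

lemma sum_cv_nu (α : Fin r → ℝ) (a b : Fin s → ℝ) (p : (Fin r → ℝ) × (Fin s → ℝ)) :
    ∑ k, cv p k * ((Sum.elim α a k) ^ 2 + dl b k)
      = (∑ i, p.1 i ^ 2 * α i ^ 2) + ∑ j, 2 * p.2 j ^ 2 * (a j ^ 2 + b j ^ 2) := by
  rw [Fintype.sum_sum_type]
  simp only [cv, dl, Sum.elim_inl, Sum.elim_inr, add_zero]

lemma disc_eq (α : Fin r → ℝ) (a b : Fin s → ℝ) (p : (Fin r → ℝ) × (Fin s → ℝ)) :
    ((-2) * (∑ i, p.1 i ^ 2 * α i) - 4 * ∑ j, p.2 j ^ 2 * a j) ^ 2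
      - 4 * ((∑ i, p.1 i ^ 2) + ∑ j, 2 * p.2 j ^ 2)
        * ((∑ i, p.1 i ^ 2 * α i ^ 2) + ∑ j, 2 * p.2 j ^ 2 * (a j ^ 2 + b j ^ 2))
      = -(4 * Gf α a b p) := by
  rw [Gf_identity, sum_cv, sum_cv_mu α a b, sum_cv_nu α a b]
  ring

lemma theta_eq (n : ℕ) (a₀ : ℝ) (α : Fin r → ℝ) (a b : Fin s → ℝ)
    (p : (Fin r → ℝ) × (Fin s → ℝ)) (hp : Cond p) :
    theta0 n r s a₀ α a b p = a₀ ^ 2 * (4 * Gf α a b p) ^ ((n : ℝ) / 2) := by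
  obtain ⟨h1, h2, h3⟩ := hp
  unfold theta0
  rw [h3, div_one, disc_eq α a b p, abs_neg,
    _root_.abs_of_nonneg (by have := Gf_nonneg α a b p; linarith)]

def w : Fin r ⊕ Fin s → ℕ := Sum.elim (fun _ => 1) (fun _ => 2)

lemma prod_cv_pow (p : (Fin r → ℝ) × (Fin s → ℝ))
    (hp3 : (∏ i, p.1 i ^ 2) * ∏ j, p.2 j ^ 4 = 1) :
    ∏ k, cv p k ^ w k = 4 ^ s := by
  rw [Fintype.prod_sum_type]
  simp only [cv, w, Sum.elim_inl, Sum.elim_inr, pow_one]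
  have h4 : ∏ j, (2 * p.2 j ^ 2) ^ 2 = 4 ^ s * ∏ j, p.2 j ^ 4 := by
    calc ∏ j, (2 * p.2 j ^ 2) ^ 2 = ∏ j, 4 * p.2 j ^ 4 :=
          Finset.prod_congr rfl fun j _ => by ring
      _ = 4 ^ s * ∏ j, p.2 j ^ 4 := by
          rw [Finset.prod_mul_distrib, Finset.prod_const, Finset.card_univ, Fintype.card_fin]
  rw [h4]
  calc (∏ i, p.1 i ^ 2) * (4 ^ s * ∏ j, p.2 j ^ 4)
      = 4 ^ s * ((∏ i, p.1 i ^ 2) * ∏ j, p.2 j ^ 4) := by ring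
    _ = 4 ^ s := by rw [hp3, mul_one]

lemma sqrt_am (x y : ℝ) (hx : 0 ≤ x) (hy : 0 ≤ y) : Real.sqrt (x * y) ≤ (x + y) / 2 := by
  rw [Real.sqrt_mul hx]
  nlinarith [Real.sq_sqrt hx, Real.sq_sqrt hy, Real.sqrt_nonneg x, Real.sqrt_nonneg y,
    sq_nonneg (Real.sqrt x - Real.sqrt y)]

lemma sqrt_am_eq (x y : ℝ) (hx : 0 ≤ x) (hy : 0 ≤ y)
    (h : Real.sqrt (x * y) = (x + y) / 2) : x = y := by
  rw [Real.sqrt_mul hx] at h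
  have h2 : (Real.sqrt x - Real.sqrt y) ^ 2 = 0 := by
    nlinarith [Real.sq_sqrt hx, Real.sq_sqrt hy]
  have h3 : Real.sqrt x = Real.sqrt y := by
    have := pow_eq_zero_iff (n := 2) (by norm_num) |>.1 h2
    linarith [sub_eq_zero.1 this]
  calc x = Real.sqrt x ^ 2 := (Real.sq_sqrt hx).symm
    _ = Real.sqrt y ^ 2 := by rw [h3]
    _ = y := Real.sq_sqrt hy

lemma ee_pos_inr_right (α : Fin r → ℝ) (a b : Fin s → ℝ) (hb : ∀ j, b j ≠ 0)
    (k : Fin r ⊕ Fin s) (j : Fin s) : 0 < ee α a b k (Sum.inr j) := by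
  have h1 : 0 ≤ (Sum.elim α a k - Sum.elim α a (Sum.inr j)) ^ 2 := sq_nonneg _
  have h2 : 0 ≤ dl (r := r) b k := dl_nonneg b k
  have h3 : (0:ℝ) < b j ^ 2 := by have := hb j; positivity
  have h4 : dl (r := r) b (Sum.inr j) = b j ^ 2 := rfl
  unfold ee; rw [h4]; linarith

lemma ee_pos_inl_inr (α : Fin r → ℝ) (a b : Fin s → ℝ) (hb : ∀ j, b j ≠ 0)
    (i : Fin r) (j : Fin s) : 0 < ee α a b (Sum.inl i) (Sum.inr j) :=
  ee_pos_inr_right α a b hb _ j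

lemma ee_pos_inl_inl (α : Fin r → ℝ) (a b : Fin s → ℝ)
    (i i' : Fin r) (hne : α i ≠ α i') : 0 < ee α a b (Sum.inl i) (Sum.inl i') := by
  have h1 : (0:ℝ) < (α i - α i') ^ 2 := by
    have := sub_ne_zero.2 hne; positivity
  have h2 : dl (r := r) b (Sum.inl i) = 0 := rfl
  have h2' : dl (r := r) b (Sum.inl i') = 0 := rfl
  unfold ee
  simp only [Sum.elim_inl, h2, h2']
  linarith

lemma exists_two_others {r : ℕ} (hr : 3 ≤ r) (i : Fin r) :
    ∃ i₁ i₂ : Fin r, i₁ ≠ i ∧ i₂ ≠ i ∧ i₁ ≠ i₂ := by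
  refine ⟨if i = ⟨0, by omega⟩ then ⟨1, by omega⟩ else ⟨0, by omega⟩,
    if i = ⟨2, by omega⟩ then ⟨1, by omega⟩ else ⟨2, by omega⟩, ?_, ?_, ?_⟩ <;>
    split_ifs <;> simp_all [Fin.ext_iff] <;> omega

lemma unique_min (n : ℕ) (hn : 3 ≤ n) (hrs : r + 2 * s = n)
    (α : Fin r → ℝ) (a b : Fin s → ℝ) (hb : ∀ j, b j ≠ 0)
    (hα : ∀ i i' : Fin r, i ≠ i' → α i ≠ α i')
    (p q : (Fin r → ℝ) × (Fin s → ℝ)) (hp : Cond p) (hq : Cond q)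
    (hpmin : ∀ x, Cond x → Gf α a b p ≤ Gf α a b x)
    (hqmin : ∀ x, Cond x → Gf α a b q ≤ Gf α a b x) : p = q := by
  obtain ⟨hp1, hp2, hp3⟩ := hp
  obtain ⟨hq1, hq2, hq3⟩ := hq
  set g : (Fin r → ℝ) × (Fin s → ℝ) :=
    (fun i => Real.sqrt (p.1 i * q.1 i), fun j => Real.sqrt (p.2 j * q.2 j)) with hgdef
  have hg1 : ∀ i, 0 < g.1 i := fun i => Real.sqrt_pos.2 (mul_pos (hp1 i) (hq1 i))
  have hg2 : ∀ j, 0 < g.2 j := fun j => Real.sqrt_pos.2 (mul_pos (hp2 j) (hq2 j))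
  have hcg : ∀ k, cv g k = Real.sqrt (cv p k * cv q k) := by
    intro k
    cases k with
    | inl i =>
      have h1 : cv g (Sum.inl i) = p.1 i * q.1 i := by
        show Real.sqrt (p.1 i * q.1 i) ^ 2 = _
        exact Real.sq_sqrt (mul_nonneg (hp1 i).le (hq1 i).le)
      have h2 : Real.sqrt (cv p (Sum.inl i) * cv q (Sum.inl i)) = p.1 i * q.1 i := by
        show Real.sqrt (p.1 i ^ 2 * q.1 i ^ 2) = _
        rw [show p.1 i ^ 2 * q.1 i ^ 2 = (p.1 i * q.1 i) ^ 2 by ring]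
        exact Real.sqrt_sq (mul_nonneg (hp1 i).le (hq1 i).le)
      rw [h1, h2]
    | inr j =>
      have h1 : cv g (Sum.inr j) = 2 * (p.2 j * q.2 j) := by
        show 2 * Real.sqrt (p.2 j * q.2 j) ^ 2 = _
        rw [Real.sq_sqrt (mul_nonneg (hp2 j).le (hq2 j).le)]
      have h2 : Real.sqrt (cv p (Sum.inr j) * cv q (Sum.inr j)) = 2 * (p.2 j * q.2 j) := by
        show Real.sqrt (2 * p.2 j ^ 2 * (2 * q.2 j ^ 2)) = _
        rw [show 2 * p.2 j ^ 2 * (2 * q.2 j ^ 2) = (2 * (p.2 j * q.2 j)) ^ 2 by ring]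
        exact Real.sqrt_sq (by have := (hp2 j).le; have := (hq2 j).le; positivity)
      rw [h1, h2]
  -- g satisfies the constraint
  have hnorm : ∀ x : (Fin r → ℝ) × (Fin s → ℝ), (∀ i, 0 < x.1 i) → (∀ j, 0 < x.2 j) →
      (∏ i, x.1 i ^ 2) * ∏ j, x.2 j ^ 4 = 1 →
      (∏ i, x.1 i) * (∏ j, x.2 j) ^ 2 = 1 := by
    intro x hx1 hx2 hx3
    have hid : ((∏ i, x.1 i) * (∏ j, x.2 j) ^ 2) ^ 2
        = (∏ i, x.1 i ^ 2) * ∏ j, x.2 j ^ 4 := by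
      calc ((∏ i, x.1 i) * (∏ j, x.2 j) ^ 2) ^ 2
          = (∏ i, x.1 i) ^ 2 * (∏ j, x.2 j) ^ 4 := by ring
        _ = (∏ i, x.1 i ^ 2) * ∏ j, x.2 j ^ 4 := by
            rw [← Finset.prod_pow, ← Finset.prod_pow]
    have hsq : ((∏ i, x.1 i) * (∏ j, x.2 j) ^ 2) ^ 2 = 1 := by rw [hid, hx3]
    have hpos : 0 < (∏ i, x.1 i) * (∏ j, x.2 j) ^ 2 := by
      have h1 : 0 < ∏ i, x.1 i := Finset.prod_pos fun i _ => hx1 i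
      have h2 : 0 < ∏ j, x.2 j := Finset.prod_pos fun j _ => hx2 j
      positivity
    nlinarith
  have hgcond : Cond g := by
    refine ⟨hg1, hg2, ?_⟩
    have e1 : ∀ i, g.1 i ^ 2 = p.1 i * q.1 i := fun i =>
      Real.sq_sqrt (mul_nonneg (hp1 i).le (hq1 i).le)
    have e2 : ∀ j, g.2 j ^ 4 = (p.2 j * q.2 j) ^ 2 := by
      intro j
      have : g.2 j ^ 4 = (g.2 j ^ 2) ^ 2 := by ring
      rw [this, Real.sq_sqrt (mul_nonneg (hp2 j).le (hq2 j).le)]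
    calc (∏ i, g.1 i ^ 2) * ∏ j, g.2 j ^ 4
        = (∏ i, p.1 i * q.1 i) * ∏ j, (p.2 j * q.2 j) ^ 2 := by
          rw [Finset.prod_congr rfl fun i _ => e1 i, Finset.prod_congr rfl fun j _ => e2 j]
      _ = ((∏ i, p.1 i) * (∏ j, p.2 j) ^ 2) * ((∏ i, q.1 i) * (∏ j, q.2 j) ^ 2) := by
          have e3 : (∏ j, (p.2 j * q.2 j) ^ 2)
              = (∏ j, p.2 j) ^ 2 * (∏ j, q.2 j) ^ 2 := by
            rw [Finset.prod_pow, Finset.prod_mul_distrib, mul_pow]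
          rw [Finset.prod_mul_distrib, e3]
          ring
      _ = 1 := by rw [hnorm p hp1 hp2 hp3, hnorm q hq1 hq2 hq3, mul_one]
  -- the three minima coincide
  have hpq : Gf α a b p = Gf α a b q := le_antisymm (hpmin q ⟨hq1, hq2, hq3⟩) (hqmin p ⟨hp1, hp2, hp3⟩)
  have hterm : ∀ k l : Fin r ⊕ Fin s,
      cv g k * cv g l * ee α a b k l ≤
        (cv p k * cv p l * ee α a b k l + cv q k * cv q l * ee α a b k l) / 2 := by
    intro k l
    have hcvg2 : cv g k * cv g l = Real.sqrt ((cv p k * cv p l) * (cv q k * cv q l)) := by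
      rw [hcg k, hcg l, ← Real.sqrt_mul (mul_nonneg (cv_nonneg p k) (cv_nonneg q k))]
      congr 1; ring
    rw [hcvg2]
    have := sqrt_am (cv p k * cv p l) (cv q k * cv q l)
      (mul_nonneg (cv_nonneg p k) (cv_nonneg p l))
      (mul_nonneg (cv_nonneg q k) (cv_nonneg q l))
    have hee := ee_nonneg α a b k l
    nlinarith [Real.sqrt_nonneg ((cv p k * cv p l) * (cv q k * cv q l))]
  have hsum : Gf α a b g ≤ (Gf α a b p + Gf α a b q) / 2 := by
    unfold Gf
    rw [show ((∑ k, ∑ l, cv p k * cv p l * ee α a b k l)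
        + ∑ k, ∑ l, cv q k * cv q l * ee α a b k l) / 2
        = ∑ k : Fin r ⊕ Fin s, ∑ l : Fin r ⊕ Fin s,
            (cv p k * cv p l * ee α a b k l + cv q k * cv q l * ee α a b k l) / 2 by
      simp only [Finset.sum_add_distrib, ← Finset.sum_div]]
    exact Finset.sum_le_sum fun k _ => Finset.sum_le_sum fun l _ => hterm k l
  have hgm : Gf α a b g = (Gf α a b p + Gf α a b q) / 2 := by
    have h1 : Gf α a b p ≤ Gf α a b g := hpmin g hgcond
    have h2 : (Gf α a b p + Gf α a b q) / 2 = Gf α a b p := by rw [← hpq]; ring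
    linarith
  -- extract per-term equality
  have e0 : (∑ k : Fin r ⊕ Fin s, ∑ l : Fin r ⊕ Fin s,
      (cv p k * cv p l * ee α a b k l + cv q k * cv q l * ee α a b k l) / 2)
      = (Gf α a b p + Gf α a b q) / 2 := by
    unfold Gf
    simp only [Finset.sum_add_distrib, ← Finset.sum_div]
  have hsums_eq : (∑ k : Fin r ⊕ Fin s, ∑ l : Fin r ⊕ Fin s, cv g k * cv g l * ee α a b k l)
      = ∑ k : Fin r ⊕ Fin s, ∑ l : Fin r ⊕ Fin s,
          (cv p k * cv p l * ee α a b k l + cv q k * cv q l * ee α a b k l) / 2 := by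
    rw [e0]; exact hgm
  have houter := (Finset.sum_eq_sum_iff_of_le
    (fun k (_ : k ∈ Finset.univ) => Finset.sum_le_sum fun l _ => hterm k l)).1 hsums_eq
  have hterm_eq : ∀ k l : Fin r ⊕ Fin s,
      cv g k * cv g l * ee α a b k l
        = (cv p k * cv p l * ee α a b k l + cv q k * cv q l * ee α a b k l) / 2 := by
    intro k l
    exact (Finset.sum_eq_sum_iff_of_le (fun l' (_ : l' ∈ Finset.univ) => hterm k l')).1
      (houter k (Finset.mem_univ k)) l (Finset.mem_univ l)
  have hkey : ∀ k l : Fin r ⊕ Fin s, 0 < ee α a b k l →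
      cv p k * cv p l = cv q k * cv q l := by
    intro k l hee
    have hcvg2 : cv g k * cv g l = Real.sqrt ((cv p k * cv p l) * (cv q k * cv q l)) := by
      rw [hcg k, hcg l, ← Real.sqrt_mul (mul_nonneg (cv_nonneg p k) (cv_nonneg q k))]
      congr 1; ring
    have h1 := hterm_eq k l
    rw [hcvg2] at h1
    have h2 : Real.sqrt ((cv p k * cv p l) * (cv q k * cv q l)) * ee α a b k l
        = ((cv p k * cv p l + cv q k * cv q l) / 2) * ee α a b k l := by
      rw [h1]; ring
    have h3 := mul_right_cancel₀ (ne_of_gt hee) h2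
    exact sqrt_am_eq _ _ (mul_nonneg (cv_nonneg p k) (cv_nonneg p l))
      (mul_nonneg (cv_nonneg q k) (cv_nonneg q l)) h3
  -- conclude equality of coordinates
  have sq_eq : ∀ x y : ℝ, 0 < x → 0 < y → x ^ 2 = y ^ 2 → x = y := by
    intro x y hx hy h
    calc x = Real.sqrt (x ^ 2) := (Real.sqrt_sq hx.le).symm
      _ = Real.sqrt (y ^ 2) := by rw [h]
      _ = y := Real.sqrt_sq hy.le
  have hcinr : ∀ j, cv p (Sum.inr j) = cv q (Sum.inr j) := by
    intro j
    have h := hkey (Sum.inr j) (Sum.inr j) (ee_pos_inr_right α a b hb _ j)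
    exact sq_eq _ _ (cv_pos p hp1 hp2 _) (cv_pos q hq1 hq2 _) (by rw [sq, sq]; exact h)
  have hcinl : ∀ i, cv p (Sum.inl i) = cv q (Sum.inl i) := by
    intro i
    rcases Nat.eq_zero_or_pos s with hs | hs
    · -- s = 0, so r = n ≥ 3
      have hr : 3 ≤ r := by omega
      obtain ⟨i₁, i₂, hne1, hne2, hne12⟩ := exists_two_others hr i
      have eA := hkey (Sum.inl i) (Sum.inl i₁)
        (ee_pos_inl_inl α a b i i₁ (hα i i₁ (Ne.symm hne1)))
      have eB := hkey (Sum.inl i) (Sum.inl i₂)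
        (ee_pos_inl_inl α a b i i₂ (hα i i₂ (Ne.symm hne2)))
      have eC := hkey (Sum.inl i₁) (Sum.inl i₂)
        (ee_pos_inl_inl α a b i₁ i₂ (hα i₁ i₂ hne12))
      have hpos : 0 < cv q (Sum.inl i₁) * cv q (Sum.inl i₂) :=
        mul_pos (cv_pos q hq1 hq2 _) (cv_pos q hq1 hq2 _)
      have h2 : cv p (Sum.inl i) ^ 2 * (cv q (Sum.inl i₁) * cv q (Sum.inl i₂))
          = cv q (Sum.inl i) ^ 2 * (cv q (Sum.inl i₁) * cv q (Sum.inl i₂)) := by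
        calc cv p (Sum.inl i) ^ 2 * (cv q (Sum.inl i₁) * cv q (Sum.inl i₂))
            = cv p (Sum.inl i) ^ 2 * (cv p (Sum.inl i₁) * cv p (Sum.inl i₂)) := by rw [← eC]
          _ = (cv p (Sum.inl i) * cv p (Sum.inl i₁)) * (cv p (Sum.inl i) * cv p (Sum.inl i₂)) := by
              ring
          _ = (cv q (Sum.inl i) * cv q (Sum.inl i₁)) * (cv q (Sum.inl i) * cv q (Sum.inl i₂)) := by
              rw [eA, eB]
          _ = cv q (Sum.inl i) ^ 2 * (cv q (Sum.inl i₁) * cv q (Sum.inl i₂)) := by ring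
      have h3 := mul_right_cancel₀ (ne_of_gt hpos) h2
      exact sq_eq _ _ (cv_pos p hp1 hp2 _) (cv_pos q hq1 hq2 _) h3
    · -- s > 0
      have j0 : Fin s := ⟨0, hs⟩
      have h := hkey (Sum.inl i) (Sum.inr j0) (ee_pos_inl_inr α a b hb i j0)
      rw [hcinr j0] at h
      exact mul_right_cancel₀ (ne_of_gt (cv_pos q hq1 hq2 (Sum.inr j0))) h
  have hfin1 : p.1 = q.1 := by
    funext i
    exact sq_eq _ _ (hp1 i) (hq1 i) (hcinl i)
  have hfin2 : p.2 = q.2 := by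
    funext j
    have h := hcinr j
    have h2 : p.2 j ^ 2 = q.2 j ^ 2 := by
      have : (2:ℝ) * p.2 j ^ 2 = 2 * q.2 j ^ 2 := h
      linarith
    exact sq_eq _ _ (hp2 j) (hq2 j) h2
  exact Prod.ext hfin1 hfin2

lemma ee_pos_inr_left (α : Fin r → ℝ) (a b : Fin s → ℝ) (hb : ∀ j, b j ≠ 0)
    (j : Fin s) (l : Fin r ⊕ Fin s) : 0 < ee α a b (Sum.inr j) l := by
  have h1 : 0 ≤ (Sum.elim α a (Sum.inr j) - Sum.elim α a l) ^ 2 := sq_nonneg _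
  have h2 : 0 ≤ dl (r := r) b l := dl_nonneg b l
  have h3 : (0:ℝ) < b j ^ 2 := by have := hb j; positivity
  have h4 : dl (r := r) b (Sum.inr j) = b j ^ 2 := rfl
  unfold ee; rw [h4]; linarith

lemma exists_min (n : ℕ) (hn : 3 ≤ n) (hrs : r + 2 * s = n)
    (α : Fin r → ℝ) (a b : Fin s → ℝ) (hb : ∀ j, b j ≠ 0)
    (hα : ∀ i i' : Fin r, i ≠ i' → α i ≠ α i') :
    ∃ p, Cond p ∧ ∀ q, Cond q → Gf α a b p ≤ Gf α a b q := by
  classical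
  set p₀ : (Fin r → ℝ) × (Fin s → ℝ) := (fun _ => 1, fun _ => 1) with hp₀def
  have hp₀cond : Cond p₀ := ⟨fun i => one_pos, fun j => one_pos, by simp [hp₀def]⟩
  set M := Gf α a b p₀ with hMdef
  have hM0 : 0 ≤ M := Gf_nonneg α a b p₀
  have hKne : Nonempty (Fin r ⊕ Fin s) := by
    rcases Nat.eq_zero_or_pos r with h | h
    · exact ⟨Sum.inr ⟨0, by omega⟩⟩
    · exact ⟨Sum.inl ⟨0, by omega⟩⟩
  have heepos : ∀ kl : (Fin r ⊕ Fin s) × (Fin r ⊕ Fin s),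
      (kl.1 ≠ kl.2 ∨ kl.1.isRight) → 0 < ee α a b kl.1 kl.2 := by
    rintro ⟨k, l⟩ h
    cases k with
    | inl i =>
      cases l with
      | inl i' =>
        have hne : i ≠ i' := by
          rcases h with h | h
          · exact fun he => h (by rw [he])
          · simp at h
        exact ee_pos_inl_inl α a b i i' (hα _ _ hne)
      | inr j => exact ee_pos_inl_inr α a b hb i j
    | inr j => exact ee_pos_inr_left α a b hb j l
  set f : ((Fin r ⊕ Fin s) × (Fin r ⊕ Fin s)) → ℝ :=
    fun kl => if (kl.1 ≠ kl.2 ∨ kl.1.isRight) then ee α a b kl.1 kl.2 else 1 with hfdef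
  obtain ⟨kl₀, _, hklmin⟩ := Finset.exists_min_image Finset.univ f
    ⟨(Classical.arbitrary _, Classical.arbitrary _), Finset.mem_univ _⟩
  set ε := f kl₀ with hεdef
  have hε : 0 < ε := by
    rw [hεdef, hfdef]
    dsimp only
    split_ifs with h
    · exact heepos kl₀ h
    · exact one_pos
  have hεle : ∀ k l, (k ≠ l ∨ (Sum.isRight k : Prop)) → ε ≤ ee α a b k l := by
    intro k l h
    have h2 := hklmin (k, l) (Finset.mem_univ _)
    rw [hfdef] at h2
    simpa [if_pos h] using h2
  set X := max 1 (M / ε) with hXdef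
  have hX1 : (1:ℝ) ≤ X := le_max_left _ _
  set Δ := max 2 (X ^ (n - 1)) with hΔdef
  have hΔ2 : (2:ℝ) ≤ Δ := le_max_left _ _
  have hΔ1 : (1:ℝ) ≤ Δ := by linarith
  have hΔpow1 : (1:ℝ) ≤ Δ ^ (n - 1) := by
    calc (1:ℝ) = 1 ^ (n - 1) := (one_pow _).symm
      _ ≤ Δ ^ (n - 1) := pow_le_pow_left₀ one_pos.le hΔ1 _
  set δ := 1 / Δ ^ (n - 1) with hδdef
  have hδpos : 0 < δ := by
    rw [hδdef]; positivity
  have hδ1 : δ ≤ 1 := by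
    rw [hδdef]
    exact (div_le_one (by linarith)).2 hΔpow1
  have h4s1 : (1:ℝ) ≤ 4 ^ s := by
    calc (1:ℝ) = 1 ^ s := (one_pow _).symm
      _ ≤ 4 ^ s := pow_le_pow_left₀ one_pos.le (by norm_num) _
  have hsumw : ∑ l : Fin r ⊕ Fin s, w (r := r) (s := s) l = n := by
    rw [Fintype.sum_sum_type]
    simp only [w, Sum.elim_inl, Sum.elim_inr, Finset.sum_const, Finset.card_univ,
      Fintype.card_fin, smul_eq_mul]
    omega
  -- upper bound
  have hupper : ∀ p : (Fin r → ℝ) × (Fin s → ℝ), Cond p → Gf α a b p ≤ M → ∀ k, cv p k ≤ Δ := by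
    rintro p ⟨hp1, hp2, hp3⟩ hGM k
    have hpair : ∀ k' l' : Fin r ⊕ Fin s, (k' ≠ l' ∨ (Sum.isRight k' : Prop)) →
        cv p k' * cv p l' ≤ X := by
      intro k' l' h
      have h1 : ε ≤ ee α a b k' l' := hεle k' l' h
      have h2 := term_le_Gf α a b p k' l'
      have h4 : cv p k' * cv p l' * ε ≤ cv p k' * cv p l' * ee α a b k' l' :=
        mul_le_mul_of_nonneg_left h1 (mul_nonneg (cv_nonneg p k') (cv_nonneg p l'))
      have h5 : cv p k' * cv p l' ≤ M / ε := (le_div_iff₀ hε).2 (by linarith)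
      exact le_trans h5 (le_max_right _ _)
    by_cases hc : cv p k ≤ 1
    · linarith
    push_neg at hc
    have hge1 : 1 ≤ cv p k := hc.le
    cases k with
    | inr j =>
      have h2 := hpair (Sum.inr j) (Sum.inr j) (Or.inr rfl)
      have h3 : cv p (Sum.inr j) ≤ X := by nlinarith
      calc cv p (Sum.inr j) ≤ X := h3
        _ ≤ X ^ (n - 1) := le_self_pow₀ hX1 (by omega)
        _ ≤ Δ := le_max_right _ _
    | inl i =>
      have hsum_erase : ∑ l ∈ Finset.univ.erase (Sum.inl i), w (r := r) (s := s) l = n - 1 := by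
        have h := Finset.sum_erase_add Finset.univ (w (r := r) (s := s))
          (Finset.mem_univ (Sum.inl i))
        have hw : w (r := r) (s := s) (Sum.inl i) = 1 := rfl
        omega
      have hmain : ∏ l ∈ Finset.univ.erase (Sum.inl i),
          (cv p (Sum.inl i) * cv p l) ^ (w (r := r) (s := s) l) ≤ X ^ (n - 1) := by
        calc ∏ l ∈ Finset.univ.erase (Sum.inl i),
            (cv p (Sum.inl i) * cv p l) ^ (w (r := r) (s := s) l)
            ≤ ∏ l ∈ Finset.univ.erase (Sum.inl i), X ^ (w (r := r) (s := s) l) :=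
              Finset.prod_le_prod
                (fun l _ => pow_nonneg (mul_nonneg (cv_nonneg p _) (cv_nonneg p l)) _)
                (fun l hl => pow_le_pow_left₀ (mul_nonneg (cv_nonneg p _) (cv_nonneg p l))
                  (hpair _ l (Or.inl (Finset.ne_of_mem_erase hl).symm)) _)
          _ = X ^ (∑ l ∈ Finset.univ.erase (Sum.inl i), w (r := r) (s := s) l) :=
              Finset.prod_pow_eq_pow_sum _ _ _
          _ = X ^ (n - 1) := by rw [hsum_erase]
      have hexp : ∏ l ∈ Finset.univ.erase (Sum.inl i),
          (cv p (Sum.inl i) * cv p l) ^ (w (r := r) (s := s) l)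
          = cv p (Sum.inl i) ^ (n - 1)
            * ∏ l ∈ Finset.univ.erase (Sum.inl i), cv p l ^ (w (r := r) (s := s) l) := by
        rw [Finset.prod_congr rfl fun l (_ : l ∈ Finset.univ.erase (Sum.inl i)) =>
          mul_pow (cv p (Sum.inl i)) (cv p l) (w (r := r) (s := s) l)]
        rw [Finset.prod_mul_distrib, Finset.prod_pow_eq_pow_sum, hsum_erase]
      have hconstr : cv p (Sum.inl i)
          * ∏ l ∈ Finset.univ.erase (Sum.inl i), cv p l ^ (w (r := r) (s := s) l) = 4 ^ s := by
        have h := Finset.mul_prod_erase Finset.univ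
          (fun l => cv p l ^ (w (r := r) (s := s) l)) (Finset.mem_univ (Sum.inl i))
        rw [prod_cv_pow p hp3] at h
        simpa [w] using h
      have hn1 : n - 1 = (n - 2) + 1 := by omega
      rw [hexp] at hmain
      have e1 : cv p (Sum.inl i) ^ (n - 1)
          * ∏ l ∈ Finset.univ.erase (Sum.inl i), cv p l ^ (w (r := r) (s := s) l)
          = cv p (Sum.inl i) ^ (n - 2)
            * (cv p (Sum.inl i)
              * ∏ l ∈ Finset.univ.erase (Sum.inl i), cv p l ^ (w (r := r) (s := s) l)) := by
        rw [hn1, pow_succ]; ring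
      rw [e1, hconstr] at hmain
      have h5 : cv p (Sum.inl i) ^ (n - 2) ≤ X ^ (n - 1) := by
        nlinarith [pow_nonneg (cv_nonneg p (Sum.inl i)) (n - 2)]
      calc cv p (Sum.inl i) ≤ cv p (Sum.inl i) ^ (n - 2) := le_self_pow₀ hge1 (by omega)
        _ ≤ X ^ (n - 1) := h5
        _ ≤ Δ := le_max_right _ _
  -- lower bound
  have hlower : ∀ p : (Fin r → ℝ) × (Fin s → ℝ), Cond p → (∀ l, cv p l ≤ Δ) → ∀ k, δ ≤ cv p k := by
    rintro p ⟨hp1, hp2, hp3⟩ hub k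
    have hconstr : cv p k ^ (w (r := r) (s := s) k)
        * ∏ l ∈ Finset.univ.erase k, cv p l ^ (w (r := r) (s := s) l) = 4 ^ s := by
      have h := Finset.mul_prod_erase Finset.univ
        (fun l => cv p l ^ (w (r := r) (s := s) l)) (Finset.mem_univ k)
      rw [prod_cv_pow p hp3] at h
      exact h
    have hwk1 : 1 ≤ w (r := r) (s := s) k := by cases k <;> simp [w]
    have hprodle : ∏ l ∈ Finset.univ.erase k, cv p l ^ (w (r := r) (s := s) l)
        ≤ Δ ^ (n - 1) := by
      calc ∏ l ∈ Finset.univ.erase k, cv p l ^ (w (r := r) (s := s) l)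
          ≤ ∏ l ∈ Finset.univ.erase k, Δ ^ (w (r := r) (s := s) l) :=
            Finset.prod_le_prod (fun l _ => pow_nonneg (cv_nonneg p l) _)
              (fun l _ => pow_le_pow_left₀ (cv_nonneg p l) (hub l) _)
        _ = Δ ^ (∑ l ∈ Finset.univ.erase k, w (r := r) (s := s) l) :=
            Finset.prod_pow_eq_pow_sum _ _ _
        _ ≤ Δ ^ (n - 1) := by
            apply pow_le_pow_right₀ hΔ1
            have h := Finset.sum_erase_add Finset.univ (w (r := r) (s := s))
              (Finset.mem_univ k)
            omega
    have hprodnn : 0 ≤ ∏ l ∈ Finset.univ.erase k, cv p l ^ (w (r := r) (s := s) l) :=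
      Finset.prod_nonneg fun l _ => pow_nonneg (cv_nonneg p l) _
    have hge : δ ≤ cv p k ^ (w (r := r) (s := s) k) := by
      rw [hδdef, div_le_iff₀ (by linarith : (0:ℝ) < Δ ^ (n - 1))]
      nlinarith [pow_nonneg (cv_nonneg p k) (w (r := r) (s := s) k)]
    by_cases hck : 1 ≤ cv p k
    · linarith
    · push_neg at hck
      have h := pow_le_of_le_one (cv_nonneg p k) hck.le (by omega : w (r := r) (s := s) k ≠ 0)
      linarith
  -- continuity
  have hcv : ∀ k : Fin r ⊕ Fin s, Continuous fun p : (Fin r → ℝ) × (Fin s → ℝ) => cv p k := by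
    intro k
    cases k with
    | inl i =>
      show Continuous fun p : (Fin r → ℝ) × (Fin s → ℝ) => p.1 i ^ 2
      fun_prop
    | inr j =>
      show Continuous fun p : (Fin r → ℝ) × (Fin s → ℝ) => 2 * p.2 j ^ 2
      fun_prop
  have hGcont : Continuous (Gf α a b) := by
    unfold Gf
    exact continuous_finset_sum _ fun k _ => continuous_finset_sum _ fun l _ =>
      ((hcv k).mul (hcv l)).mul continuous_const
  have hcont3 : Continuous fun p : (Fin r → ℝ) × (Fin s → ℝ) =>
      (∏ i, p.1 i ^ 2) * ∏ j, p.2 j ^ 4 := by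
    apply Continuous.mul
    · exact continuous_finset_prod _ fun i _ => by fun_prop
    · exact continuous_finset_prod _ fun j _ => by fun_prop
  -- the compact region
  set a₁ := Real.sqrt δ with ha₁
  set b₁ := Real.sqrt Δ with hb₁
  set a₂ := Real.sqrt (δ / 2) with ha₂
  have ha₁pos : 0 < a₁ := Real.sqrt_pos.2 hδpos
  have ha₂pos : 0 < a₂ := Real.sqrt_pos.2 (by linarith)
  set T : Set ((Fin r → ℝ) × (Fin s → ℝ)) :=
    {p | ∀ i, p.1 i ∈ Set.Icc a₁ b₁} ∩ {p | ∀ j, p.2 j ∈ Set.Icc a₂ b₁} ∩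
      {p | (∏ i, p.1 i ^ 2) * ∏ j, p.2 j ^ 4 = 1} ∩ {p | Gf α a b p ≤ M} with hTdef
  have hTcond : ∀ p ∈ T, Cond p := by
    rintro p ⟨⟨⟨h1, h2⟩, h3⟩, _⟩
    exact ⟨fun i => lt_of_lt_of_le ha₁pos (h1 i).1,
      fun j => lt_of_lt_of_le ha₂pos (h2 j).1, h3⟩
  have hTsub : ∀ p : (Fin r → ℝ) × (Fin s → ℝ), Cond p → Gf α a b p ≤ M → p ∈ T := by
    intro p hp hGM
    obtain ⟨hp1, hp2, hp3⟩ := hp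
    have hub := hupper p ⟨hp1, hp2, hp3⟩ hGM
    have hlb := hlower p ⟨hp1, hp2, hp3⟩ hub
    refine ⟨⟨⟨fun i => ?_, fun j => ?_⟩, hp3⟩, hGM⟩
    · have h1 : δ ≤ p.1 i ^ 2 := hlb (Sum.inl i)
      have h2 : p.1 i ^ 2 ≤ Δ := hub (Sum.inl i)
      constructor
      · rw [ha₁]
        calc Real.sqrt δ ≤ Real.sqrt (p.1 i ^ 2) := Real.sqrt_le_sqrt h1
          _ = p.1 i := Real.sqrt_sq (hp1 i).le
      · rw [hb₁]
        calc p.1 i = Real.sqrt (p.1 i ^ 2) := (Real.sqrt_sq (hp1 i).le).symm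
          _ ≤ Real.sqrt Δ := Real.sqrt_le_sqrt h2
    · have h1 : δ ≤ 2 * p.2 j ^ 2 := hlb (Sum.inr j)
      have h2 : 2 * p.2 j ^ 2 ≤ Δ := hub (Sum.inr j)
      constructor
      · rw [ha₂]
        calc Real.sqrt (δ / 2) ≤ Real.sqrt (p.2 j ^ 2) := Real.sqrt_le_sqrt (by linarith)
          _ = p.2 j := Real.sqrt_sq (hp2 j).le
      · rw [hb₁]
        calc p.2 j = Real.sqrt (p.2 j ^ 2) := (Real.sqrt_sq (hp2 j).le).symm
          _ ≤ Real.sqrt Δ := Real.sqrt_le_sqrt (by linarith)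
  have hTclosed : IsClosed T := by
    refine IsClosed.inter (IsClosed.inter (IsClosed.inter ?_ ?_) ?_) ?_
    · have : {p : (Fin r → ℝ) × (Fin s → ℝ) | ∀ i, p.1 i ∈ Set.Icc a₁ b₁}
          = ⋂ i, (fun p : (Fin r → ℝ) × (Fin s → ℝ) => p.1 i) ⁻¹' Set.Icc a₁ b₁ := by
        ext p; simp
      rw [this]
      exact isClosed_iInter fun i =>
        isClosed_Icc.preimage ((continuous_apply i).comp continuous_fst)
    · have : {p : (Fin r → ℝ) × (Fin s → ℝ) | ∀ j, p.2 j ∈ Set.Icc a₂ b₁}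
          = ⋂ j, (fun p : (Fin r → ℝ) × (Fin s → ℝ) => p.2 j) ⁻¹' Set.Icc a₂ b₁ := by
        ext p; simp
      rw [this]
      exact isClosed_iInter fun j =>
        isClosed_Icc.preimage ((continuous_apply j).comp continuous_snd)
    · exact isClosed_eq hcont3 continuous_const
    · exact isClosed_le hGcont continuous_const
  have hTcompact : IsCompact T := by
    have hbox : IsCompact ((Set.univ.pi fun _ : Fin r => Set.Icc a₁ b₁) ×ˢ
        (Set.univ.pi fun _ : Fin s => Set.Icc a₂ b₁)) :=
      (isCompact_univ_pi fun _ => isCompact_Icc).prod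
        (isCompact_univ_pi fun _ => isCompact_Icc)
    apply hbox.of_isClosed_subset hTclosed
    rintro p ⟨⟨⟨h1, h2⟩, _⟩, _⟩
    exact ⟨fun i _ => h1 i, fun j _ => h2 j⟩
  have hp₀T : p₀ ∈ T := by
    have h11 : a₁ ≤ 1 := by
      rw [ha₁]
      calc Real.sqrt δ ≤ Real.sqrt 1 := Real.sqrt_le_sqrt hδ1
        _ = 1 := Real.sqrt_one
    have h12 : (1:ℝ) ≤ b₁ := by
      rw [hb₁]
      calc (1:ℝ) = Real.sqrt 1 := Real.sqrt_one.symm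
        _ ≤ Real.sqrt Δ := Real.sqrt_le_sqrt (by linarith)
    have h13 : a₂ ≤ 1 := by
      rw [ha₂]
      calc Real.sqrt (δ / 2) ≤ Real.sqrt 1 := Real.sqrt_le_sqrt (by linarith)
        _ = 1 := Real.sqrt_one
    refine ⟨⟨⟨fun i => ⟨h11, h12⟩, fun j => ⟨h13, h12⟩⟩, ?_⟩, le_refl M⟩
    simp [hp₀def]
  obtain ⟨pm, hpmT, hpmmin⟩ := hTcompact.exists_isMinOn ⟨p₀, hp₀T⟩ hGcont.continuousOn
  have hmin' : ∀ y ∈ T, Gf α a b pm ≤ Gf α a b y := fun y hy => isMinOn_iff.1 hpmmin y hy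
  refine ⟨pm, hTcond pm hpmT, ?_⟩
  intro q hq
  by_cases hqM : Gf α a b q ≤ M
  · exact hmin' q (hTsub q hq hqM)
  · push_neg at hqM
    have h := hmin' p₀ hp₀T
    linarith

lemma theta_le_of (n : ℕ) (a₀ : ℝ) (α : Fin r → ℝ) (a b : Fin s → ℝ)
    (p q : (Fin r → ℝ) × (Fin s → ℝ)) (hp : Cond p) (hq : Cond q)
    (h : Gf α a b p ≤ Gf α a b q) :
    theta0 n r s a₀ α a b p ≤ theta0 n r s a₀ α a b q := by
  rw [theta_eq n a₀ α a b p hp, theta_eq n a₀ α a b q hq]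
  have h1 : (0:ℝ) ≤ 4 * Gf α a b p := by linarith [Gf_nonneg α a b p]
  exact mul_le_mul_of_nonneg_left
    (Real.rpow_le_rpow h1 (by linarith) (by positivity)) (sq_nonneg a₀)

lemma theta_lt_of (n : ℕ) (hn : 3 ≤ n) (a₀ : ℝ) (ha₀ : a₀ ≠ 0)
    (α : Fin r → ℝ) (a b : Fin s → ℝ)
    (p q : (Fin r → ℝ) × (Fin s → ℝ)) (hp : Cond p) (hq : Cond q)
    (h : Gf α a b p < Gf α a b q) :
    theta0 n r s a₀ α a b p < theta0 n r s a₀ α a b q := by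
  rw [theta_eq n a₀ α a b p hp, theta_eq n a₀ α a b q hq]
  have hn' : (0:ℝ) < (n : ℝ) / 2 := by
    have : (3:ℝ) ≤ (n : ℝ) := by exact_mod_cast hn
    linarith
  apply mul_lt_mul_of_pos_left _ (by positivity : (0:ℝ) < a₀ ^ 2)
  exact Real.rpow_lt_rpow (by linarith [Gf_nonneg α a b p]) (by linarith) hn'

end Stmt4Aux

open Stmt4Aux

/-- For a real binary form of degree `n = r + 2s ≥ 3` with nonzero leading
coefficient `a₀` and `n` distinct roots (real roots `α_i`, non-real roots `a_j ± i b_j`),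
the function `θ₀` restricted to `{(t,u) ∈ ℝ_{>0}^r × ℝ_{>0}^s : ∏ t_i² ∏ u_j⁴ = 1}`
attains a global minimum at exactly one point of this set. -/
theorem stmt4 (n r s : ℕ) (hn : 3 ≤ n) (hrs : r + 2 * s = n)
    (a₀ : ℝ) (ha₀ : a₀ ≠ 0)
    (α : Fin r → ℝ) (a b : Fin s → ℝ)
    (hb : ∀ j, b j ≠ 0)
    (hdistinct : Function.Injective
      (Sum.elim (fun i : Fin r => (α i : ℂ))
        (Sum.elim (fun j : Fin s => (a j : ℂ) + (b j : ℂ) * Complex.I)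
          (fun j : Fin s => (a j : ℂ) - (b j : ℂ) * Complex.I)))) :
    ∃! p : (Fin r → ℝ) × (Fin s → ℝ),
      ((∀ i, 0 < p.1 i) ∧ (∀ j, 0 < p.2 j) ∧
        (∏ i, p.1 i ^ 2) * ∏ j, p.2 j ^ 4 = 1) ∧
      ∀ q : (Fin r → ℝ) × (Fin s → ℝ),
        ((∀ i, 0 < q.1 i) ∧ (∀ j, 0 < q.2 j) ∧
          (∏ i, q.1 i ^ 2) * ∏ j, q.2 j ^ 4 = 1) →
        theta0 n r s a₀ α a b p ≤ theta0 n r s a₀ α a b q := by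
  have hα : ∀ i i' : Fin r, i ≠ i' → α i ≠ α i' := by
    intro i i' hne heq
    apply hne
    have h1 : (Sum.inl i : Fin r ⊕ (Fin s ⊕ Fin s)) = Sum.inl i' := by
      apply hdistinct
      simpa using congrArg (fun x : ℝ => (x : ℂ)) heq
    exact Sum.inl.inj h1
  obtain ⟨pm, hpmc, hpmmin⟩ := exists_min n hn hrs α a b hb hα
  refine ⟨pm, ⟨hpmc, fun q hq => theta_le_of n a₀ α a b pm q hpmc hq (hpmmin q hq)⟩, ?_⟩
  rintro q ⟨hqc, hqmin⟩
  have hGq : ∀ x, Cond x → Gf α a b q ≤ Gf α a b x := by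
    intro x hx
    have h1 : Gf α a b q ≤ Gf α a b pm := by
      by_contra hlt
      push_neg at hlt
      have h2 := theta_lt_of n hn a₀ ha₀ α a b pm q hpmc hqc hlt
      have h3 := hqmin pm hpmc
      linarith
    exact le_trans h1 (hpmmin x hx)
  exact unique_min n hn hrs α a b hb hα q pm hqc hpmc hGq hpmmin
end

section
/- Fix an integer n ≥ 3, let R = ℚ[a₀, …, aₙ] be the polynomial ring in n+1 indeterminates, and let f = Σ_{i=0}^n a_i x^{n−i} z^i ∈ R[x,z] be the generic binary form of degree n. Let f_x and f_z denote the partial derivatives of f with respect to x and z, and define F_f(x,z) := x · f_x(−f_z(x,z), f_x(x,z)) + z · f_z(−f_z(x,z), f_x(x,z)), where f_x(−f_z(x,z), f_x(x,z)) means the result of substituting the pair (−f_z(x,z), f_x(x,z)) for the variables of the two-variable polynomial f_x, and similarly for f_z. Then f divides F_f in R[x,z], and the quotient G_f := F_f/(n·f) is homogeneous of degree (n−1)(n−2) in (x,z); moreover, each coefficient of G_f (as a polynomial in x, z) is a homogeneous polynomial of degree n−1 in the indeterminates a₀, …, aₙ. -/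
open MvPolynomial

/-- The associated form `F_f(x,z) = x·f_x(-f_z, f_x) + z·f_z(-f_z, f_x)` of a binary form
`f(x,z)` (variable `0` is `x`, variable `1` is `z`). -/
noncomputable def Fcov {R : Type*} [CommRing R] (f : MvPolynomial (Fin 2) R) :
    MvPolynomial (Fin 2) R :=
  X 0 * bind₁ ![-(pderiv 1 f), pderiv 0 f] (pderiv 0 f)
    + X 1 * bind₁ ![-(pderiv 1 f), pderiv 0 f] (pderiv 1 f)

section Aux

theorem aux_dvd {R : Type*} [CommRing R] {σ : Type*} {A : Type*} [CommRing A] [Algebra R A]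
    (t : A) (g g' : σ → A) (h : ∀ i, t ∣ g i - g' i) (p : MvPolynomial σ R) :
    t ∣ aeval g p - aeval g' p := by
  induction p using MvPolynomial.induction_on with
  | C r => simp
  | add p q hp hq =>
      rw [map_add, map_add, ← sub_add_sub_comm]
      exact dvd_add hp hq
  | mul_X p i hp =>
      rw [map_mul, map_mul, aeval_X, aeval_X]
      have e : aeval g p * g i - aeval g' p * g' i
          = (aeval g p - aeval g' p) * g i + aeval g' p * (g i - g' i) := by ring
      rw [e]
      exact dvd_add (hp.mul_right _) ((h i).mul_left _)

theorem aux_scale {R : Type*} [CommRing R] {σ : Type*} {A : Type*} [CommRing A] [Algebra R A]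
    (c : A) (g : σ → A) {p : MvPolynomial σ R} {m : ℕ} (hp : p.IsHomogeneous m) :
    aeval (fun i => c * g i) p = c ^ m * aeval g p := by
  conv_lhs => rw [p.as_sum]
  conv_rhs => rw [p.as_sum]
  rw [map_sum, map_sum, Finset.mul_sum]
  refine Finset.sum_congr rfl fun v hv => ?_
  rw [aeval_monomial, aeval_monomial]
  have hdeg : v.degree = m := by
    by_contra h
    exact mem_support_iff.mp hv (hp.coeff_eq_zero h)
  have e : (v.prod fun i k => (c * g i) ^ k) = c ^ m * v.prod fun i k => g i ^ k := by
    rw [Finsupp.prod_congr (g2 := fun i k => c ^ k * g i ^ k) (fun i _ => mul_pow c (g i) _),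
      Finsupp.prod_mul]
    congr 1
    rw [Finsupp.prod, Finset.prod_pow_eq_pow_sum, ← hdeg]
    rfl
  rw [e]
  ring

theorem aux_single_add {σ : Type*} [DecidableEq σ] (m : σ →₀ ℕ) (i : σ) (h : 0 < m i) :
    Finsupp.single i 1 + (m - Finsupp.single i 1) = m := by
  ext j
  rcases eq_or_ne i j with rfl | hij
  · simp only [Finsupp.add_apply, Finsupp.tsub_apply, Finsupp.single_eq_same]
    omega
  · simp [Finsupp.add_apply, Finsupp.tsub_apply, Finsupp.single_eq_of_ne' hij]

theorem aux_X_mul_pd {R : Type*} [CommRing R] {m : Fin 2 →₀ ℕ} {r : R} (i : Fin 2) :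
    (X i : MvPolynomial (Fin 2) R) * monomial (m - Finsupp.single i 1) (r * m i)
      = (m i) • monomial m r := by
  rcases Nat.eq_zero_or_pos (m i) with h | h
  · simp [h]
  · rw [← pow_one (X i), X_pow_eq_monomial, monomial_mul, one_mul, aux_single_add m i h,
      smul_monomial, nsmul_eq_mul, mul_comm]

theorem aux_deg_single {σ : Type*} [DecidableEq σ] (i : σ) (k : ℕ) :
    (Finsupp.single i k).degree = k := by
  simp only [Finsupp.degree_eq_weight_one]
  rw [Finsupp.weight_apply, Finsupp.sum_single_index] <;> simp

theorem aux_deg_add {σ : Type*} (a b : σ →₀ ℕ) : (a + b).degree = a.degree + b.degree := by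
  simp only [Finsupp.degree_eq_weight_one]
  exact map_add _ a b

theorem aux_pderiv_hom {R : Type*} [CommRing R] {σ : Type*} [DecidableEq σ]
    {p : MvPolynomial σ R} {m : ℕ}
    (hp : p.IsHomogeneous m) (i : σ) : (pderiv i p).IsHomogeneous (m - 1) := by
  conv_lhs => rw [p.as_sum]
  rw [map_sum]
  apply IsHomogeneous.sum
  intro v hv
  rw [pderiv_monomial]
  rcases Nat.eq_zero_or_pos (v i) with h | h
  · simpa [h] using isHomogeneous_zero _ _ _
  · apply isHomogeneous_monomial
    have hdeg : v.degree = m := by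
      by_contra hc
      exact mem_support_iff.mp hv (hp.coeff_eq_zero hc)
    have hv' := congrArg Finsupp.degree (aux_single_add v i h)
    rw [hdeg, aux_deg_add, aux_deg_single] at hv'
    omega

theorem aux_cancel_hom {R : Type*} [CommRing R] [IsDomain R] {σ : Type*}
    {p q : MvPolynomial σ R} {m k : ℕ}
    (hp : p.IsHomogeneous m) (hp0 : p ≠ 0) (hpq : (p * q).IsHomogeneous (m + k)) :
    q.IsHomogeneous k := by
  have hcomp : ∀ i, i ≠ k → homogeneousComponent i q = 0 := by
    intro i hik
    by_cases hle : i ≤ q.totalDegree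
    · have h1 : p * homogeneousComponent i q = homogeneousComponent (m + i) (p * q) := by
        conv_rhs => rw [← sum_homogeneousComponent q]
        rw [Finset.mul_sum, map_sum]
        rw [Finset.sum_congr rfl (fun j _ => homogeneousComponent_of_mem
          ((mem_homogeneousSubmodule _ _).mpr (hp.mul (homogeneousComponent_isHomogeneous j q))))]
        simp only [add_right_inj]
        rw [Finset.sum_ite_eq, if_pos (Finset.mem_range.mpr (by omega))]
      have h2 : homogeneousComponent (m + i) (p * q) = 0 := by
        rw [homogeneousComponent_of_mem ((mem_homogeneousSubmodule _ _).mpr hpq),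
          if_neg (by omega)]
      rw [h2] at h1
      rcases mul_eq_zero.mp h1 with h | h
      · exact absurd h hp0
      · exact h
    · exact homogeneousComponent_eq_zero _ q (by omega)
  have hq : q = ∑ i ∈ Finset.range (q.totalDegree + 1), homogeneousComponent i q :=
    (sum_homogeneousComponent q).symm
  rw [hq]
  apply IsHomogeneous.sum
  intro i _
  rcases eq_or_ne i k with rfl | hik
  · exact homogeneousComponent_isHomogeneous i q
  · rw [hcomp i hik]
    exact isHomogeneous_zero _ _ _

theorem aux_homComp_mul {R : Type*} [CommRing R] {σ : Type*}
    {c : MvPolynomial σ R} {k : ℕ} (hc : c.IsHomogeneous k) (q : MvPolynomial σ R) (d : ℕ) :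
    homogeneousComponent (k + d) (c * q) = c * homogeneousComponent d q := by
  classical
  ext μ
  rw [coeff_homogeneousComponent, coeff_mul, coeff_mul]
  split_ifs with h
  · apply Finset.sum_congr rfl
    rintro ⟨m1, m2⟩ hm
    rw [Finset.HasAntidiagonal.mem_antidiagonal] at hm
    rw [coeff_homogeneousComponent]
    by_cases hc1 : coeff m1 c = 0
    · simp [hc1]
    · have hd1 : m1.degree = k := by
        by_contra hcon
        exact hc1 (hc.coeff_eq_zero hcon)
      have hd2 : m2.degree = d := by
        have h3 := aux_deg_add m1 m2
        rw [hm] at h3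
        omega
      rw [if_pos hd2]
  · symm
    apply Finset.sum_eq_zero
    rintro ⟨m1, m2⟩ hm
    rw [Finset.HasAntidiagonal.mem_antidiagonal] at hm
    rw [coeff_homogeneousComponent]
    by_cases hc1 : coeff m1 c = 0
    · simp [hc1]
    · have hd1 : m1.degree = k := by
        by_contra hcon
        exact hc1 (hc.coeff_eq_zero hcon)
      have hmm : m2.degree ≠ d := by
        intro hd2
        apply h
        have h3 := aux_deg_add m1 m2
        rw [hm] at h3
        omega
      rw [if_neg hmm, mul_zero]

/-! Coefficient-wise homogeneity machinery. -/

variable {K : Type*} [CommRing K] {σ τ : Type*}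

/-- Apply `homogeneousComponent d` to every coefficient. -/
noncomputable def Td (d : ℕ) (p : MvPolynomial σ (MvPolynomial τ K)) :
    MvPolynomial σ (MvPolynomial τ K) :=
  ∑ m ∈ p.support, monomial m (homogeneousComponent d (coeff m p))

theorem coeff_Td (d : ℕ) (p : MvPolynomial σ (MvPolynomial τ K)) (m : σ →₀ ℕ) :
    coeff m (Td d p) = homogeneousComponent d (coeff m p) := by
  classical
  rw [Td, coeff_sum]
  rw [Finset.sum_congr rfl (fun m' _ => coeff_monomial m m' _)]
  rw [Finset.sum_ite_eq' p.support m (fun m' => homogeneousComponent d (coeff m' p))]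
  split_ifs with h
  · rfl
  · rw [notMem_support_iff.mp h, map_zero]

theorem P_mul {p q : MvPolynomial σ (MvPolynomial τ K)} {e e' : ℕ}
    (hp : ∀ m, (coeff m p).IsHomogeneous e) (hq : ∀ m, (coeff m q).IsHomogeneous e') :
    ∀ m, (coeff m (p * q)).IsHomogeneous (e + e') := by
  classical
  intro m
  rw [coeff_mul]
  apply IsHomogeneous.sum
  rintro ⟨m1, m2⟩ _
  exact (hp m1).mul (hq m2)

theorem P_pow {p : MvPolynomial σ (MvPolynomial τ K)} {e : ℕ}
    (hp : ∀ m, (coeff m p).IsHomogeneous e) (j : ℕ) :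
    ∀ m, (coeff m (p ^ j)).IsHomogeneous (e * j) := by
  classical
  induction j with
  | zero =>
      intro m
      rw [pow_zero, mul_zero]
      rw [show ((1 : MvPolynomial σ (MvPolynomial τ K))) = C 1 from rfl, coeff_C]
      split_ifs
      · exact isHomogeneous_one _ _
      · exact isHomogeneous_zero _ _ _
  | succ j ih =>
      intro m
      rw [pow_succ]
      have := P_mul ih hp m
      rwa [show e * j + e = e * (j + 1) by ring] at this

theorem P_prod {ι : Type*} (s : Finset ι) (g : ι → MvPolynomial σ (MvPolynomial τ K)) (eg : ι → ℕ)
    (h : ∀ i ∈ s, ∀ m, (coeff m (g i)).IsHomogeneous (eg i)) :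
    ∀ m, (coeff m (∏ i ∈ s, g i)).IsHomogeneous (∑ i ∈ s, eg i) := by
  classical
  induction s using Finset.induction_on with
  | empty =>
      intro m
      simp only [Finset.prod_empty, Finset.sum_empty]
      rw [show ((1 : MvPolynomial σ (MvPolynomial τ K))) = C 1 from rfl, coeff_C]
      split_ifs
      · exact isHomogeneous_one _ _
      · exact isHomogeneous_zero _ _ _
  | insert _ _ hnotmem ih =>
      rename_i a s'
      rw [Finset.prod_insert hnotmem, Finset.sum_insert hnotmem]
      exact P_mul (h a (Finset.mem_insert_self a s'))
        (ih fun i hi m => h i (Finset.mem_insert_of_mem hi) m)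

theorem P_pderiv {p : MvPolynomial σ (MvPolynomial τ K)} {e : ℕ} [DecidableEq σ]
    (hp : ∀ m, (coeff m p).IsHomogeneous e) (i : σ) :
    ∀ m, (coeff m (pderiv i p)).IsHomogeneous e := by
  intro m
  conv_lhs => rw [p.as_sum]
  rw [map_sum, coeff_sum]
  apply IsHomogeneous.sum
  intro v _
  rw [pderiv_monomial, coeff_monomial]
  split_ifs
  · have hcast : ((v i : MvPolynomial τ K)) = C ((v i : K)) := by
      rw [map_natCast C]
    rw [hcast]
    simpa using (hp v).mul (isHomogeneous_C _ ((v i : K)))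
  · exact isHomogeneous_zero _ _ _

theorem P_aeval {p : MvPolynomial σ (MvPolynomial τ K)} {e c N : ℕ}
    (hhom : p.IsHomogeneous N) (hp : ∀ m, (coeff m p).IsHomogeneous e)
    (w : σ → MvPolynomial σ (MvPolynomial τ K))
    (hw : ∀ i m, (coeff m (w i)).IsHomogeneous c) :
    ∀ m, (coeff m (aeval w p)).IsHomogeneous (e + c * N) := by
  classical
  intro m
  conv_lhs => rw [p.as_sum]
  rw [map_sum, coeff_sum]
  apply IsHomogeneous.sum
  intro v hv
  rw [aeval_monomial, algebraMap_eq]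
  have hdeg : v.degree = N := by
    by_contra h
    exact mem_support_iff.mp hv (hhom.coeff_eq_zero h)
  have hC : ∀ m', (coeff m' (C (coeff v p) : MvPolynomial σ (MvPolynomial τ K))).IsHomogeneous e := by
    intro m'
    rw [coeff_C]
    split_ifs
    · exact hp v
    · exact isHomogeneous_zero _ _ _
  have hprod : ∀ m', (coeff m' (v.prod fun i k => w i ^ k)).IsHomogeneous (c * N) := by
    have := P_prod v.support (fun i => w i ^ v i) (fun i => c * v i)
      (fun i _ => P_pow (hw i) (v i))
    intro m'
    have h2 := this m'
    rwa [show (∑ i ∈ v.support, c * v i) = c * v.degree by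
        rw [Finsupp.degree_apply, Finset.mul_sum], hdeg] at h2
  exact P_mul hC hprod m

end Aux

/-- For the generic binary form `f = Σ a_i x^{n-i} z^i` of degree `n ≥ 3`
over `R = ℚ[a₀,…,aₙ]`, `n·f` divides `F_f` and the quotient `G_f = F_f/(n·f)` is homogeneous
of degree `(n-1)(n-2)` in `(x,z)`, with every coefficient homogeneous of degree `n-1`
in `a₀, …, aₙ`. -/
theorem stmt5 (n : ℕ) (hn : 3 ≤ n)
    (f : MvPolynomial (Fin 2) (MvPolynomial (Fin (n + 1)) ℚ))
    (hf : f = ∑ i : Fin (n + 1),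
      C (X i) * X 0 ^ (n - (i : ℕ)) * X 1 ^ (i : ℕ)) :
    ∃ G : MvPolynomial (Fin 2) (MvPolynomial (Fin (n + 1)) ℚ),
      Fcov f = (n : MvPolynomial (Fin 2) (MvPolynomial (Fin (n + 1)) ℚ)) * f * G ∧
      G.IsHomogeneous ((n - 1) * (n - 2)) ∧
      ∀ d : Fin 2 →₀ ℕ, (G.coeff d).IsHomogeneous (n - 1) := by
  classical
  -- monomial form of f
  have hfm : f = ∑ i : Fin (n + 1),
      monomial (Finsupp.single (0 : Fin 2) (n - (i : ℕ)) + Finsupp.single 1 (i : ℕ))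
        (X i : MvPolynomial (Fin (n + 1)) ℚ) := by
    rw [hf]
    refine Finset.sum_congr rfl fun i _ => ?_
    rw [C_mul_X_pow_eq_monomial, X_pow_eq_monomial, monomial_mul, mul_one]
  have hfhom : f.IsHomogeneous n := by
    rw [hfm]
    apply IsHomogeneous.sum
    intro i _
    apply isHomogeneous_monomial
    rw [aux_deg_add, aux_deg_single, aux_deg_single]
    have hle : (i : ℕ) ≤ n := Nat.lt_succ_iff.mp i.isLt
    omega
  have hfx : (pderiv 0 f).IsHomogeneous (n - 1) := aux_pderiv_hom hfhom 0
  have hfz : (pderiv 1 f).IsHomogeneous (n - 1) := aux_pderiv_hom hfhom 1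
  -- Euler identity
  have euler : X 0 * pderiv 0 f + X 1 * pderiv 1 f
      = (n : MvPolynomial (Fin 2) (MvPolynomial (Fin (n + 1)) ℚ)) * f := by
    conv_lhs => rw [hfm]
    conv_rhs => rw [hfm]
    rw [map_sum (pderiv 0), map_sum (pderiv 1), Finset.mul_sum, Finset.mul_sum, Finset.mul_sum,
      ← Finset.sum_add_distrib]
    refine Finset.sum_congr rfl fun i _ => ?_
    rw [pderiv_monomial, pderiv_monomial, aux_X_mul_pd 0, aux_X_mul_pd 1, ← add_smul]
    have h0 : (Finsupp.single (0 : Fin 2) (n - (i : ℕ)) + Finsupp.single 1 (i : ℕ)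
        : Fin 2 →₀ ℕ) 0 = n - (i : ℕ) := by
      rw [Finsupp.add_apply, Finsupp.single_eq_same, Finsupp.single_eq_of_ne (by decide),
        add_zero]
    have h1 : (Finsupp.single (0 : Fin 2) (n - (i : ℕ)) + Finsupp.single 1 (i : ℕ)
        : Fin 2 →₀ ℕ) 1 = (i : ℕ) := by
      rw [Finsupp.add_apply, Finsupp.single_eq_of_ne (by decide), Finsupp.single_eq_same,
        zero_add]
    rw [h0, h1]
    have hle : (i : ℕ) ≤ n := Nat.lt_succ_iff.mp i.isLt
    rw [show n - (i : ℕ) + (i : ℕ) = n by omega, nsmul_eq_mul]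
  -- the distinguished coefficient of f
  have hcoefff : coeff (Finsupp.single (0 : Fin 2) n) f = X 0 := by
    rw [hfm, coeff_sum]
    rw [Finset.sum_eq_single (0 : Fin (n + 1))]
    · rw [coeff_monomial, if_pos]
      simp
    · intro i _ hi
      rw [coeff_monomial, if_neg]
      intro hcon
      have h2 := DFunLike.congr_fun hcon (1 : Fin 2)
      rw [Finsupp.add_apply, Finsupp.single_eq_of_ne (by decide), Finsupp.single_eq_same,
        zero_add, Finsupp.single_eq_of_ne (by decide)] at h2
      exact hi (Fin.ext (by simpa using h2))
    · intro h
      exact absurd (Finset.mem_univ _) h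
  have hnQ : ((n : ℚ)) ≠ 0 := Nat.cast_ne_zero.mpr (by omega)
  have hnR : ((n : MvPolynomial (Fin (n + 1)) ℚ)) ≠ 0 := by
    rw [show ((n : MvPolynomial (Fin (n + 1)) ℚ)) = C ((n : ℚ)) from (map_natCast C n).symm]
    intro h
    exact hnQ (C_eq_zero.mp h)
  have hnf_ne : (n : MvPolynomial (Fin 2) (MvPolynomial (Fin (n + 1)) ℚ)) * f ≠ 0 := by
    intro hcon
    have h2 := congrArg (coeff (Finsupp.single (0 : Fin 2) n)) hcon
    rw [show ((n : MvPolynomial (Fin 2) (MvPolynomial (Fin (n + 1)) ℚ)))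
        = C ((n : MvPolynomial (Fin (n + 1)) ℚ)) from (map_natCast C n).symm, coeff_C_mul,
      hcoefff, coeff_zero] at h2
    exact (mul_ne_zero hnR (X_ne_zero 0)) h2
  -- substitution tuples
  set w : Fin 2 → MvPolynomial (Fin 2) (MvPolynomial (Fin (n + 1)) ℚ) :=
    ![-(pderiv 1 f), pderiv 0 f] with hwdef
  have hw0 : w 0 = -(pderiv 1 f) := rfl
  have hw1 : w 1 = pderiv 0 f := rfl
  have hwhom : ∀ i : Fin 2, (w i).IsHomogeneous (n - 1) := by
    intro i
    fin_cases i
    · show (w 0).IsHomogeneous (n - 1)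
      rw [hw0]
      exact hfz.neg
    · show (w 1).IsHomogeneous (n - 1)
      rw [hw1]
      exact hfx
  have hFcov : Fcov f = X 0 * aeval w (pderiv 0 f) + X 1 * aeval w (pderiv 1 f) := rfl
  -- step 1 : scaling by X 1
  have hstep1 : (X 1 : MvPolynomial (Fin 2) (MvPolynomial (Fin (n + 1)) ℚ)) ^ (n - 1) * Fcov f
      = X 0 * aeval (fun i => X 1 * w i) (pderiv 0 f)
        + X 1 * aeval (fun i => X 1 * w i) (pderiv 1 f) := by
    rw [hFcov, aux_scale (X 1) w hfx, aux_scale (X 1) w hfz]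
    ring
  -- step 2 : scaling by f_x on the other side
  have hstep2 : X 0 * aeval (fun i => pderiv 0 f * X i) (pderiv 0 f)
        + X 1 * aeval (fun i => pderiv 0 f * X i) (pderiv 1 f)
      = (pderiv 0 f) ^ (n - 1)
        * ((n : MvPolynomial (Fin 2) (MvPolynomial (Fin (n + 1)) ℚ)) * f) := by
    rw [aux_scale (pderiv 0 f) X hfx, aux_scale (pderiv 0 f) X hfz, aeval_X_left_apply,
      aeval_X_left_apply, ← euler]
    ring
  -- the substitution tuples differ by a multiple of n·f
  have hdvd_i : ∀ i : Fin 2, (n : MvPolynomial (Fin 2) (MvPolynomial (Fin (n + 1)) ℚ)) * f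
      ∣ (fun i => X 1 * w i) i - (fun i => pderiv 0 f * X i) i := by
    intro i
    fin_cases i
    · show (n : MvPolynomial (Fin 2) (MvPolynomial (Fin (n + 1)) ℚ)) * f
        ∣ X 1 * w 0 - pderiv 0 f * X 0
      rw [hw0]
      have e : X 1 * -(pderiv 1 f) - pderiv 0 f * X 0
          = -(X 0 * pderiv 0 f + X 1 * pderiv 1 f) := by ring
      rw [e, euler]
      exact ⟨-1, by ring⟩
    · show (n : MvPolynomial (Fin 2) (MvPolynomial (Fin (n + 1)) ℚ)) * f
        ∣ X 1 * w 1 - pderiv 0 f * X 1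
      rw [hw1, mul_comm (X 1 : MvPolynomial (Fin 2) (MvPolynomial (Fin (n + 1)) ℚ))
        (pderiv 0 f), sub_self]
      exact dvd_zero _
  have hdvd : (n : MvPolynomial (Fin 2) (MvPolynomial (Fin (n + 1)) ℚ)) * f
      ∣ (X 1 : MvPolynomial (Fin 2) (MvPolynomial (Fin (n + 1)) ℚ)) ^ (n - 1) * Fcov f := by
    have expand : (X 1 : MvPolynomial (Fin 2) (MvPolynomial (Fin (n + 1)) ℚ)) ^ (n - 1) * Fcov f
        = X 0 * (aeval (fun i => X 1 * w i) (pderiv 0 f)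
              - aeval (fun i => pderiv 0 f * X i) (pderiv 0 f))
          + X 1 * (aeval (fun i => X 1 * w i) (pderiv 1 f)
              - aeval (fun i => pderiv 0 f * X i) (pderiv 1 f))
          + (pderiv 0 f) ^ (n - 1)
            * ((n : MvPolynomial (Fin 2) (MvPolynomial (Fin (n + 1)) ℚ)) * f) := by
      rw [hstep1, ← hstep2]
      ring
    rw [expand]
    exact dvd_add (dvd_add ((aux_dvd _ _ _ hdvd_i (pderiv 0 f)).mul_left _)
      ((aux_dvd _ _ _ hdvd_i (pderiv 1 f)).mul_left _)) (dvd_mul_left _ _)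
  obtain ⟨Cc, hCc⟩ := hdvd
  -- X 1 is prime
  have hXprime : Prime ((X 1 : MvPolynomial (Fin 2) (MvPolynomial (Fin (n + 1)) ℚ))) := by
    have h := MulEquiv.prime_iff ((renameEquiv (MvPolynomial (Fin (n + 1)) ℚ)
        (Equiv.swap (0 : Fin 2) 1)).trans
        (finSuccEquiv (MvPolynomial (Fin (n + 1)) ℚ) 1)).toMulEquiv
        (p := (X 1 : MvPolynomial (Fin 2) (MvPolynomial (Fin (n + 1)) ℚ)))
    rw [← h]
    show Prime ((finSuccEquiv (MvPolynomial (Fin (n + 1)) ℚ) 1)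
      ((renameEquiv (MvPolynomial (Fin (n + 1)) ℚ) (Equiv.swap (0 : Fin 2) 1)) (X 1)))
    rw [renameEquiv_apply, rename_X, Equiv.swap_apply_right, finSuccEquiv_X_zero]
    exact Polynomial.prime_X
  have hnotdvd : ¬ (X 1 : MvPolynomial (Fin 2) (MvPolynomial (Fin (n + 1)) ℚ))
      ∣ (n : MvPolynomial (Fin 2) (MvPolynomial (Fin (n + 1)) ℚ)) * f := by
    intro hd
    obtain ⟨q, hq⟩ := hd
    have h2 := congrArg (coeff (Finsupp.single (0 : Fin 2) n)) hq
    rw [show ((n : MvPolynomial (Fin 2) (MvPolynomial (Fin (n + 1)) ℚ)))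
        = C ((n : MvPolynomial (Fin (n + 1)) ℚ)) from (map_natCast C n).symm, coeff_C_mul,
      hcoefff, coeff_mul] at h2
    have h3 : ∀ x ∈ Finset.HasAntidiagonal.antidiagonal (Finsupp.single (0 : Fin 2) n),
        coeff x.1 (X 1 : MvPolynomial (Fin 2) (MvPolynomial (Fin (n + 1)) ℚ))
          * coeff x.2 q = 0 := by
      rintro ⟨m1, m2⟩ hm
      rw [Finset.HasAntidiagonal.mem_antidiagonal] at hm
      rw [coeff_X']
      split_ifs with h4
      · exfalso
        have h5 := DFunLike.congr_fun hm (1 : Fin 2)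
        rw [← h4] at h5
        rw [Finsupp.add_apply, Finsupp.single_eq_same, Finsupp.single_eq_of_ne (by decide)] at h5
        omega
      · rw [zero_mul]
    rw [Finset.sum_eq_zero h3] at h2
    exact (mul_ne_zero hnR (X_ne_zero 0)) h2
  have hpow : (X 1 : MvPolynomial (Fin 2) (MvPolynomial (Fin (n + 1)) ℚ)) ^ (n - 1) ∣ Cc := by
    apply hXprime.pow_dvd_of_dvd_mul_left (n - 1) hnotdvd
    rw [← hCc]
    exact dvd_mul_right _ _
  obtain ⟨G, hG⟩ := hpow
  have hFG : Fcov f = (n : MvPolynomial (Fin 2) (MvPolynomial (Fin (n + 1)) ℚ)) * f * G := by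
    have h2 : (X 1 : MvPolynomial (Fin 2) (MvPolynomial (Fin (n + 1)) ℚ)) ^ (n - 1) * Fcov f
        = (X 1 : MvPolynomial (Fin 2) (MvPolynomial (Fin (n + 1)) ℚ)) ^ (n - 1)
          * ((n : MvPolynomial (Fin 2) (MvPolynomial (Fin (n + 1)) ℚ)) * f * G) := by
      rw [hCc, hG]
      ring
    exact mul_left_cancel₀ (pow_ne_zero _ (X_ne_zero 1)) h2
  -- homogeneity in x, z
  have hnfhom : ((n : MvPolynomial (Fin 2) (MvPolynomial (Fin (n + 1)) ℚ)) * f).IsHomogeneous n := by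
    rw [show ((n : MvPolynomial (Fin 2) (MvPolynomial (Fin (n + 1)) ℚ)))
        = C ((n : MvPolynomial (Fin (n + 1)) ℚ)) from (map_natCast C n).symm]
    have h2 := (isHomogeneous_C (Fin 2) ((n : MvPolynomial (Fin (n + 1)) ℚ))).mul hfhom
    rwa [zero_add] at h2
  have hFhom : (Fcov f).IsHomogeneous (n + (n - 1) * (n - 2)) := by
    have h1 : (aeval w (pderiv 0 f)).IsHomogeneous ((n - 1) * (n - 1)) :=
      hfx.aeval w hwhom
    have h2 : (aeval w (pderiv 1 f)).IsHomogeneous ((n - 1) * (n - 1)) :=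
      hfz.aeval w hwhom
    have h3 := ((isHomogeneous_X _ (0 : Fin 2)).mul h1).add
      ((isHomogeneous_X _ (1 : Fin 2)).mul h2)
    rw [← hFcov] at h3
    have harith : 1 + (n - 1) * (n - 1) = n + (n - 1) * (n - 2) := by
      obtain ⟨k, rfl⟩ : ∃ k, n = k + 3 := ⟨n - 3, by omega⟩
      have e1 : k + 3 - 1 = k + 2 := by omega
      have e2 : k + 3 - 2 = k + 1 := by omega
      rw [e1, e2]
      ring
    rwa [harith] at h3
  have hGhom : G.IsHomogeneous ((n - 1) * (n - 2)) :=
    aux_cancel_hom hnfhom hnf_ne (by rw [← hFG]; exact hFhom)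
  -- coefficient-wise homogeneity
  have hPf : ∀ m, (coeff m f).IsHomogeneous 1 := by
    intro m
    rw [hfm, coeff_sum]
    apply IsHomogeneous.sum
    intro i _
    rw [coeff_monomial]
    split_ifs
    · exact isHomogeneous_X _ _
    · exact isHomogeneous_zero _ _ _
  have hPnf : ∀ m, (coeff m
      ((n : MvPolynomial (Fin 2) (MvPolynomial (Fin (n + 1)) ℚ)) * f)).IsHomogeneous 1 := by
    intro m
    rw [show ((n : MvPolynomial (Fin 2) (MvPolynomial (Fin (n + 1)) ℚ)))
        = C ((n : MvPolynomial (Fin (n + 1)) ℚ)) from (map_natCast C n).symm, coeff_C_mul,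
      show ((n : MvPolynomial (Fin (n + 1)) ℚ)) = C ((n : ℚ)) from (map_natCast C n).symm]
    have h2 := (isHomogeneous_C (Fin (n + 1)) ((n : ℚ))).mul (hPf m)
    rwa [zero_add] at h2
  have hPfx : ∀ m, (coeff m (pderiv 0 f)).IsHomogeneous 1 := P_pderiv hPf 0
  have hPfz : ∀ m, (coeff m (pderiv 1 f)).IsHomogeneous 1 := P_pderiv hPf 1
  have hPw : ∀ i : Fin 2, ∀ m, (coeff m (w i)).IsHomogeneous 1 := by
    intro i
    fin_cases i
    · show ∀ m, (coeff m (w 0)).IsHomogeneous 1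
      rw [hw0]
      intro m
      rw [coeff_neg]
      exact (hPfz m).neg
    · show ∀ m, (coeff m (w 1)).IsHomogeneous 1
      rw [hw1]
      exact hPfx
  have hPF : ∀ m, (coeff m (Fcov f)).IsHomogeneous n := by
    intro m
    have hx0 : ∀ m', (coeff m'
        (X 0 : MvPolynomial (Fin 2) (MvPolynomial (Fin (n + 1)) ℚ))).IsHomogeneous 0 := by
      intro m'
      rw [coeff_X']
      split_ifs
      · exact isHomogeneous_one _ _
      · exact isHomogeneous_zero _ _ _
    have hx1 : ∀ m', (coeff m'
        (X 1 : MvPolynomial (Fin 2) (MvPolynomial (Fin (n + 1)) ℚ))).IsHomogeneous 0 := by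
      intro m'
      rw [coeff_X']
      split_ifs
      · exact isHomogeneous_one _ _
      · exact isHomogeneous_zero _ _ _
    have ha0 := P_aeval hfx hPfx w hPw
    have ha1 := P_aeval hfz hPfz w hPw
    have h1 := P_mul hx0 ha0 m
    have h2 := P_mul hx1 ha1 m
    have h3 : (coeff m (Fcov f)).IsHomogeneous (0 + (1 + 1 * (n - 1))) := by
      rw [hFcov, coeff_add]
      exact h1.add h2
    rwa [show 0 + (1 + 1 * (n - 1)) = n by omega] at h3
  have hTdG : ∀ d, d ≠ n - 1 → Td d G = 0 := by
    intro d hd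
    have hmul : ((n : MvPolynomial (Fin 2) (MvPolynomial (Fin (n + 1)) ℚ)) * f) * Td d G = 0 := by
      ext μ
      rw [coeff_mul, coeff_zero]
      have hterm : ∀ x ∈ Finset.HasAntidiagonal.antidiagonal μ,
          coeff x.1 ((n : MvPolynomial (Fin 2) (MvPolynomial (Fin (n + 1)) ℚ)) * f)
              * coeff x.2 (Td d G)
            = homogeneousComponent (1 + d)
              (coeff x.1 ((n : MvPolynomial (Fin 2) (MvPolynomial (Fin (n + 1)) ℚ)) * f)
                * coeff x.2 G) := by
        intro x _
        rw [coeff_Td, aux_homComp_mul (hPnf x.1)]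
      rw [Finset.sum_congr rfl hterm, ← map_sum, ← coeff_mul, ← hFG]
      rw [homogeneousComponent_of_mem ((mem_homogeneousSubmodule _ _).mpr (hPF μ)),
        if_neg (by omega)]
    rcases mul_eq_zero.mp hmul with h | h
    · exact absurd h hnf_ne
    · exact h
  refine ⟨G, hFG, hGhom, ?_⟩
  intro d
  have hsum : coeff d G = ∑ i ∈ Finset.range ((coeff d G).totalDegree + 1),
      homogeneousComponent i (coeff d G) := (sum_homogeneousComponent _).symm
  rw [hsum]
  apply IsHomogeneous.sum
  intro i _
  rcases eq_or_ne i (n - 1) with rfl | hi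
  · exact homogeneousComponent_isHomogeneous _ _
  · rw [← coeff_Td, hTdG i hi, coeff_zero]
    exact isHomogeneous_zero _ _ _
end

section
/- Fix an integer n ≥ 3, let R = ℚ[a₀, …, aₙ], and let f = Σ_{i=0}^n a_i x^{n−i} z^i ∈ R[x,z] be the generic binary form of degree n, with G_f = F_f/(n·f) its associated covariant, written G_f = Σ_{i=0}^d g_i x^{d−i} z^i where d = (n−1)(n−2) and g_i ∈ R. Let σ be the ℚ-algebra automorphism of R determined by σ(a_i) = a_{n−i} for all i (so that applying σ to the coefficients of f gives f^σ(x,z) = f(z,x)). Then G_{f^σ}(x,z) = (−1)^{n−1} · G_f(z,x); equivalently, σ(g_i) = (−1)^{n−1} · g_{d−i} for all i = 0, …, d. -/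
open MvPolynomial

private lemma aux_bind₁_neg {R σ τ : Type*} [CommRing R] {p : MvPolynomial σ R} {m : ℕ}
    (hp : p.IsHomogeneous m) (w : σ → MvPolynomial τ R) :
    bind₁ (fun j => -(w j)) p = (-1) ^ m * bind₁ w p := by
  conv_lhs => rw [p.as_sum]
  conv_rhs => rw [p.as_sum]
  rw [map_sum, map_sum, Finset.mul_sum]
  refine Finset.sum_congr rfl fun d hd => ?_
  rw [bind₁_monomial, bind₁_monomial]
  have hdeg : ∑ i ∈ d.support, d i = m := by
    have h := hp (MvPolynomial.mem_support_iff.mp hd)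
    rw [← h, Finsupp.weight_apply]
    simp [Finsupp.sum]
  calc C (coeff d p) * ∏ i ∈ d.support, (-(w i)) ^ d i
      = C (coeff d p) * ∏ i ∈ d.support, ((-1) ^ d i * (w i) ^ d i) := by
        congr 1
        exact Finset.prod_congr rfl fun i _ => by rw [neg_pow]
    _ = (-1) ^ m * (C (coeff d p) * ∏ i ∈ d.support, (w i) ^ d i) := by
        rw [Finset.prod_mul_distrib, Finset.prod_pow_eq_pow_sum, hdeg]; ring

private lemma aux_pderiv_homog {R σ : Type*} [CommRing R] {p : MvPolynomial σ R} {m : ℕ}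
    (hp : p.IsHomogeneous m) (j : σ) : (pderiv j p).IsHomogeneous (m - 1) := by
  classical
  rw [p.as_sum, map_sum]
  apply IsHomogeneous.sum
  intro d hd
  rw [pderiv_monomial]
  rcases Nat.eq_zero_or_pos (d j) with h | h
  · rw [h]
    simp only [Nat.cast_zero, mul_zero]
    rw [show (monomial (d - Finsupp.single j 1) (0 : R)) = 0 from map_zero _]
    exact isHomogeneous_zero _ _ _
  · apply isHomogeneous_monomial
    have hdm : Finsupp.weight 1 d = m := hp (MvPolynomial.mem_support_iff.mp hd)
    have hle : Finsupp.single j 1 ≤ d := by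
      rw [Finsupp.single_le_iff]
      omega
    have hadd : (d - Finsupp.single j 1) + Finsupp.single j 1 = d := tsub_add_cancel_of_le hle
    have hws : Finsupp.weight (1 : σ → ℕ) (Finsupp.single j 1) = 1 := by
      rw [Finsupp.weight_apply, Finsupp.sum_single_index] <;> simp
    have hw2 : Finsupp.weight (1 : σ → ℕ) (d - Finsupp.single j 1) + 1 = m := by
      have h3 := congrArg (Finsupp.weight (1 : σ → ℕ)) hadd
      rw [map_add, hws] at h3
      rw [h3, hdm]
    rw [Finsupp.degree_eq_weight_one]
    have hw3 : Finsupp.weight (fun _ => 1 : σ → ℕ) (d - Finsupp.single j 1) + 1 = m := hw2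
    omega

set_option maxHeartbeats 1000000

/-- Let `f = Σ a_i x^{n-i} z^i` be the generic binary form of degree `n ≥ 3`
over `R = ℚ[a₀,…,aₙ]` and `σ` the ℚ-algebra automorphism of `R` with `σ(a_i) = a_{n-i}`
(realized as `rename Fin.rev`).  If `G = G_f` (i.e. `F_f = n·f·G`) and `G' = G_{f^σ}`
(i.e. `F_{f^σ} = n·f^σ·G'`, where `f^σ` is `f` with `σ` applied to its coefficients), then
`G_{f^σ}(x,z) = (-1)^{n-1}·G_f(z,x)`; equivalently, with `d = (n-1)(n-2)` and
`g_i` the coefficient of `x^{d-i} z^i` in `G_f`, one has `σ(g_i) = (-1)^{n-1} g_{d-i}`. -/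
theorem stmt7 (n : ℕ) (hn : 3 ≤ n)
    (f : MvPolynomial (Fin 2) (MvPolynomial (Fin (n + 1)) ℚ))
    (hf : f = ∑ i : Fin (n + 1), C (X i) * X 0 ^ (n - (i : ℕ)) * X 1 ^ (i : ℕ))
    (G G' : MvPolynomial (Fin 2) (MvPolynomial (Fin (n + 1)) ℚ))
    (hG : Fcov f = (n : MvPolynomial (Fin 2) (MvPolynomial (Fin (n + 1)) ℚ)) * f * G)
    (hGhom : G.IsHomogeneous ((n - 1) * (n - 2)))
    (hG' : Fcov (MvPolynomial.map
          (rename (Fin.rev : Fin (n + 1) → Fin (n + 1))).toRingHom f)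
        = (n : MvPolynomial (Fin 2) (MvPolynomial (Fin (n + 1)) ℚ)) *
            MvPolynomial.map (rename (Fin.rev : Fin (n + 1) → Fin (n + 1))).toRingHom f * G') :
    G' = (-1) ^ (n - 1) * rename ![(1 : Fin 2), 0] G ∧
    ∀ i ≤ (n - 1) * (n - 2),
      rename (Fin.rev : Fin (n + 1) → Fin (n + 1))
          (G.coeff (Finsupp.single 0 ((n - 1) * (n - 2) - i) + Finsupp.single 1 i))
        = (-1) ^ (n - 1) *
            G.coeff (Finsupp.single 0 i + Finsupp.single 1 ((n - 1) * (n - 2) - i)) := by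
  classical
  set S2 := MvPolynomial (Fin (n + 1)) ℚ with hS2
  set g : Fin 2 → Fin 2 := ![1, 0] with hgdef
  set σ' : MvPolynomial (Fin (n + 1)) ℚ →+* MvPolynomial (Fin (n + 1)) ℚ :=
    (rename (Fin.rev : Fin (n + 1) → Fin (n + 1))).toRingHom with hσ'
  have hg_inj : Function.Injective g := by rw [hgdef]; decide
  have hg0 : g 0 = 1 := rfl
  have hg1 : g 1 = 0 := rfl
  -- f is homogeneous of degree n
  have hfhom : f.IsHomogeneous n := by
    rw [hf]
    apply IsHomogeneous.sum
    intro i _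
    have hc1 : (C (X i) : MvPolynomial (Fin 2) (MvPolynomial (Fin (n + 1)) ℚ)).IsHomogeneous 0 :=
      isHomogeneous_C _ _
    have hx0 : ((X 0 : MvPolynomial (Fin 2) (MvPolynomial (Fin (n + 1)) ℚ)) ^
        (n - (i : ℕ))).IsHomogeneous (n - (i : ℕ)) := isHomogeneous_X_pow _ _
    have hx1 : ((X 1 : MvPolynomial (Fin 2) (MvPolynomial (Fin (n + 1)) ℚ)) ^
        (i : ℕ)).IsHomogeneous (i : ℕ) := isHomogeneous_X_pow _ _
    have h1 := (hc1.mul hx0).mul hx1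
    have hi : (i : ℕ) ≤ n := Fin.is_le i
    have h2 : 0 + (n - (i : ℕ)) + (i : ℕ) = n := by omega
    rwa [h2] at h1
  have hp0 : (pderiv 0 f).IsHomogeneous (n - 1) := aux_pderiv_homog hfhom 0
  have hp1 : (pderiv 1 f).IsHomogeneous (n - 1) := aux_pderiv_homog hfhom 1
  -- map σ f = rename swap f
  have hmap : MvPolynomial.map σ' f = rename g f := by
    rw [hf, map_sum, map_sum]
    refine Fintype.sum_equiv Fin.revPerm _ _ fun i => ?_
    have hval : ((Fin.rev i : Fin (n + 1)) : ℕ) = n - (i : ℕ) := by rw [Fin.val_rev]; omega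
    have hi : (i : ℕ) ≤ n := Fin.is_le i
    simp only [map_mul, map_pow, MvPolynomial.map_C, MvPolynomial.map_X, rename_C, rename_X,
      Fin.revPerm_apply, hσ', AlgHom.toRingHom_eq_coe, RingHom.coe_coe, hg0, hg1]
    rw [hval, Nat.sub_sub_self hi]
    ring
  -- derivative swap identities
  have e0 : pderiv 0 (rename g f) = rename g (pderiv 1 f) := by
    have h := pderiv_rename hg_inj 1 f
    rwa [hg1] at h
  have e1 : pderiv 1 (rename g f) = rename g (pderiv 0 f) := by
    have h := pderiv_rename hg_inj 0 f
    rwa [hg0] at h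
  set w : Fin 2 → MvPolynomial (Fin 2) S2 :=
    ![-(rename g (pderiv 1 f)), rename g (pderiv 0 f)] with hw
  -- Fcov of renamed f
  have hbneg : ∀ h : MvPolynomial (Fin 2) S2, h.IsHomogeneous (n - 1) →
      bind₁ ![-(rename g (pderiv 0 f)), rename g (pderiv 1 f)] (rename g h)
        = (-1) ^ (n - 1) * bind₁ w h := by
    intro h hh
    rw [bind₁_rename]
    have hcomp : ((![-(rename g (pderiv 0 f)), rename g (pderiv 1 f)] :
        Fin 2 → MvPolynomial (Fin 2) S2) ∘ g) = fun j => -(w j) := by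
      funext j
      fin_cases j <;>
        simp [hw, hgdef, Function.comp]
    rw [hcomp, aux_bind₁_neg hh w]
  have hwcomp : (fun i => rename g
      ((![-(pderiv 1 f), pderiv 0 f] : Fin 2 → MvPolynomial (Fin 2) S2) i)) = w := by
    funext j
    fin_cases j <;> simp [hw]
  have hrb : ∀ h : MvPolynomial (Fin 2) S2,
      rename g (bind₁ ![-(pderiv 1 f), pderiv 0 f] h) = bind₁ w h := by
    intro h
    rw [rename_bind₁, hwcomp]
  have hrhs : rename g (Fcov f)
      = X 1 * bind₁ w (pderiv 0 f) + X 0 * bind₁ w (pderiv 1 f) := by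
    simp only [Fcov, map_add, map_mul, hrb, rename_X, hg0, hg1]
  have hswap : Fcov (rename g f)
      = (-1) ^ (n - 1) * rename g (Fcov f) := by
    calc Fcov (rename g f)
        = X 0 * ((-1) ^ (n - 1) * bind₁ w (pderiv 1 f))
            + X 1 * ((-1) ^ (n - 1) * bind₁ w (pderiv 0 f)) := by
          simp only [Fcov, e0, e1]
          rw [hbneg _ hp1, hbneg _ hp0]
      _ = (-1) ^ (n - 1) * rename g (Fcov f) := by rw [hrhs]; ring
  -- Fcov commutes with map
  have hFmap : Fcov (MvPolynomial.map σ' f) = MvPolynomial.map σ' (Fcov f) := by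
    have hv : (fun i => MvPolynomial.map σ'
        ((![-(pderiv 1 f), pderiv 0 f] : Fin 2 → MvPolynomial (Fin 2) S2) i))
        = ![-(pderiv 1 (MvPolynomial.map σ' f)), pderiv 0 (MvPolynomial.map σ' f)] := by
      funext j
      fin_cases j <;> simp [pderiv_map]
    simp only [Fcov, map_add, map_mul, map_bind₁, MvPolynomial.map_X, hv, pderiv_map]
  -- f ≠ 0
  have f_ne : f ≠ 0 := by
    intro h0
    have h1 : (eval (![1, 0] : Fin 2 → S2)) f = 0 := by rw [h0]; simp
    rw [hf] at h1
    simp only [map_sum, eval_mul, eval_pow, eval_C, eval_X, Matrix.cons_val_zero,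
      Matrix.cons_val_one, Matrix.head_cons, one_pow, mul_one, one_mul] at h1
    rw [Finset.sum_eq_single (0 : Fin (n + 1))] at h1
    · simp only [Fin.val_zero, pow_zero, mul_one] at h1
      exact X_ne_zero _ h1
    · intro b _ hb
      rw [zero_pow (fun h => hb (Fin.ext (h.trans (by simp)))), mul_zero]
    · simp
  have hne : ((n : MvPolynomial (Fin 2) S2) * MvPolynomial.map σ' f) ≠ 0 := by
    apply mul_ne_zero
    · exact_mod_cast Nat.cast_ne_zero.mpr (show n ≠ 0 by omega)
    · rw [hmap]
      intro h0
      exact f_ne (rename_injective _ hg_inj (by simpa using h0))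
  -- the two key identities
  have key1 : (n : MvPolynomial (Fin 2) S2) * MvPolynomial.map σ' f * G'
      = (n : MvPolynomial (Fin 2) S2) * MvPolynomial.map σ' f *
          ((-1) ^ (n - 1) * rename g G) := by
    rw [← hG', hmap, hswap, hG, map_mul, map_mul, map_natCast]
    ring
  have key2 : (n : MvPolynomial (Fin 2) S2) * MvPolynomial.map σ' f * G'
      = (n : MvPolynomial (Fin 2) S2) * MvPolynomial.map σ' f *
          (MvPolynomial.map σ' G) := by
    rw [← hG', hFmap, hG, map_mul, map_mul, map_natCast]
  have hG'eq : G' = (-1) ^ (n - 1) * rename g G := by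
    have k := key1
    rw [mul_assoc, mul_assoc] at k
    exact mul_left_cancel₀ hne (by rw [← mul_assoc, ← mul_assoc] at k; exact k)
  have hσG : MvPolynomial.map σ' G = (-1) ^ (n - 1) * rename g G := by
    have h2 : G' = MvPolynomial.map σ' G := mul_left_cancel₀ hne key2
    rw [← h2, hG'eq]
  refine ⟨hG'eq, ?_⟩
  intro i hi
  have hmd : (Finsupp.single (0 : Fin 2) ((n - 1) * (n - 2) - i) + Finsupp.single 1 i)
      = Finsupp.mapDomain g
          (Finsupp.single 0 i + Finsupp.single 1 ((n - 1) * (n - 2) - i)) := by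
    rw [Finsupp.mapDomain_add, Finsupp.mapDomain_single, Finsupp.mapDomain_single, hg0, hg1]
    rw [add_comm]
  have hrc : coeff (Finsupp.single (0 : Fin 2) ((n - 1) * (n - 2) - i) + Finsupp.single 1 i)
      (rename g G)
      = coeff (Finsupp.single 0 i + Finsupp.single 1 ((n - 1) * (n - 2) - i)) G := by
    rw [hmd]
    exact coeff_rename_mapDomain _ hg_inj G _
  have hc := congrArg
    (coeff (Finsupp.single (0 : Fin 2) ((n - 1) * (n - 2) - i) + Finsupp.single 1 i)) hσG
  rw [coeff_map] at hc
  rw [show ((-1 : MvPolynomial (Fin 2) S2) ^ (n - 1)) = C ((-1 : S2) ^ (n - 1)) by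
      rw [map_pow, map_neg, map_one], coeff_C_mul, hrc] at hc
  exact hc
end

section
/- Let f(x,z) ∈ ℂ[x,z] be a binary form of degree n ≥ 2 whose coefficient of xⁿ is c ≠ 0, and let α₁, …, αₙ be the roots of f(x,1) counted with multiplicity, so Δ(f) := c^{2n−2} · ∏_{i<j}(α_i − α_j)². Let M = [[a,b],[c',d]] ∈ GL₂(ℂ) and f^M(x,z) := f(ax + bz, c'x + dz), and suppose the coefficient of xⁿ in f^M is also nonzero. Then Δ(f^M) = (det M)^{n(n−1)} · Δ(f). -/
open MvPolynomial

section Helpers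

private lemma stmt10_perm_extract {α : Type*} [DecidableEq α] : ∀ {n : ℕ} (β γ : Fin n → α),
    Finset.univ.val.map β = Finset.univ.val.map γ →
    ∃ σ : Equiv.Perm (Fin n), ∀ i, β i = γ (σ i) := by
  intro n
  induction n with
  | zero => exact fun β γ _ => ⟨1, fun i => i.elim0⟩
  | succ n ih =>
    intro β γ h
    have h0 : β 0 ∈ Finset.univ.val.map γ := by
      rw [← h]; exact Multiset.mem_map_of_mem β (Finset.mem_univ_val _)
    obtain ⟨j, -, hj⟩ := Multiset.mem_map.mp h0
    have hswap : Finset.univ.val.map (⇑(Equiv.swap (0 : Fin (n+1)) j)) = Finset.univ.val := by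
      have := congrArg Finset.val (Finset.map_univ_equiv (Equiv.swap (0 : Fin (n+1)) j))
      simpa using this
    have hmapγ' : Finset.univ.val.map (γ ∘ (Equiv.swap 0 j)) = Finset.univ.val.map γ := by
      rw [← Multiset.map_map, hswap]
    have huniv : (Finset.univ.val : Multiset (Fin (n+1)))
        = 0 ::ₘ Finset.univ.val.map Fin.succ := by
      have := congrArg Finset.val (Fin.univ_succ n)
      rw [this]
      simp [Finset.insert_val, Multiset.dedup_eq_self.mpr, Function.comp_def]
    have hcons : ∀ f : Fin (n+1) → α, Finset.univ.val.map f
        = f 0 ::ₘ Finset.univ.val.map (f ∘ Fin.succ) := by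
      intro f; rw [huniv]; simp [Multiset.map_map, Function.comp_def]
    have htails : Finset.univ.val.map (β ∘ Fin.succ)
        = Finset.univ.val.map ((γ ∘ (Equiv.swap 0 j)) ∘ Fin.succ) := by
      have h' := h.trans hmapγ'.symm
      rw [hcons β, hcons (γ ∘ (Equiv.swap 0 j))] at h'
      have hz : (γ ∘ (Equiv.swap 0 j)) 0 = β 0 := by
        simp [Function.comp, Equiv.swap_apply_left, hj]
      rw [hz] at h'
      exact (Multiset.cons_inj_right _).mp h'
    obtain ⟨τ, hτ⟩ := ih _ _ htails
    refine ⟨Equiv.Perm.decomposeFin.symm (j, τ), fun i => ?_⟩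
    induction i using Fin.cases with
    | zero => simp [Equiv.Perm.decomposeFin_symm_apply_zero, hj]
    | succ i =>
      have := hτ i
      simp only [Function.comp] at this
      simp [Equiv.Perm.decomposeFin_symm_apply_succ, this]

private lemma stmt10_prod_pair {n : ℕ} (u : Fin n → ℂ) :
    ∏ i : Fin n, ∏ j ∈ Finset.Ioi i, (u i * u j) = (∏ i : Fin n, u i) ^ (n - 1) := by
  have hswap : ∏ i : Fin n, ∏ j ∈ Finset.Ioi i, u j
      = ∏ j : Fin n, ∏ i ∈ Finset.Iio j, u j := by
    refine Finset.prod_comm' ?_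
    intro i j; simp [Finset.mem_Ioi, Finset.mem_Iio, and_comm]
  calc ∏ i : Fin n, ∏ j ∈ Finset.Ioi i, (u i * u j)
      = (∏ i : Fin n, ∏ j ∈ Finset.Ioi i, u i) * (∏ i : Fin n, ∏ j ∈ Finset.Ioi i, u j) := by
        rw [← Finset.prod_mul_distrib]
        exact Finset.prod_congr rfl fun i _ => Finset.prod_mul_distrib
    _ = (∏ i : Fin n, u i ^ (n - 1 - (i : ℕ))) * (∏ j : Fin n, u j ^ (j : ℕ)) := by
        rw [hswap]
        congr 1
        · exact Finset.prod_congr rfl fun i _ => by rw [Finset.prod_const, Fin.card_Ioi]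
        · exact Finset.prod_congr rfl fun j _ => by rw [Finset.prod_const, Fin.card_Iio]
    _ = ∏ i : Fin n, u i ^ (n - 1) := by
        rw [← Finset.prod_mul_distrib]
        refine Finset.prod_congr rfl fun i _ => ?_
        rw [← pow_add]
        congr 1
        have := i.isLt
        omega
    _ = (∏ i : Fin n, u i) ^ (n - 1) := by rw [Finset.prod_pow]

private lemma stmt10_vand_sq {n : ℕ} (γ : Fin n → ℂ) :
    ∏ i : Fin n, ∏ j ∈ Finset.Ioi i, (γ i - γ j) ^ 2 = (Matrix.vandermonde γ).det ^ 2 := by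
  rw [Matrix.det_vandermonde, ← Finset.prod_pow]
  refine Finset.prod_congr rfl fun i _ => ?_
  rw [← Finset.prod_pow]
  exact Finset.prod_congr rfl fun j _ => by rw [← neg_sub, neg_sq]

private lemma stmt10_prodsq_perm {n : ℕ} (γ : Fin n → ℂ) (σ : Equiv.Perm (Fin n)) :
    ∏ i : Fin n, ∏ j ∈ Finset.Ioi i, (γ (σ i) - γ (σ j)) ^ 2
      = ∏ i : Fin n, ∏ j ∈ Finset.Ioi i, (γ i - γ j) ^ 2 := by
  have h1 : ∏ i : Fin n, ∏ j ∈ Finset.Ioi i, (γ (σ i) - γ (σ j)) ^ 2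
      = (Matrix.vandermonde (γ ∘ σ)).det ^ 2 := stmt10_vand_sq (γ ∘ σ)
  have h2 : Matrix.vandermonde (γ ∘ σ) = (Matrix.vandermonde γ).submatrix σ id := by
    ext i j; simp [Matrix.vandermonde, Matrix.submatrix_apply]
  rw [h1, h2, Matrix.det_permute, mul_pow, stmt10_vand_sq γ]
  rcases Int.units_eq_one_or (Equiv.Perm.sign σ) with h | h <;> simp [h]

end Helpers

/-- Let `f(x,z) = c ∏ (x - α_i z)` be a binary form of degree `n ≥ 2` over
`ℂ` with nonzero `xⁿ`-coefficient `c`, so `Δ(f) = c^{2n-2} ∏_{i<j} (α_i - α_j)²`.  If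
`M = [[a,b],[c',d]] ∈ GL₂(ℂ)` and `f^M(x,z) = f(ax+bz, c'x+dz) = c₂ ∏ (x - β_i z)` with
`c₂ ≠ 0`, then `Δ(f^M) = (det M)^{n(n-1)} Δ(f)`. -/
theorem stmt10 (n : ℕ) (hn : 2 ≤ n) (c : ℂ) (hc : c ≠ 0)
    (α : Fin n → ℂ) (f : MvPolynomial (Fin 2) ℂ)
    (hf : f = C c * ∏ i : Fin n, (X 0 - C (α i) * X 1))
    (a b c' d : ℂ) (hdet : a * d - b * c' ≠ 0)
    (c₂ : ℂ) (hc₂ : c₂ ≠ 0) (β : Fin n → ℂ)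
    (hfM : bind₁ ![C a * X 0 + C b * X 1, C c' * X 0 + C d * X 1] f
      = C c₂ * ∏ i : Fin n, (X 0 - C (β i) * X 1)) :
    c₂ ^ (2 * n - 2) * ∏ i : Fin n, ∏ j ∈ Finset.Ioi i, (β i - β j) ^ 2
      = (a * d - b * c') ^ (n * (n - 1)) *
          (c ^ (2 * n - 2) * ∏ i : Fin n, ∏ j ∈ Finset.Ioi i, (α i - α j) ^ 2) := by
  classical
  -- evaluate the polynomial identity at arbitrary points
  have key : ∀ x z : ℂ, c * ∏ i : Fin n, ((a - α i * c') * x + (b - α i * d) * z)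
      = c₂ * ∏ i : Fin n, (x - β i * z) := by
    intro x z
    have h := hfM
    apply_fun (MvPolynomial.eval (fun k : ℕ => if k = 0 then x else z)) at h
    rw [hf] at h
    simp only [map_mul, map_prod, map_sub, map_add, bind₁_X_right, algHom_C, eval_C, eval_X,
      Matrix.cons_val_zero, Matrix.cons_val_one, Matrix.head_cons, MvPolynomial.algebraMap_eq] at h
    norm_num at h
    rw [← h]
    congr 1
    exact Finset.prod_congr rfl fun i _ => by ring
  -- leading coefficient
  have hu : c * ∏ i : Fin n, (a - α i * c') = c₂ := by
    have := key 1 0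
    simpa using this
  have hU : (∏ i : Fin n, (a - α i * c')) ≠ 0 := by
    intro h0
    exact hc₂ (by rw [← hu, h0, mul_zero])
  have hu_ne : ∀ i : Fin n, (a - α i * c') ≠ 0 := by
    intro i hi
    exact hU (Finset.prod_eq_zero (Finset.mem_univ i) hi)
  -- the roots of the transformed form
  set γ : Fin n → ℂ := fun i => -(b - α i * d) / (a - α i * c') with hγ
  have hcan : ∀ i : Fin n, (a - α i * c') * γ i = -(b - α i * d) := by
    intro i
    rw [hγ]
    exact mul_div_cancel₀ _ (hu_ne i)
  have hlin : ∀ (i : Fin n) (x : ℂ),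
      (a - α i * c') * x + (b - α i * d) = (a - α i * c') * (x - γ i) := by
    intro i x
    linear_combination hcan i
  have key2 : ∀ x : ℂ, ∏ i : Fin n, (x - γ i) = ∏ i : Fin n, (x - β i) := by
    intro x
    have h := key x 1
    simp only [mul_one] at h
    rw [Finset.prod_congr rfl (fun i _ => hlin i x), Finset.prod_mul_distrib, ← mul_assoc,
      hu] at h
    exact mul_left_cancel₀ hc₂ h
  -- multisets of roots agree
  have hpoly : ∏ i : Fin n, (Polynomial.X - Polynomial.C (γ i))
      = ∏ i : Fin n, (Polynomial.X - Polynomial.C (β i)) := by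
    apply Polynomial.funext
    intro x
    simpa [Polynomial.eval_prod] using key2 x
  have hms : Finset.univ.val.map γ = Finset.univ.val.map β := by
    have hr : ∀ g : Fin n → ℂ, (∏ i : Fin n, (Polynomial.X - Polynomial.C (g i))).roots
        = Finset.univ.val.map g := by
      intro g
      have hmm : Multiset.map (fun a => Polynomial.X - Polynomial.C a)
            (Multiset.map g Finset.univ.val)
          = Multiset.map (fun i => Polynomial.X - Polynomial.C (g i)) Finset.univ.val := by
        rw [Multiset.map_map]; rfl
      rw [Finset.prod_eq_multiset_prod, ← hmm, Polynomial.roots_multiset_prod_X_sub_C]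
    have := congrArg Polynomial.roots hpoly
    rwa [hr γ, hr β] at this
  obtain ⟨σ, hσ⟩ := stmt10_perm_extract β γ hms.symm
  -- key algebraic identity for differences of roots
  have hdiff : ∀ i j : Fin n, (γ i - γ j) * ((a - α i * c') * (a - α j * c'))
      = (α i - α j) * (a * d - b * c') := by
    intro i j
    linear_combination (a - α j * c') * hcan i - (a - α i * c') * hcan j
  -- products of squared differences
  have hβγ : ∏ i : Fin n, ∏ j ∈ Finset.Ioi i, (β i - β j) ^ 2
      = ∏ i : Fin n, ∏ j ∈ Finset.Ioi i, (γ i - γ j) ^ 2 := by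
    rw [show (∏ i : Fin n, ∏ j ∈ Finset.Ioi i, (β i - β j) ^ 2)
        = ∏ i : Fin n, ∏ j ∈ Finset.Ioi i, (γ (σ i) - γ (σ j)) ^ 2 from
      Finset.prod_congr rfl fun i _ => Finset.prod_congr rfl fun j _ => by rw [hσ i, hσ j]]
    exact stmt10_prodsq_perm γ σ
  have hsplit : ∀ w w' : Fin n → Fin n → ℂ,
      ∏ i : Fin n, ∏ j ∈ Finset.Ioi i, (w i j * w' i j)
        = (∏ i : Fin n, ∏ j ∈ Finset.Ioi i, w i j)
            * (∏ i : Fin n, ∏ j ∈ Finset.Ioi i, w' i j) := fun w w' =>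
    (Finset.prod_congr rfl fun i _ => Finset.prod_mul_distrib).trans Finset.prod_mul_distrib
  have hmain : (∏ i : Fin n, ∏ j ∈ Finset.Ioi i, (γ i - γ j) ^ 2)
        * ((∏ i : Fin n, (a - α i * c')) ^ (n - 1)) ^ 2
      = (∏ i : Fin n, ∏ j ∈ Finset.Ioi i, (α i - α j) ^ 2) * (a * d - b * c') ^ (n * (n - 1)) := by
    have h1 : ∏ i : Fin n, ∏ j ∈ Finset.Ioi i,
          ((γ i - γ j) * ((a - α i * c') * (a - α j * c'))) ^ 2
        = ∏ i : Fin n, ∏ j ∈ Finset.Ioi i, ((α i - α j) * (a * d - b * c')) ^ 2 :=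
      Finset.prod_congr rfl fun i _ => Finset.prod_congr rfl fun j _ => by rw [hdiff i j]
    have e1 : ∏ i : Fin n, ∏ j ∈ Finset.Ioi i,
          ((γ i - γ j) * ((a - α i * c') * (a - α j * c'))) ^ 2
        = (∏ i : Fin n, ∏ j ∈ Finset.Ioi i, (γ i - γ j) ^ 2)
            * ∏ i : Fin n, ∏ j ∈ Finset.Ioi i, ((a - α i * c') ^ 2 * (a - α j * c') ^ 2) := by
      rw [← hsplit]
      exact Finset.prod_congr rfl fun i _ => Finset.prod_congr rfl fun j _ => by ring
    have e2 : ∏ i : Fin n, ∏ j ∈ Finset.Ioi i, ((a - α i * c') ^ 2 * (a - α j * c') ^ 2)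
        = ((∏ i : Fin n, (a - α i * c')) ^ (n - 1)) ^ 2 := by
      have h := stmt10_prod_pair (fun i => (a - α i * c') ^ 2)
      rw [Finset.prod_pow] at h
      rw [h, ← pow_mul, ← pow_mul]
      congr 1
      omega
    have e3 : ∏ i : Fin n, ∏ j ∈ Finset.Ioi i, ((α i - α j) * (a * d - b * c')) ^ 2
        = (∏ i : Fin n, ∏ j ∈ Finset.Ioi i, (α i - α j) ^ 2)
            * (a * d - b * c') ^ (n * (n - 1)) := by
      have e4 : ∏ i : Fin n, ∏ j ∈ Finset.Ioi i, ((a * d - b * c') * (a * d - b * c'))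
          = (a * d - b * c') ^ (n * (n - 1)) := by
        have h := stmt10_prod_pair (fun _ : Fin n => (a * d - b * c'))
        rw [Finset.prod_const, Finset.card_univ, Fintype.card_fin, ← pow_mul] at h
        exact h
      rw [← e4, ← hsplit]
      exact Finset.prod_congr rfl fun i _ => Finset.prod_congr rfl fun j _ => by ring
    rw [← e2, ← e1, h1, e3]
  -- final computation
  have hc₂pow : c₂ ^ (2 * n - 2)
      = c ^ (2 * n - 2) * ((∏ i : Fin n, (a - α i * c')) ^ (n - 1)) ^ 2 := by
    rw [← hu, mul_pow, ← pow_mul]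
    congr 2
    omega
  rw [hβγ, hc₂pow]
  calc c ^ (2 * n - 2) * ((∏ i : Fin n, (a - α i * c')) ^ (n - 1)) ^ 2
        * ∏ i : Fin n, ∏ j ∈ Finset.Ioi i, (γ i - γ j) ^ 2
      = c ^ (2 * n - 2) * ((∏ i : Fin n, ∏ j ∈ Finset.Ioi i, (γ i - γ j) ^ 2)
          * ((∏ i : Fin n, (a - α i * c')) ^ (n - 1)) ^ 2) := by ring
    _ = c ^ (2 * n - 2) * ((∏ i : Fin n, ∏ j ∈ Finset.Ioi i, (α i - α j) ^ 2)
          * (a * d - b * c') ^ (n * (n - 1))) := by rw [hmain]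
    _ = (a * d - b * c') ^ (n * (n - 1)) *
          (c ^ (2 * n - 2) * ∏ i : Fin n, ∏ j ∈ Finset.Ioi i, (α i - α j) ^ 2) := by ring
end

section
/- Let f(x,z) ∈ ℤ[x,z] be a binary sextic (homogeneous of degree 6) whose coefficient of x⁶ is nonzero, with discriminant Δ(f) ≠ 0, and suppose that for every prime number p the p-adic valuation satisfies v_p(Δ(f)) < 30. Then for every M = [[a,b],[c,d]] ∈ GL₂(ℚ) such that f^M(x,z) := f(ax + bz, cx + dz) has integer coefficients and nonzero x⁶-coefficient, one has |Δ(f^M)| ≥ |Δ(f)|. -/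
open MvPolynomial

set_option maxHeartbeats 1000000


lemma prod_Ioi_mul {R} [CommRing R] (w : Fin 6 → R) :
    ∏ i, ∏ j ∈ Finset.Ioi i, (w i * w j) = (∏ i, w i) ^ 5 := by
  have h2 : (∏ i, ∏ j ∈ Finset.Ioi i, w j) = ∏ j, ∏ _i ∈ Finset.Iio j, w j :=
    Finset.prod_comm' (by intro x y; simp [Finset.mem_Ioi, Finset.mem_Iio, and_comm])
  calc ∏ i, ∏ j ∈ Finset.Ioi i, (w i * w j)
      = (∏ i, ∏ _j ∈ Finset.Ioi i, w i) * (∏ i, ∏ j ∈ Finset.Ioi i, w j) := by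
        rw [← Finset.prod_mul_distrib]
        exact Finset.prod_congr rfl fun i _ => Finset.prod_mul_distrib
    _ = (∏ i, w i ^ (Finset.Ioi i).card) * (∏ i, w i ^ (Finset.Iio i).card) := by
        rw [h2]; simp [Finset.prod_const]
    _ = ∏ i, (w i ^ (Finset.Ioi i).card * w i ^ (Finset.Iio i).card) :=
        Finset.prod_mul_distrib.symm
    _ = ∏ i, w i ^ 5 := Finset.prod_congr rfl fun i _ => by
        rw [← pow_add]; congr 1; rw [Fin.card_Ioi, Fin.card_Iio]; omega
    _ = (∏ i, w i) ^ 5 := Finset.prod_pow _ _ _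
lemma prod_Ioi_const {R} [CommRing R] (k : R) :
    ∏ i : Fin 6, ∏ _j ∈ Finset.Ioi i, k = k ^ 15 := by
  simp only [Finset.prod_const]
  rw [Finset.prod_pow_eq_pow_sum]
  norm_num [Fin.card_Ioi]
  rfl

lemma prod_sq_pairs_eq {v w : Fin 6 → ℂ}
    (h : Multiset.map v Finset.univ.val = Multiset.map w Finset.univ.val) :
    ∏ i, ∏ j ∈ Finset.Ioi i, (v i - v j) ^ 2
      = ∏ i, ∏ j ∈ Finset.Ioi i, (w i - w j) ^ 2 := by
  have key : ∀ u : Fin 6 → ℂ, ∏ i, ∏ j ∈ Finset.Ioi i, (u i - u j) ^ 2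
      = ((Matrix.vandermonde u).transpose * Matrix.vandermonde u).det := by
    intro u
    rw [Matrix.det_mul, Matrix.det_transpose, ← sq, Matrix.det_vandermonde]
    rw [← Finset.prod_pow]
    refine Finset.prod_congr rfl fun i _ => ?_
    rw [← Finset.prod_pow]
    exact Finset.prod_congr rfl fun j _ => by ring
  rw [key v, key w]
  congr 1
  ext i j
  simp only [Matrix.mul_apply, Matrix.transpose_apply, Matrix.vandermonde, Matrix.of_apply]
  have hms : ∀ u : Fin 6 → ℂ, ∑ k : Fin 6, u k ^ (i : ℕ) * u k ^ (j : ℕ)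
      = (Multiset.map (fun x => x ^ (i : ℕ) * x ^ (j : ℕ)) (Multiset.map u Finset.univ.val)).sum := by
    intro u
    rw [Multiset.map_map]
    rfl
  rw [hms v, hms w, h]

/-- Let `f(x,z) ∈ ℤ[x,z]` be a binary sextic with nonzero `x⁶`-coefficient
(over `ℂ`, `f = c ∏ (x - α_i z)` with `c ≠ 0`), with discriminant
`Δ(f) = D = c^{10} ∏_{i<j}(α_i - α_j)² ∈ ℤ`, `D ≠ 0`, and `v_p(D) < 30` for every prime `p`.
Then for every `M = [[a,b],[c',d]] ∈ GL₂(ℚ)` such that `f^M` has integer coefficients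
(say `f^M = g` with `g ∈ ℤ[x,z]`) and nonzero `x⁶`-coefficient, the discriminant
`D' = Δ(f^M)` satisfies `|D'| ≥ |D|`. -/
theorem stmt11 (f : MvPolynomial (Fin 2) ℤ)
    (c : ℂ) (hc : c ≠ 0) (α : Fin 6 → ℂ)
    (hf : MvPolynomial.map (Int.castRingHom ℂ) f
      = C c * ∏ i : Fin 6, (X 0 - C (α i) * X 1))
    (D : ℤ) (hD : (D : ℂ) = c ^ 10 * ∏ i : Fin 6, ∏ j ∈ Finset.Ioi i, (α i - α j) ^ 2)
    (hD0 : D ≠ 0)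
    (hval : ∀ p : ℕ, p.Prime → padicValInt p D < 30)
    (a b c' d : ℚ) (hdet : a * d - b * c' ≠ 0)
    (g : MvPolynomial (Fin 2) ℤ)
    (hg : MvPolynomial.map (Int.castRingHom ℚ) g
      = bind₁ ![C a * X 0 + C b * X 1, C c' * X 0 + C d * X 1]
          (MvPolynomial.map (Int.castRingHom ℚ) f))
    (c₂ : ℂ) (hc₂ : c₂ ≠ 0) (β : Fin 6 → ℂ)
    (hgC : MvPolynomial.map (Int.castRingHom ℂ) g
      = C c₂ * ∏ i : Fin 6, (X 0 - C (β i) * X 1))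
    (D' : ℤ)
    (hD' : (D' : ℂ) = c₂ ^ 10 * ∏ i : Fin 6, ∏ j ∈ Finset.Ioi i, (β i - β j) ^ 2) :
    |D| ≤ |D'| := by
  classical
  have hcomp : (Rat.castHom ℂ).comp (Int.castRingHom ℚ) = Int.castRingHom ℂ := by
    ext n <;> simp
  have hgℂ : MvPolynomial.map (Int.castRingHom ℂ) g
      = bind₁ ![C ((a : ℂ)) * X 0 + C ((b : ℂ)) * X 1,
                C ((c' : ℂ)) * X 0 + C ((d : ℂ)) * X 1]
          (MvPolynomial.map (Int.castRingHom ℂ) f) := by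
    have h := congrArg (MvPolynomial.map (Rat.castHom ℂ)) hg
    rw [MvPolynomial.map_map, hcomp, MvPolynomial.map_bind₁, MvPolynomial.map_map, hcomp] at h
    have hv : (fun i => MvPolynomial.map (Rat.castHom ℂ)
          (![C a * X 0 + C b * X 1, C c' * X 0 + C d * X 1] i))
        = (![C ((a : ℂ)) * X 0 + C ((b : ℂ)) * X 1,
            C ((c' : ℂ)) * X 0 + C ((d : ℂ)) * X 1]
            : Fin 2 → MvPolynomial (Fin 2) ℂ) := by
      funext i
      fin_cases i <;> simp [MvPolynomial.map_C, MvPolynomial.map_X]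
    exact h.trans (congrArg (fun v => bind₁ v (MvPolynomial.map (Int.castRingHom ℂ) f)) hv)
  rw [hf] at hgℂ
  have hbind : bind₁ (![C ((a : ℂ)) * X 0 + C ((b : ℂ)) * X 1,
                C ((c' : ℂ)) * X 0 + C ((d : ℂ)) * X 1]
                : Fin 2 → MvPolynomial (Fin 2) ℂ)
        (C c * ∏ i : Fin 6, (X 0 - C (α i) * X 1))
      = (C c * ∏ i : Fin 6, ((C ((a : ℂ)) * X 0 + C ((b : ℂ)) * X 1)
          - C (α i) * (C ((c' : ℂ)) * X 0 + C ((d : ℂ)) * X 1))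
          : MvPolynomial (Fin 2) ℂ) := by
    simp only [map_mul, map_prod, map_sub, map_add, bind₁_C_right, bind₁_X_right,
      Matrix.cons_val_zero, Matrix.cons_val_one, Matrix.head_cons]
  have hgℂ2 : (C c₂ * ∏ i : Fin 6, (X 0 - C (β i) * X 1) : MvPolynomial (Fin 2) ℂ)
      = C c * ∏ i : Fin 6, ((C ((a : ℂ)) * X 0 + C ((b : ℂ)) * X 1)
          - C (α i) * (C ((c' : ℂ)) * X 0 + C ((d : ℂ)) * X 1)) :=
    (hgC.symm.trans hgℂ).trans hbind
  -- push to ℂ[X]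
  have e1 : Polynomial.C c₂ * ∏ i : Fin 6, (Polynomial.X - Polynomial.C (β i))
      = Polynomial.C c * ∏ i : Fin 6,
          ((Polynomial.C ((a : ℂ)) * Polynomial.X + Polynomial.C ((b : ℂ)))
            - Polynomial.C (α i)
              * (Polynomial.C ((c' : ℂ)) * Polynomial.X + Polynomial.C ((d : ℂ)))) := by
    have h := congrArg (fun P : MvPolynomial (Fin 2) ℂ =>
      aeval (R := ℂ) ![Polynomial.X, (1 : Polynomial ℂ)] P) hgℂ2
    simpa only [map_mul, map_prod, map_sub, map_add, aeval_C, aeval_X,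
      Matrix.cons_val_zero, Matrix.cons_val_one, Matrix.head_cons,
      Polynomial.algebraMap_eq, mul_one] using h
  have e2 : c₂ = c * ∏ i : Fin 6, ((a : ℂ) - α i * (c' : ℂ)) := by
    have h := congrArg (fun P : MvPolynomial (Fin 2) ℂ => eval ![(1 : ℂ), 0] P) hgℂ2
    simpa only [map_mul, map_prod, map_sub, map_add, eval_C, eval_X,
      Matrix.cons_val_zero, Matrix.cons_val_one, Matrix.head_cons,
      mul_zero, mul_one, add_zero, sub_zero, Finset.prod_const_one] using h
  have hprod_u : c * ∏ i, ((a : ℂ) - α i * (c' : ℂ)) ≠ 0 := by rw [← e2]; exact hc₂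
  have hu : ∀ i, (a : ℂ) - α i * (c' : ℂ) ≠ 0 := by
    intro i hi
    exact hprod_u (by rw [Finset.prod_eq_zero (Finset.mem_univ i) hi, mul_zero])
  have hfactor : ∀ i : Fin 6,
      (Polynomial.C ((a : ℂ)) * Polynomial.X + Polynomial.C ((b : ℂ)))
        - Polynomial.C (α i)
          * (Polynomial.C ((c' : ℂ)) * Polynomial.X + Polynomial.C ((d : ℂ)))
      = Polynomial.C ((a : ℂ) - α i * (c' : ℂ))
          * (Polynomial.X - Polynomial.C ((α i * (d : ℂ) - (b : ℂ))
              / ((a : ℂ) - α i * (c' : ℂ)))) := by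
    intro i
    have huγ : ((a : ℂ) - α i * (c' : ℂ))
        * ((α i * (d : ℂ) - (b : ℂ)) / ((a : ℂ) - α i * (c' : ℂ)))
        = α i * (d : ℂ) - (b : ℂ) := by
      rw [mul_comm, div_mul_cancel₀ _ (hu i)]
    rw [mul_sub, ← Polynomial.C_mul, huγ]
    simp only [Polynomial.C_sub, Polynomial.C_mul]
    ring
  have e3 : ∏ i : Fin 6, (Polynomial.X - Polynomial.C (β i))
      = ∏ i : Fin 6, (Polynomial.X - Polynomial.C ((α i * (d : ℂ) - (b : ℂ))
          / ((a : ℂ) - α i * (c' : ℂ)))) := by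
    have h := e1
    rw [Finset.prod_congr rfl fun i _ => hfactor i, Finset.prod_mul_distrib, ← map_prod,
      ← mul_assoc, ← Polynomial.C_mul, ← e2] at h
    exact mul_left_cancel₀ (by simpa using hc₂) h
  have hms : Multiset.map β Finset.univ.val
      = Multiset.map (fun i => (α i * (d : ℂ) - (b : ℂ)) / ((a : ℂ) - α i * (c' : ℂ)))
          Finset.univ.val := by
    have hr : ∀ v : Fin 6 → ℂ, (∏ i : Fin 6, (Polynomial.X - Polynomial.C (v i))).roots
        = Multiset.map v Finset.univ.val := by
      intro v
      rw [show (∏ i : Fin 6, (Polynomial.X - Polynomial.C (v i)))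
          = (Multiset.map (fun r => Polynomial.X - Polynomial.C r)
              (Multiset.map v Finset.univ.val)).prod by
        rw [Multiset.map_map]; rfl]
      exact Polynomial.roots_multiset_prod_X_sub_C _
    rw [← hr β, ← hr _, e3]
  set γ : Fin 6 → ℂ := fun i => (α i * (d : ℂ) - (b : ℂ)) / ((a : ℂ) - α i * (c' : ℂ))
    with hγ_def
  have hγi : ∀ k, γ k = (α k * (d : ℂ) - (b : ℂ)) / ((a : ℂ) - α k * (c' : ℂ)) :=
    fun _ => rfl
  have hpair : ∀ i j : Fin 6,
      (((a : ℂ) - α i * (c' : ℂ)) * ((a : ℂ) - α j * (c' : ℂ))) ^ 2 * (γ i - γ j) ^ 2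
      = ((a : ℂ) * (d : ℂ) - (b : ℂ) * (c' : ℂ)) ^ 2 * (α i - α j) ^ 2 := by
    intro i j
    have h1 : ((a : ℂ) - α i * (c' : ℂ)) * ((a : ℂ) - α j * (c' : ℂ)) * (γ i - γ j)
        = ((a : ℂ) * (d : ℂ) - (b : ℂ) * (c' : ℂ)) * (α i - α j) := by
      have hi' := hu i
      have hj' := hu j
      rw [hγi i, hγi j, div_sub_div _ _ (hu i) (hu j)]
      rw [mul_div_assoc', mul_div_cancel_left₀ _ (mul_ne_zero hi' hj')]
      ring
    calc (((a : ℂ) - α i * (c' : ℂ)) * ((a : ℂ) - α j * (c' : ℂ))) ^ 2 * (γ i - γ j) ^ 2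
        = (((a : ℂ) - α i * (c' : ℂ)) * ((a : ℂ) - α j * (c' : ℂ)) * (γ i - γ j)) ^ 2 := by
          ring
      _ = (((a : ℂ) * (d : ℂ) - (b : ℂ) * (c' : ℂ)) * (α i - α j)) ^ 2 := by rw [h1]
      _ = ((a : ℂ) * (d : ℂ) - (b : ℂ) * (c' : ℂ)) ^ 2 * (α i - α j) ^ 2 := by ring
  have key : (D' : ℂ) = ((a : ℂ) * (d : ℂ) - (b : ℂ) * (c' : ℂ)) ^ 30 * (D : ℂ) := by
    rw [hD', hD, prod_sq_pairs_eq hms, e2]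
    calc (c * ∏ i, ((a : ℂ) - α i * (c' : ℂ))) ^ 10 * ∏ i, ∏ j ∈ Finset.Ioi i, (γ i - γ j) ^ 2
        = c ^ 10 * (((∏ i, ((a : ℂ) - α i * (c' : ℂ))) ^ 5) ^ 2
            * ∏ i, ∏ j ∈ Finset.Ioi i, (γ i - γ j) ^ 2) := by ring
      _ = c ^ 10 * ((∏ i, ∏ j ∈ Finset.Ioi i,
              (((a : ℂ) - α i * (c' : ℂ)) * ((a : ℂ) - α j * (c' : ℂ)))) ^ 2
            * ∏ i, ∏ j ∈ Finset.Ioi i, (γ i - γ j) ^ 2) := by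
          rw [prod_Ioi_mul]
      _ = c ^ 10 * ∏ i, ∏ j ∈ Finset.Ioi i,
            ((((a : ℂ) - α i * (c' : ℂ)) * ((a : ℂ) - α j * (c' : ℂ))) ^ 2
              * (γ i - γ j) ^ 2) := by
          rw [← Finset.prod_pow, ← Finset.prod_mul_distrib]
          congr 1
          refine Finset.prod_congr rfl fun i _ => ?_
          rw [← Finset.prod_pow, ← Finset.prod_mul_distrib]
      _ = c ^ 10 * ∏ i, ∏ j ∈ Finset.Ioi i,
            (((a : ℂ) * (d : ℂ) - (b : ℂ) * (c' : ℂ)) ^ 2 * (α i - α j) ^ 2) := by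
          congr 1
          exact Finset.prod_congr rfl fun i _ => Finset.prod_congr rfl fun j _ => hpair i j
      _ = c ^ 10 * ((∏ i : Fin 6, ∏ _j ∈ Finset.Ioi i,
              ((a : ℂ) * (d : ℂ) - (b : ℂ) * (c' : ℂ)) ^ 2)
            * ∏ i, ∏ j ∈ Finset.Ioi i, (α i - α j) ^ 2) := by
          rw [← Finset.prod_mul_distrib]
          congr 1
          exact Finset.prod_congr rfl fun i _ => Finset.prod_mul_distrib
      _ = ((a : ℂ) * (d : ℂ) - (b : ℂ) * (c' : ℂ)) ^ 30
            * (c ^ 10 * ∏ i, ∏ j ∈ Finset.Ioi i, (α i - α j) ^ 2) := by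
          rw [prod_Ioi_const, ← pow_mul]; ring
  set q : ℚ := a * d - b * c' with hq
  have hq0 : q ≠ 0 := hdet
  have keyQ : (D' : ℚ) = q ^ 30 * (D : ℚ) := by
    have h2 : ((D' : ℚ) : ℂ) = ((q ^ 30 * (D : ℚ) : ℚ) : ℂ) := by
      push_cast
      rw [key]
      push_cast [hq]
      ring
    exact_mod_cast h2
  have hDQ0 : (D : ℚ) ≠ 0 := Int.cast_ne_zero.mpr hD0
  have habs : 1 ≤ |q| := by
    by_contra hlt
    push_neg at hlt
    have hden : q.den ≠ 1 := by
      intro h1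
      have hqn : q = (q.num : ℚ) := by rw [← Rat.num_div_den q, h1]; simp
      rw [hqn] at hlt hq0
      have hnum : q.num ≠ 0 := by exact_mod_cast hq0
      have : (1 : ℚ) ≤ |(q.num : ℚ)| := by
        rw [← Int.cast_abs]
        exact_mod_cast Int.one_le_abs hnum
      linarith
    set p : ℕ := q.den.minFac with hp
    have hpp : p.Prime := Nat.minFac_prime hden
    haveI : Fact p.Prime := ⟨hpp⟩
    have hpden : p ∣ q.den := Nat.minFac_dvd _
    have hpnum : ¬ (p : ℤ) ∣ q.num := by
      intro hdvd
      have h1 : p ∣ q.num.natAbs := Int.natCast_dvd_natCast.mp (Int.dvd_natAbs.mpr hdvd)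
      have hpd : p ∣ Nat.gcd q.num.natAbs q.den := Nat.dvd_gcd h1 hpden
      rw [Nat.Coprime.gcd_eq_one q.reduced] at hpd
      exact hpp.one_lt.ne' (Nat.dvd_one.mp hpd)
    have hvq : padicValRat p q ≤ -1 := by
      have hd0 : (q.den : ℚ) ≠ 0 := by exact_mod_cast q.den_nz
      have hn0 : (q.num : ℚ) ≠ 0 := by
        simp only [ne_eq, Int.cast_eq_zero, Rat.num_eq_zero]; exact hq0
      rw [show q = (q.num : ℚ) / (q.den : ℚ) from (Rat.num_div_den q).symm,
        padicValRat.div (p := p) hn0 hd0]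
      have h1 : padicValRat p (q.num : ℚ) = 0 := by
        rw [padicValRat.of_int, padicValInt.eq_zero_of_not_dvd hpnum]
        simp
      have h2 : (1 : ℤ) ≤ padicValRat p (q.den : ℚ) := by
        rw [padicValRat.of_nat]
        exact_mod_cast one_le_padicValNat_of_dvd q.den_nz hpden
      omega
    have hvD' : (0 : ℤ) ≤ padicValRat p (D' : ℚ) := by
      rw [show ((D' : ℚ)) = ((D' : ℤ) : ℚ) by push_cast; ring, padicValRat.of_int]
      positivity
    have hvD : padicValRat p (D : ℚ) < 30 := by
      rw [show ((D : ℚ)) = ((D : ℤ) : ℚ) by push_cast; ring, padicValRat.of_int]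
      exact_mod_cast hval p hpp
    have hsplit : padicValRat p (D' : ℚ)
        = 30 * padicValRat p q + padicValRat p (D : ℚ) := by
      rw [keyQ, padicValRat.mul (pow_ne_zero _ hq0) hDQ0, padicValRat.pow q]
      push_cast
      ring
    rw [hsplit] at hvD'
    omega
  have hfin : (|D| : ℚ) ≤ (|D'| : ℚ) := by
    push_cast
    rw [keyQ, abs_mul, abs_pow]
    exact le_mul_of_one_le_left (abs_nonneg _) (one_le_pow₀ habs)
  exact_mod_cast hfin
end

section
/- Let g(t) ∈ ℤ[t] be a cubic polynomial with nonzero leading coefficient, let f(x) = g(x²) ∈ ℤ[x] (a degree-6 polynomial, corresponding to a genus 2 curve y² = g(x²) with an extra involution), and suppose Δ(f) ≠ 0 and that for every prime p the p-adic valuation satisfies v_p(Δ(f)) < 15. Then for every nonzero u ∈ ℚ such that the polynomial h(x) := u³·g(x²/u) has integer coefficients, one has |Δ(h)| ≥ |Δ(f)|. -/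
open Polynomial Finset

lemma prod_Ioi_const_mul (a : ℂ) (t : Fin 6 → Fin 6 → ℂ) :
    ∏ i : Fin 6, ∏ j ∈ Finset.Ioi i, (a * t i j)
      = a ^ 15 * ∏ i : Fin 6, ∏ j ∈ Finset.Ioi i, t i j := by
  simp_rw [Finset.prod_mul_distrib, Finset.prod_const]
  rw [Finset.prod_pow_eq_pow_sum]
  congr 2

lemma aux_pair (x : Fin 6 → ℂ) (hx : Function.Injective x) :
    ∏ i : Fin 6, ∏ j ∈ Finset.Ioi i, (x i - x j) ^ 2
      = - ((∏ i : Fin 6, (X - C (x i)) : Polynomial ℂ).roots.map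
          (fun z => eval z (derivative (∏ i : Fin 6, (X - C (x i)))))).prod := by

  set P : Polynomial ℂ := ∏ i : Fin 6, (X - C (x i)) with hP
  have hPm : P = ((Finset.univ.val.map x).map (fun a => X - C a)).prod := by
    rw [hP, Finset.prod_eq_multiset_prod, Multiset.map_map]; rfl
  have hroots : P.roots = Finset.univ.val.map x := by
    rw [hPm, roots_multiset_prod_X_sub_C]
  have hev : ∀ i : Fin 6, eval (x i) (derivative P) = ∏ j ∈ {i}ᶜ, (x i - x j) := by
    intro i
    have hmem : x i ∈ Finset.univ.val.map x :=
      Multiset.mem_map_of_mem _ (Finset.mem_univ_val i)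
    rw [hPm, eval_multiset_prod_X_sub_C_derivative hmem]
    rw [← Multiset.map_erase _ hx, Multiset.map_map]
    rw [Finset.compl_singleton, Finset.prod_eq_multiset_prod, Finset.erase_val]
    rfl
  have main := Finset.prod_prod_Ioi_mul_eq_prod_prod_off_diag (fun j i => x i - x j)
  have lhs : ∏ i : Fin 6, ∏ j ∈ Finset.Ioi i, ((x i - x j) * (x j - x i))
      = (-1) ^ 15 * ∏ i : Fin 6, ∏ j ∈ Finset.Ioi i, (x i - x j) ^ 2 := by
    rw [← prod_Ioi_const_mul (-1)]
    congr 1; ext i; congr 1; ext j; ring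
  rw [lhs] at main
  have rhs : ∏ i : Fin 6, ∏ j ∈ ({i}ᶜ : Finset (Fin 6)), (x i - x j)
      = (P.roots.map (fun z => eval z (derivative P))).prod := by
    rw [hroots, Multiset.map_map]
    refine Eq.trans (Finset.prod_congr rfl fun i _ => (hev i).symm) ?_
    rfl
  have main2 := main.trans rhs
  linear_combination -main2

/-- Let `g ∈ ℤ[t]` be a cubic with nonzero leading coefficient and
`f(x) = g(x²)`, with discriminant `Δ(f) = D = c^{10} ∏_{i<j}(α_i - α_j)² ∈ ℤ` (where
`c = g.coeff 3` is the leading coefficient and `α_i` the complex roots of `f`), `D ≠ 0`,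
and `v_p(D) < 15` for every prime `p`.  Then for every nonzero `u ∈ ℚ` such that
`h(x) = u³·g(x²/u) = a₃x⁶ + a₂u x⁴ + a₁u² x² + a₀u³` has integer coefficients (say `h = H`
with `H ∈ ℤ[x]`), the discriminant `D' = Δ(h)` satisfies `|D'| ≥ |D|`. -/
theorem stmt12 (g : Polynomial ℤ) (hg3 : g.natDegree = 3) (hlc : g.coeff 3 ≠ 0)
    (f : Polynomial ℤ) (hf : f = g.comp (X ^ 2))
    (α : Fin 6 → ℂ)
    (hroots : f.map (Int.castRingHom ℂ)
      = C ((g.coeff 3 : ℂ)) * ∏ i : Fin 6, (X - C (α i)))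
    (D : ℤ)
    (hD : (D : ℂ) = (g.coeff 3 : ℂ) ^ 10
      * ∏ i : Fin 6, ∏ j ∈ Finset.Ioi i, (α i - α j) ^ 2)
    (hD0 : D ≠ 0)
    (hval : ∀ p : ℕ, p.Prime → padicValInt p D < 15)
    (u : ℚ) (hu : u ≠ 0)
    (H : Polynomial ℤ)
    (hH : H.map (Int.castRingHom ℚ)
      = C ((g.coeff 3 : ℚ)) * X ^ 6 + C ((g.coeff 2 : ℚ) * u) * X ^ 4
        + C ((g.coeff 1 : ℚ) * u ^ 2) * X ^ 2 + C ((g.coeff 0 : ℚ) * u ^ 3))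
    (β : Fin 6 → ℂ)
    (hβ : H.map (Int.castRingHom ℂ)
      = C ((g.coeff 3 : ℂ)) * ∏ i : Fin 6, (X - C (β i)))
    (D' : ℤ)
    (hD' : (D' : ℂ) = (g.coeff 3 : ℂ) ^ 10
      * ∏ i : Fin 6, ∏ j ∈ Finset.Ioi i, (β i - β j) ^ 2) :
    |D| ≤ |D'| := by
  -- notation
  set c : ℂ := (g.coeff 3 : ℂ) with hc
  have hc0 : c ≠ 0 := by
    simp only [hc, ne_eq, Int.cast_eq_zero]
    exact_mod_cast hlc
  obtain ⟨s, hs⟩ : ∃ s : ℂ, s ^ 2 = (u : ℂ) :=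
    IsAlgClosed.exists_pow_nat_eq (u : ℂ) (by norm_num)
  have hs0 : s ≠ 0 := by
    intro h; apply hu; have : (u:ℂ) = 0 := by rw [← hs, h]; ring
    exact_mod_cast this
  -- explicit form of f over ℂ
  have fmap : f.map (Int.castRingHom ℂ)
      = C c * X ^ 6 + C ((g.coeff 2 : ℂ)) * X ^ 4
        + C ((g.coeff 1 : ℂ)) * X ^ 2 + C ((g.coeff 0 : ℂ)) := by
    have hgex : g = C (g.coeff 3) * X ^ 3 + C (g.coeff 2) * X ^ 2
        + C (g.coeff 1) * X + C (g.coeff 0) := by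
      conv_lhs => rw [g.as_sum_range' 4 (by omega)]
      simp only [Finset.sum_range_succ, Finset.sum_range_zero, zero_add,
        ← C_mul_X_pow_eq_monomial, pow_zero, mul_one, pow_one]
      ring
    rw [hf]
    conv_lhs => rw [hgex]
    simp only [Polynomial.map_comp, Polynomial.map_add, Polynomial.map_mul,
      Polynomial.map_pow, map_C, map_X, add_comp, mul_comp, pow_comp, X_comp, C_comp,
      Int.coe_castRingHom]
    ring
  -- explicit form of H over ℂ
  have Hmap : H.map (Int.castRingHom ℂ)
      = C c * X ^ 6 + C ((g.coeff 2 : ℂ) * u) * X ^ 4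
        + C ((g.coeff 1 : ℂ) * (u:ℂ) ^ 2) * X ^ 2 + C ((g.coeff 0 : ℂ) * (u:ℂ) ^ 3) := by
    have hhom : (Int.castRingHom ℂ) = (Rat.castHom ℂ).comp (Int.castRingHom ℚ) :=
      Subsingleton.elim _ _
    rw [hhom, ← Polynomial.map_map, hH]
    simp only [Polynomial.map_add, Polynomial.map_mul, Polynomial.map_pow, map_C, map_X,
      map_mul, map_pow, Rat.coe_castHom, Rat.cast_intCast]
    rw [hc]
  -- the composition identity
  have hcomp : (H.map (Int.castRingHom ℂ)).comp (C s * X)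
      = C ((u:ℂ) ^ 3) * f.map (Int.castRingHom ℂ) := by
    rw [Hmap, fmap, ← hs]
    simp only [add_comp, mul_comp, C_comp, pow_comp, X_comp, C_mul, C_pow]
    ring
  -- deduce equality of root products
  set γ : Fin 6 → ℂ := fun i => s⁻¹ * β i with hγ
  have hprodeq : (∏ i : Fin 6, (X - C (γ i)) : Polynomial ℂ)
      = ∏ i : Fin 6, (X - C (α i)) := by
    have h1 := hcomp
    rw [hβ, hroots, mul_comp, C_comp, Polynomial.prod_comp] at h1
    simp only [sub_comp, X_comp, C_comp] at h1
    have hfac : ∀ i : Fin 6, C s * X - C (β i) = C s * (X - C (γ i)) := by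
      intro i
      rw [hγ, mul_sub, ← C_mul, mul_inv_cancel_left₀ hs0]
    rw [Finset.prod_congr rfl (fun i _ => hfac i), Finset.prod_mul_distrib,
      Finset.prod_const, Finset.card_univ, Fintype.card_fin] at h1
    have hCu : C ((u:ℂ) ^ 3) = (C s) ^ 6 := by
      rw [← hs, ← C_pow]
      ring_nf
    rw [hCu] at h1
    have hne : ((C s) ^ 6 * C c : Polynomial ℂ) ≠ 0 := by
      apply mul_ne_zero
      · exact pow_ne_zero _ (fun h => hs0 (by simpa using (C_eq_zero.mp h)))
      · exact fun h => hc0 (C_eq_zero.mp h)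
    apply mul_left_cancel₀ hne
    linear_combination h1
  -- α is injective
  have hαinj : Function.Injective α := by
    have hDne : (D : ℂ) ≠ 0 := Int.cast_ne_zero.mpr hD0
    rw [hD] at hDne
    have h2 := right_ne_zero_of_mul hDne
    rw [Finset.prod_ne_zero_iff] at h2
    have hprod : ∀ a : Fin 6, ∀ b ∈ Finset.Ioi a, (α a - α b) ^ 2 ≠ 0 := by
      intro a b hb
      have := h2 a (Finset.mem_univ a)
      rw [Finset.prod_ne_zero_iff] at this
      exact this b hb
    intro i j hij
    by_contra hne
    rcases lt_or_gt_of_ne hne with h | h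
    · exact hprod i j (Finset.mem_Ioi.mpr h) (by rw [hij]; ring)
    · exact hprod j i (Finset.mem_Ioi.mpr h) (by rw [hij]; ring)
  -- γ is injective
  have hγinj : Function.Injective γ := by
    have hr1 : (∏ i : Fin 6, (X - C (γ i)) : Polynomial ℂ).roots
        = Multiset.map γ Finset.univ.val := by
      rw [show (∏ i : Fin 6, (X - C (γ i)) : Polynomial ℂ)
          = ((Finset.univ.val.map γ).map (fun a => X - C a)).prod from by
        rw [Finset.prod_eq_multiset_prod, Multiset.map_map]; rfl]
      rw [roots_multiset_prod_X_sub_C]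
    have hr2 : (∏ i : Fin 6, (X - C (α i)) : Polynomial ℂ).roots
        = Multiset.map α Finset.univ.val := by
      rw [show (∏ i : Fin 6, (X - C (α i)) : Polynomial ℂ)
          = ((Finset.univ.val.map α).map (fun a => X - C a)).prod from by
        rw [Finset.prod_eq_multiset_prod, Multiset.map_map]; rfl]
      rw [roots_multiset_prod_X_sub_C]
    have hms : Multiset.map γ Finset.univ.val = Multiset.map α Finset.univ.val := by
      rw [← hr1, ← hr2, hprodeq]
    have hnodup : (Multiset.map γ Finset.univ.val).Nodup := by
      rw [hms]
      exact Finset.univ.nodup.map hαinj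
    intro i j hij
    exact Multiset.inj_on_of_nodup_map hnodup i (Finset.mem_univ_val i)
      j (Finset.mem_univ_val j) hij
  -- invariance of the pair product
  have hinv : ∏ i : Fin 6, ∏ j ∈ Finset.Ioi i, (γ i - γ j) ^ 2
      = ∏ i : Fin 6, ∏ j ∈ Finset.Ioi i, (α i - α j) ^ 2 := by
    rw [aux_pair γ hγinj, aux_pair α hαinj, hprodeq]
  -- D' = u^15 * D in ℂ
  have hDD'C : (D' : ℂ) = (u:ℂ) ^ 15 * (D : ℂ) := by
    have hβγ : ∀ i, β i = s * γ i := by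
      intro i; rw [hγ]; field_simp
    calc (D' : ℂ) = c ^ 10 * ∏ i : Fin 6, ∏ j ∈ Finset.Ioi i, ((u:ℂ) * (γ i - γ j) ^ 2) := by
          rw [hD']; congr 1
          refine Finset.prod_congr rfl fun i _ => Finset.prod_congr rfl fun j _ => ?_
          rw [hβγ i, hβγ j, ← hs]; ring
      _ = c ^ 10 * ((u:ℂ) ^ 15 * ∏ i : Fin 6, ∏ j ∈ Finset.Ioi i, (γ i - γ j) ^ 2) := by
          rw [prod_Ioi_const_mul]
      _ = (u:ℂ) ^ 15 * (D : ℂ) := by rw [hinv, hD]; ring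
  -- descend to ℚ
  have hDD' : (D' : ℚ) = u ^ 15 * (D : ℚ) := by
    have : ((D' : ℚ) : ℂ) = ((u ^ 15 * (D : ℚ) : ℚ) : ℂ) := by push_cast; exact_mod_cast hDD'C
    exact_mod_cast this
  -- clear denominators
  have key : D' * (u.den : ℤ) ^ 15 = u.num ^ 15 * D := by
    have hden : (u.den : ℚ) ≠ 0 := by exact_mod_cast u.den_nz
    have h := hDD'
    rw [← Rat.num_div_den u] at h
    rw [div_pow] at h
    field_simp at h
    exact_mod_cast h
  -- the denominator is 1
  have hden1 : u.den = 1 := by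
    by_contra hne
    obtain ⟨p, hp, hpd⟩ := Nat.exists_prime_and_dvd hne
    have hfact : Fact p.Prime := ⟨hp⟩
    have hdvd : (p : ℤ) ^ 15 ∣ u.num ^ 15 * D := by
      rw [← key]
      exact Dvd.dvd.mul_left (pow_dvd_pow_of_dvd (by exact_mod_cast hpd) 15) D'
    have hcop : ¬ (p : ℤ) ∣ u.num := by
      intro hdvd'
      have := u.reduced
      have hp1 : p ∣ u.num.natAbs := Int.natCast_dvd_natCast.mp (by
        exact_mod_cast Int.natAbs_dvd_natAbs.mpr hdvd')
      have hg := Nat.dvd_gcd hp1 hpd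
      rw [u.reduced] at hg
      exact Nat.Prime.ne_one hp (Nat.dvd_one.mp hg)
    have hpZ : Prime (p : ℤ) := Nat.prime_iff_prime_int.mp hp
    have hdvdD : (p : ℤ) ^ 15 ∣ D := by
      have hcp : IsCoprime ((p:ℤ) ^ 15) (u.num ^ 15) :=
        ((hpZ.coprime_iff_not_dvd.mpr hcop).pow : IsCoprime ((p:ℤ)^15) (u.num^15))
      exact hcp.dvd_of_dvd_mul_left hdvd
    have h15 : 15 ≤ padicValInt p D := by
      rcases (padicValInt_dvd_iff 15 D).mp hdvdD with h | h
      · exact absurd h hD0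
      · exact h
    exact absurd h15 (not_le.mpr (hval p hp))
  -- finish
  have hnum : u = (u.num : ℚ) := by
    rw [← Rat.num_div_den u, hden1]; simp
  have hn0 : u.num ≠ 0 := Rat.num_ne_zero.mpr hu
  have key2 : D' = u.num ^ 15 * D := by
    have := key; rw [hden1] at this; simpa using this
  rw [key2, abs_mul, abs_pow]
  calc |D| = 1 * |D| := (one_mul _).symm
    _ ≤ |u.num| ^ 15 * |D| := by
      have : 1 ≤ |u.num| := Int.one_le_abs (by exact_mod_cast hn0)
      have h1 : (1:ℤ) ^ 15 ≤ |u.num| ^ 15 := pow_le_pow_left₀ (by norm_num) this 15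
      have := mul_le_mul_of_nonneg_right (by simpa using h1 : (1:ℤ) ≤ |u.num| ^ 15) (abs_nonneg D)
      linarith
end

section
/- Let g(t) ∈ ℤ[t] be a quadratic polynomial with nonzero leading coefficient, let f(x) = g(x³) ∈ ℤ[x] (a degree-6 polynomial, corresponding to a genus 2 curve y² = g(x³) with an extra automorphism of order 3), and suppose Δ(f) ≠ 0 and that for every prime p the p-adic valuation satisfies v_p(Δ(f)) < 10. Then for every nonzero u ∈ ℚ such that the polynomial h(x) := u²·g(x³/u) has integer coefficients, one has |Δ(h)| ≥ |Δ(f)|. -/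
open Polynomial

private lemma offdiag_prod_eq {n : ℕ} (γ δ : Fin n → ℂ)
    (h : Multiset.map γ Finset.univ.val = Multiset.map δ Finset.univ.val) :
    ∏ i, ∏ j ∈ ({i}ᶜ : Finset (Fin n)), (γ i - γ j)
      = ∏ i, ∏ j ∈ ({i}ᶜ : Finset (Fin n)), (δ i - δ j) := by
  classical
  have main : ∀ ε : Fin n → ℂ,
      ∏ i, ∏ j ∈ ({i}ᶜ : Finset (Fin n)), (ε i - ε j)
        = ((Multiset.map ε Finset.univ.val).map
            (fun r => Polynomial.eval r (Polynomial.derivative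
              (((Multiset.map ε Finset.univ.val).map (fun a => X - C a)).prod)))).prod := by
    intro ε
    rw [Multiset.map_map]
    rw [← Finset.prod_map_val]
    apply Finset.prod_congr rfl
    intro i _
    have hmem : ε i ∈ Multiset.map ε Finset.univ.val :=
      Multiset.mem_map_of_mem ε (Finset.mem_univ i)
    show _ = Polynomial.eval (ε i) (Polynomial.derivative _)
    rw [Polynomial.eval_multiset_prod_X_sub_C_derivative hmem]
    rw [← Multiset.map_erase_of_mem ε _ (Finset.mem_univ i), Multiset.map_map]
    rw [← Finset.erase_val, Finset.prod_map_val]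
    rw [Finset.compl_singleton]
    rfl
  rw [main γ, main δ, h]

private lemma ioi_sq_prod_eq {n : ℕ} (γ δ : Fin n → ℂ)
    (h : Multiset.map γ Finset.univ.val = Multiset.map δ Finset.univ.val) :
    ∏ i, ∏ j ∈ Finset.Ioi i, (γ i - γ j) ^ 2
      = ∏ i, ∏ j ∈ Finset.Ioi i, (δ i - δ j) ^ 2 := by
  have key := offdiag_prod_eq γ δ h
  have e : ∀ ε : Fin n → ℂ,
      ∏ i, ∏ j ∈ ({i}ᶜ : Finset (Fin n)), (ε i - ε j)
        = (-1 : ℂ) ^ (∑ i : Fin n, (Finset.Ioi i).card)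
          * ∏ i, ∏ j ∈ Finset.Ioi i, (ε i - ε j) ^ 2 := by
    intro ε
    have h0 := Finset.prod_prod_Ioi_mul_eq_prod_prod_off_diag (fun a b => ε b - ε a)
    have h0' : ∏ i, ∏ j ∈ ({i}ᶜ : Finset (Fin n)), (ε i - ε j)
        = ∏ i : Fin n, ∏ j ∈ Finset.Ioi i, ((ε i - ε j) * (ε j - ε i)) := by
      convert h0.symm using 2 with i _
    rw [h0']
    rw [← Finset.prod_pow_eq_pow_sum, ← Finset.prod_mul_distrib]
    apply Finset.prod_congr rfl; intro i _
    rw [← Finset.prod_const, ← Finset.prod_mul_distrib]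
    apply Finset.prod_congr rfl; intro j _
    ring
  rw [e γ, e δ] at key
  exact mul_left_cancel₀ (pow_ne_zero _ (neg_ne_zero.2 one_ne_zero)) key

/-- Let `g ∈ ℤ[t]` be a quadratic with nonzero leading coefficient and
`f(x) = g(x³)`, with discriminant `Δ(f) = D = c^{10} ∏_{i<j}(α_i - α_j)² ∈ ℤ` (where
`c = g.coeff 2` is the leading coefficient and `α_i` the complex roots of `f`), `D ≠ 0`,
and `v_p(D) < 10` for every prime `p`.  Then for every nonzero `u ∈ ℚ` such that
`h(x) = u²·g(x³/u) = a₂x⁶ + a₁u x³ + a₀u²` has integer coefficients (say `h = H` with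
`H ∈ ℤ[x]`), the discriminant `D' = Δ(h)` satisfies `|D'| ≥ |D|`. -/
theorem stmt13 (g : Polynomial ℤ) (hg2 : g.natDegree = 2) (hlc : g.coeff 2 ≠ 0)
    (f : Polynomial ℤ) (hf : f = g.comp (X ^ 3))
    (α : Fin 6 → ℂ)
    (hroots : f.map (Int.castRingHom ℂ)
      = C ((g.coeff 2 : ℂ)) * ∏ i : Fin 6, (X - C (α i)))
    (D : ℤ)
    (hD : (D : ℂ) = (g.coeff 2 : ℂ) ^ 10
      * ∏ i : Fin 6, ∏ j ∈ Finset.Ioi i, (α i - α j) ^ 2)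
    (hD0 : D ≠ 0)
    (hval : ∀ p : ℕ, p.Prime → padicValInt p D < 10)
    (u : ℚ) (hu : u ≠ 0)
    (H : Polynomial ℤ)
    (hH : H.map (Int.castRingHom ℚ)
      = C ((g.coeff 2 : ℚ)) * X ^ 6 + C ((g.coeff 1 : ℚ) * u) * X ^ 3
        + C ((g.coeff 0 : ℚ) * u ^ 2))
    (β : Fin 6 → ℂ)
    (hβ : H.map (Int.castRingHom ℂ)
      = C ((g.coeff 2 : ℂ)) * ∏ i : Fin 6, (X - C (β i)))
    (D' : ℤ)
    (hD' : (D' : ℂ) = (g.coeff 2 : ℂ) ^ 10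
      * ∏ i : Fin 6, ∏ j ∈ Finset.Ioi i, (β i - β j) ^ 2) :
    |D| ≤ |D'| := by
  classical
  -- cube root of u
  obtain ⟨w, hw3⟩ := IsAlgClosed.exists_pow_nat_eq (k := ℂ) (u : ℂ) (n := 3) (by norm_num)
  have hw0 : w ≠ 0 := by
    rintro rfl
    rw [zero_pow (by norm_num)] at hw3
    exact hu (by exact_mod_cast hw3.symm)
  have hc2 : (g.coeff 2 : ℂ) ≠ 0 := by exact_mod_cast hlc
  -- explicit form of f over ℂ
  have hg3 : g.natDegree < 3 := by omega
  have hgC : g.map (Int.castRingHom ℂ)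
      = C ((g.coeff 2 : ℂ)) * X ^ 2 + C ((g.coeff 1 : ℂ)) * X + C ((g.coeff 0 : ℂ)) := by
    conv_lhs => rw [g.as_sum_range' 3 hg3]
    simp only [Polynomial.map_sum, Polynomial.map_monomial, Finset.sum_range_succ,
      Finset.sum_range_zero, zero_add, ← Polynomial.C_mul_X_pow_eq_monomial,
      Polynomial.map_add, Polynomial.map_mul, Polynomial.map_pow, Polynomial.map_C,
      Polynomial.map_X]
    simp only [eq_intCast]
    ring
  have hfC : f.map (Int.castRingHom ℂ)
      = C ((g.coeff 2 : ℂ)) * X ^ 6 + C ((g.coeff 1 : ℂ)) * X ^ 3 + C ((g.coeff 0 : ℂ)) := by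
    rw [hf, Polynomial.map_comp, hgC, Polynomial.map_pow, Polynomial.map_X]
    simp only [Polynomial.add_comp, Polynomial.mul_comp, Polynomial.C_comp,
      Polynomial.X_comp, Polynomial.pow_comp]
    ring
  -- explicit form of H over ℂ
  have hHC : H.map (Int.castRingHom ℂ)
      = C ((g.coeff 2 : ℂ)) * X ^ 6 + C ((g.coeff 1 : ℂ) * (u : ℂ)) * X ^ 3
        + C ((g.coeff 0 : ℂ) * (u : ℂ) ^ 2) := by
    have hcomp : (Int.castRingHom ℂ) = (algebraMap ℚ ℂ).comp (Int.castRingHom ℚ) := by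
      ext1 n; simp
    rw [hcomp, ← Polynomial.map_map, hH]
    simp only [Polynomial.map_add, Polynomial.map_mul, Polynomial.map_pow,
      Polynomial.map_C, Polynomial.map_X, eq_ratCast]
    push_cast
    ring
  -- the two product identities
  have E2 : C ((g.coeff 2 : ℂ)) * ∏ i : Fin 6, (X - C (α i))
      = C ((g.coeff 2 : ℂ)) * X ^ 6 + C ((g.coeff 1 : ℂ)) * X ^ 3 + C ((g.coeff 0 : ℂ)) :=
    hroots.symm.trans hfC
  have E1 : C ((g.coeff 2 : ℂ)) * ∏ i : Fin 6, (X - C (β i))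
      = C ((g.coeff 2 : ℂ)) * X ^ 6 + C ((g.coeff 1 : ℂ) * (u : ℂ)) * X ^ 3
        + C ((g.coeff 0 : ℂ) * (u : ℂ) ^ 2) :=
    hβ.symm.trans hHC
  -- substitute X ↦ w X in E1
  have key : ∏ i : Fin 6, (X - C (β i / w)) = ∏ i : Fin 6, (X - C (α i)) := by
    have comp1 := congrArg (fun P : Polynomial ℂ => P.comp (C w * X)) E1
    simp only [Polynomial.add_comp, Polynomial.mul_comp, Polynomial.C_comp,
      Polynomial.X_comp, Polynomial.pow_comp] at comp1
    rw [Polynomial.prod_comp] at comp1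
    simp only [Polynomial.sub_comp, Polynomial.X_comp, Polynomial.C_comp] at comp1
    have hfac : ∀ z : ℂ, C w * X - C z = C w * (X - C (z / w)) := by
      intro z
      rw [mul_sub, ← Polynomial.C_mul, mul_div_cancel₀ z hw0]
    simp only [hfac] at comp1
    rw [Finset.prod_mul_distrib, Finset.prod_const] at comp1
    have hcard : (Finset.univ : Finset (Fin 6)).card = 6 := by simp
    rw [hcard] at comp1
    have hrhs : C ((g.coeff 2 : ℂ)) * (C w * X) ^ 6
        + C ((g.coeff 1 : ℂ) * (u : ℂ)) * (C w * X) ^ 3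
        + C ((g.coeff 0 : ℂ) * (u : ℂ) ^ 2)
        = C ((u : ℂ) ^ 2) * (C ((g.coeff 2 : ℂ)) * X ^ 6 + C ((g.coeff 1 : ℂ)) * X ^ 3
            + C ((g.coeff 0 : ℂ))) := by
      rw [← hw3]
      simp only [Polynomial.C_mul, Polynomial.C_pow]
      ring
    rw [hrhs, ← E2] at comp1
    have hc : (C ((g.coeff 2 : ℂ)) * C w ^ 6 : Polynomial ℂ) ≠ 0 := by
      simp only [← Polynomial.C_pow, ← Polynomial.C_mul, ne_eq, Polynomial.C_eq_zero]
      exact mul_ne_zero hc2 (pow_ne_zero _ hw0)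
    have comp1' : (C ((g.coeff 2 : ℂ)) * C w ^ 6) * ∏ i : Fin 6, (X - C (β i / w))
        = (C ((g.coeff 2 : ℂ)) * C w ^ 6) * ∏ i : Fin 6, (X - C (α i)) := by
      calc (C ((g.coeff 2 : ℂ)) * C w ^ 6) * ∏ i : Fin 6, (X - C (β i / w))
          = C ((g.coeff 2 : ℂ)) * (C w ^ 6 * ∏ i : Fin 6, (X - C (β i / w))) := by ring
        _ = C ((u : ℂ) ^ 2) * (C ((g.coeff 2 : ℂ)) * ∏ i : Fin 6, (X - C (α i))) := comp1
        _ = (C ((g.coeff 2 : ℂ)) * C w ^ 6) * ∏ i : Fin 6, (X - C (α i)) := by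
            rw [← hw3]
            simp only [Polynomial.C_pow]
            ring
    exact mul_left_cancel₀ hc comp1'
  -- multiset of roots coincide
  have hms : Multiset.map (fun i => β i / w) Finset.univ.val
      = Multiset.map α Finset.univ.val := by
    have h1 := congrArg Polynomial.roots key
    rwa [show (∏ i : Fin 6, (X - C (β i / w)))
        = ((Multiset.map (fun i => β i / w) Finset.univ.val).map (fun a => X - C a)).prod from by
          rw [Multiset.map_map]; rfl,
      show (∏ i : Fin 6, (X - C (α i)))
        = ((Multiset.map α Finset.univ.val).map (fun a => X - C a)).prod from by
          rw [Multiset.map_map]; rfl,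
      Polynomial.roots_multiset_prod_X_sub_C, Polynomial.roots_multiset_prod_X_sub_C] at h1
  have hS := ioi_sq_prod_eq _ _ hms
  -- scaling
  have hsum15 : (∑ i : Fin 6, (Finset.Ioi i).card) = 15 := by decide
  have hscale : ∏ i : Fin 6, ∏ j ∈ Finset.Ioi i, (β i - β j) ^ 2
      = (u : ℂ) ^ 10 * ∏ i : Fin 6, ∏ j ∈ Finset.Ioi i, (β i / w - β j / w) ^ 2 := by
    have step1 : ∏ i : Fin 6, ∏ j ∈ Finset.Ioi i, (β i - β j) ^ 2
        = ∏ i : Fin 6, ∏ j ∈ Finset.Ioi i, (w ^ 2 * (β i / w - β j / w) ^ 2) := by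
      apply Finset.prod_congr rfl; intro i _
      apply Finset.prod_congr rfl; intro j _
      field_simp
    calc ∏ i : Fin 6, ∏ j ∈ Finset.Ioi i, (β i - β j) ^ 2
        = ∏ i : Fin 6, ((w ^ 2) ^ (Finset.Ioi i).card
            * ∏ j ∈ Finset.Ioi i, (β i / w - β j / w) ^ 2) := by
          rw [step1]
          apply Finset.prod_congr rfl; intro i _
          rw [Finset.prod_mul_distrib, Finset.prod_const]
      _ = (∏ i : Fin 6, (w ^ 2) ^ (Finset.Ioi i).card)
            * ∏ i : Fin 6, ∏ j ∈ Finset.Ioi i, (β i / w - β j / w) ^ 2 :=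
          Finset.prod_mul_distrib
      _ = (u : ℂ) ^ 10 * ∏ i : Fin 6, ∏ j ∈ Finset.Ioi i, (β i / w - β j / w) ^ 2 := by
          rw [Finset.prod_pow_eq_pow_sum, hsum15, ← hw3]; ring
  -- D' = u^10 * D over ℂ
  have hDD : (D' : ℂ) = (u : ℂ) ^ 10 * (D : ℂ) := by
    rw [hD', hD, hscale, hS]; ring
  have hQ : (D' : ℚ) = u ^ 10 * (D : ℚ) := by
    have h2 : ((D' : ℚ) : ℂ) = ((u ^ 10 * (D : ℚ) : ℚ) : ℂ) := by push_cast; exact hDD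
    exact_mod_cast h2
  -- clear denominators
  have hun : (u.num : ℚ) = u * (u.den : ℚ) := by
    have hden : ((u.den : ℚ)) ≠ 0 := by
      exact_mod_cast u.den_nz
    have h3 : u = (u.num : ℚ) / (u.den : ℚ) := (Rat.num_div_den u).symm
    rw [eq_div_iff hden] at h3
    exact h3.symm
  have hZ : D' * (u.den : ℤ) ^ 10 = u.num ^ 10 * D := by
    have h2 : (D' : ℚ) * ((u.den : ℤ) : ℚ) ^ 10 = ((u.num : ℤ) : ℚ) ^ 10 * (D : ℚ) := by
      push_cast
      rw [hQ, hun]; ring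
    exact_mod_cast h2
  -- the denominator of u is 1
  have hden1 : u.den = 1 := by
    by_contra hne
    set p := u.den.minFac with hpdef
    have hp : p.Prime := Nat.minFac_prime hne
    haveI := Fact.mk hp
    have hpd : (p : ℤ) ∣ (u.den : ℤ) := Int.natCast_dvd_natCast.2 (Nat.minFac_dvd _)
    have hpnum : ¬ (p : ℤ) ∣ u.num := by
      intro hdvd
      have h1 : p ∣ u.num.natAbs := by
        have := Int.natAbs_dvd_natAbs.2 hdvd
        simpa using this
      exact hp.one_lt.ne' (Nat.eq_one_of_dvd_one (u.reduced ▸ Nat.dvd_gcd h1 (Nat.minFac_dvd _)))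
    have hdvd10 : (p : ℤ) ^ 10 ∣ u.num ^ 10 * D := by
      rw [← hZ]
      exact Dvd.dvd.mul_left (pow_dvd_pow_of_dvd hpd 10) D'
    have hcopN : Nat.Coprime p u.num.natAbs :=
      (Nat.Prime.coprime_iff_not_dvd hp).2 fun hd =>
        hpnum (Int.dvd_natAbs.1 (Int.natCast_dvd_natCast.2 hd))
    have hcop : IsCoprime ((p : ℤ)) u.num := by
      rw [Int.isCoprime_iff_gcd_eq_one]
      simpa [Int.gcd] using hcopN
    have hdvdD : (p : ℤ) ^ 10 ∣ D := (hcop.pow).dvd_of_dvd_mul_left hdvd10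
    have h4 := (padicValInt_dvd_iff (p := p) 10 D).1 hdvdD
    rcases h4 with h4 | h4
    · exact hD0 h4
    · exact absurd (hval p hp) (by omega)
  -- conclude
  have hnum0 : u.num ≠ 0 := Rat.num_ne_zero.2 hu
  have hZ' : D' = u.num ^ 10 * D := by
    rw [hden1] at hZ
    simpa using hZ
  rw [hZ', abs_mul, abs_pow]
  have h1 : (1 : ℤ) ≤ |u.num| ^ 10 := by
    have := Int.one_le_abs hnum0
    calc (1:ℤ) = 1 ^ 10 := by norm_num
      _ ≤ |u.num| ^ 10 := pow_le_pow_left₀ (by norm_num) this 10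
  exact le_mul_of_one_le_left (abs_nonneg D) h1
end
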